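/- arXiv:1705.04431 — 6 statements merged into one kernel-verified Lean document; each statement's English description precedes it below -/
import Mathlib

section
/- Let E be a real Banach space, let L : E → E be a bounded linear operator, and let 𝒮 : E → ℝ be a bounded linear functional satisfying 𝒮(Lφ) = 𝒮(φ) for all φ ∈ E. Assume there exist C₀ > 0 and θ ∈ (0,1) such that ‖Lⁿφ‖ ≤ C₀ θⁿ ‖φ‖ for every n ∈ ℕ and every φ ∈ E with 𝒮φ = 0. Let u ∈ E with 𝒮u = 1, and let ρ ∈ E satisfy Lρ = ρ and 𝒮ρ = 1, so that K : φ ↦ φ − Lφ + (𝒮φ)·u is a bounded bijection of E with bounded inverse S. Then for every φ ∈ E the series Σ_{n=0}^∞ Lⁿ(φ + (𝒮φ)(Lu − 2u)) converges in E and S φ = (𝒮φ)·u + Σ_{n=0}^∞ Lⁿ(φ + (𝒮φ)(Lu − 2u)). -/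
/-- With the solution operator `S` (two-sided bounded inverse of
`K : φ ↦ φ - L φ + (𝒮 φ) • u`), for every `φ ∈ E` the series
`∑ₙ Lⁿ (φ + (𝒮 φ) • (L u - 2 u))` converges in `E` and
`S φ = (𝒮 φ) • u + ∑ₙ Lⁿ (φ + (𝒮 φ) • (L u - 2 u))`. -/
theorem solution_operator_series_representation
    {E : Type*} [NormedAddCommGroup E] [NormedSpace ℝ E] [CompleteSpace E]
    (L : E →L[ℝ] E) (𝒮 : E →L[ℝ] ℝ)
    (h𝒮L : ∀ φ : E, 𝒮 (L φ) = 𝒮 φ)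
    (C₀ θ : ℝ) (hC₀ : 0 < C₀) (hθ0 : 0 < θ) (hθ1 : θ < 1)
    (hdecay : ∀ (n : ℕ) (φ : E), 𝒮 φ = 0 → ‖(L ^ n) φ‖ ≤ C₀ * θ ^ n * ‖φ‖)
    (u : E) (hu : 𝒮 u = 1)
    (ρ : E) (hρ : L ρ = ρ) (hρ𝒮 : 𝒮 ρ = 1)
    (S : E →L[ℝ] E)
    (hS1 : ∀ φ : E, S (φ - L φ + 𝒮 φ • u) = φ)
    (hS2 : ∀ φ : E, S φ - L (S φ) + 𝒮 (S φ) • u = φ) :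
    ∀ φ : E,
      HasSum (fun n : ℕ => (L ^ n) (φ + 𝒮 φ • (L u - (2 : ℝ) • u))) (S φ - 𝒮 φ • u) := by
  intro φ
  set ψ := φ + 𝒮 φ • (L u - (2 : ℝ) • u) with hψ
  have h𝒮ψ : 𝒮 ψ = 0 := by
    simp only [hψ, map_add, map_smul, map_sub, h𝒮L, hu, smul_eq_mul]
    ring
  have h𝒮n : ∀ (n : ℕ) (x : E), 𝒮 ((L ^ n) x) = 𝒮 x := by
    intro n
    induction n with
    | zero => intro x; simp
    | succ n ih =>
      intro x
      rw [pow_succ, ContinuousLinearMap.mul_apply, ih, h𝒮L]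
  have hsummable : Summable (fun n : ℕ => (L ^ n) ψ) := by
    apply Summable.of_norm_bounded (g := fun n => C₀ * ‖ψ‖ * θ ^ n)
      ((summable_geometric_of_lt_one hθ0.le hθ1).mul_left _)
    intro n
    calc ‖(L ^ n) ψ‖ ≤ C₀ * θ ^ n * ‖ψ‖ := hdecay n ψ h𝒮ψ
      _ = C₀ * ‖ψ‖ * θ ^ n := by ring
  obtain ⟨T, hT⟩ := hsummable
  have hLT : HasSum (fun n : ℕ => (L ^ (n + 1)) ψ) (L T) := by
    have h := L.hasSum hT
    simpa [pow_succ', ContinuousLinearMap.mul_apply] using h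
  have hshift : HasSum (fun n : ℕ => (L ^ (n + 1)) ψ) (T - ψ) := by
    exact (hasSum_nat_add_iff (f := fun n : ℕ => (L ^ n) ψ) 1).mpr (by simpa using hT)
  have hLTeq : L T = T - ψ := hLT.unique hshift
  have h𝒮T : 𝒮 T = 0 := by
    have h1 : HasSum (fun n : ℕ => 𝒮 ((L ^ n) ψ)) (𝒮 T) := 𝒮.hasSum hT
    have h2 : (fun n : ℕ => 𝒮 ((L ^ n) ψ)) = fun _ => (0 : ℝ) := by
      funext n; rw [h𝒮n, h𝒮ψ]
    rw [h2] at h1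
    exact h1.unique hasSum_zero
  have key : S φ = 𝒮 φ • u + T := by
    have hK : (𝒮 φ • u + T) - L (𝒮 φ • u + T) + 𝒮 (𝒮 φ • u + T) • u = φ := by
      rw [map_add, map_smul, map_add, map_smul, h𝒮T, hu, hLTeq, hψ]
      simp only [smul_eq_mul, mul_one]
      module
    have := hS1 (𝒮 φ • u + T)
    rw [hK] at this
    exact this
  have hfin : S φ - 𝒮 φ • u = T := by rw [key]; abel
  rw [hfin]
  exact hT
end

section
/- Let β be a positive integer and r a positive integer. Let v : ℝ → ℝ be C^{r+1} with v' (2πβ)-periodic and v(2πβ) − v(0) ∈ 2πℤ, and let h : ℝ → ℂ be a (2πβ)-periodic C^r function. Set μ₂ = min_{x} v'(x) and μ₁ = max_{x} v'(x). Assume for each n = 1,…,r that sup_x |v^{(n+1)}(x)| ≤ Υ_n < ∞ and |h^{(n)}(x)| ≤ H_n·|h(x)| for all x. For j,k ∈ ℤ define M_{jk} = (1/2π) ∫₀^{2πβ} h(x) e^{i(k v(x) − j x)} dx. Then there exist constants W_{r,0},…,W_{r,r} ≥ 0, depending only on r, Υ₁,…,Υ_r and H₁,…,H_r, such that for all j,k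 ∈ ℤ with j ∉ k·[μ₂,μ₁]: |M_{jk}| ≤ (‖h‖_{L¹[0,2πβ]} / 2π) · Σ_{n=0}^{r} W_{r,n} |k|ⁿ / d(j, k[μ₂,μ₁])^{n+r}, where d(j, k[μ₂,μ₁]) := min_{t ∈ [μ₂,μ₁]} |j − k t|. -/
open Complex Finset


lemma myContDiff_deriv {F : Type*} [NormedAddCommGroup F] [NormedSpace ℝ F]
    (n : ℕ) {f : ℝ → F} (hf : ContDiff ℝ ((n+1 : ℕ)) f) : ContDiff ℝ (n : ℕ) (deriv f) := by
  have h : ContDiff ℝ ((n : WithTop ℕ∞) + 1) f := by exact_mod_cast hf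
  exact (contDiff_succ_iff_deriv.mp h).2.2

lemma myNormIterMul (n : ℕ) {f g : ℝ → ℂ} (hf : ContDiff ℝ (n : ℕ) f)
    (hg : ContDiff ℝ (n : ℕ) g) (x : ℝ) :
    ‖iteratedDeriv n (fun y => f y * g y) x‖ ≤ ∑ i ∈ Finset.range (n + 1),
      (n.choose i : ℝ) * ‖iteratedDeriv i f x‖ * ‖iteratedDeriv (n - i) g x‖ := by
  simp only [← norm_iteratedFDeriv_eq_norm_iteratedDeriv]
  exact norm_iteratedFDeriv_mul_le hf hg x le_rfl

lemma myIterConstMulR (n : ℕ) (c : ℝ) {f : ℝ → ℝ} (hf : ContDiff ℝ (n : ℕ) f) (x : ℝ) :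
    iteratedDeriv n (fun y => c * f y) x = c * iteratedDeriv n f x := by
  have := iteratedDerivWithin_const_mul (Set.mem_univ x) uniqueDiffOn_univ c hf.contDiffWithinAt
  simpa [iteratedDerivWithin_univ] using this

lemma myNormIterIMulOfReal (n : ℕ) {f : ℝ → ℝ} (hf : ContDiff ℝ (n : ℕ) f) (x : ℝ) :
    ‖iteratedDeriv n (fun y => Complex.I * ((f y : ℝ) : ℂ)) x‖ = |iteratedDeriv n f x| := by
  have hF : ContDiff ℝ (n : ℕ) (fun y => ((f y : ℝ) : ℂ)) :=
    Complex.ofRealCLM.contDiff.comp hf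
  have h1 : iteratedDeriv n (fun y => Complex.I * ((f y : ℝ) : ℂ)) x
      = Complex.I * iteratedDeriv n (fun y => ((f y : ℝ) : ℂ)) x := by
    have := iteratedDerivWithin_const_smul (R := ℂ) (Set.mem_univ x) uniqueDiffOn_univ
      Complex.I hF.contDiffWithinAt
    simpa [iteratedDerivWithin_univ, smul_eq_mul] using this
  rw [h1, norm_mul, Complex.norm_I, one_mul]
  have h2 : ‖iteratedDeriv n (fun y => ((f y : ℝ) : ℂ)) x‖ = ‖iteratedDeriv n f x‖ := by
    rw [← norm_iteratedFDeriv_eq_norm_iteratedDeriv, ← norm_iteratedFDeriv_eq_norm_iteratedDeriv]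
    exact Complex.ofRealLI.norm_iteratedFDeriv_comp_left hf.contDiffAt le_rfl
  rw [h2, Real.norm_eq_abs]

lemma myPeriodicDeriv {F : Type*} [NormedAddCommGroup F] [NormedSpace ℝ F]
    (f : ℝ → F) (c : ℝ) (hf : ∀ x, f (x + c) = f x) (x : ℝ) :
    deriv f (x + c) = deriv f x := by
  rw [← deriv_comp_add_const]
  congr 1
  funext y
  exact hf y

/-- Bound on iterated derivatives of `u` when `u' = -(g u²)`. -/
lemma invBound : ∀ n : ℕ, ∃ c : ℝ, 1 ≤ c ∧
    ∀ (dinv kF K : ℝ) (u g : ℝ → ℂ),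
      0 ≤ dinv → 0 ≤ kF → K = kF * dinv →
      ContDiff ℝ (n : ℕ) u → ContDiff ℝ ((n - 1 : ℕ)) g →
      (∀ x, ‖u x‖ ≤ dinv) →
      (∀ m, m < n → ∀ x, ‖iteratedDeriv m g x‖ ≤ kF) →
      (∀ x, deriv u x = -(g x * u x ^ 2)) →
      ∀ x, ‖iteratedDeriv n u x‖ ≤ c * dinv * (1 + K) ^ n := by
  intro n
  induction n using Nat.strong_induction_on with
  | _ n ih =>
    match n with
    | 0 =>
      refine ⟨1, le_rfl, ?_⟩
      intro dinv kF K u g hd hk hK hu hg hub hgb hud x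
      have hK0 : 0 ≤ K := hK ▸ mul_nonneg hk hd
      simpa using hub x
    | (n + 1) =>
      -- constants from the inductive hypothesis
      set cc : ℕ → ℝ := fun i => if h : i < n + 1 then (ih i h).choose else 1 with hcc
      have hcc1 : ∀ i, 1 ≤ cc i := by
        intro i
        by_cases h : i < n + 1
        · simp only [hcc, dif_pos h]; exact (ih i h).choose_spec.1
        · simp only [hcc, dif_neg h]; exact le_rfl
      set cm : ℝ := ∑ i ∈ Finset.range (n + 1), cc i with hcm
      have hcm1 : 1 ≤ cm := le_trans (hcc1 0) (Finset.single_le_sum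
        (f := cc) (fun i _ => le_trans zero_le_one (hcc1 i)) (Finset.mem_range.2 n.succ_pos))
      have hcmle : ∀ i, i ≤ n → cc i ≤ cm :=
        fun i hi => Finset.single_le_sum (f := cc)
          (fun i _ => le_trans zero_le_one (hcc1 i)) (Finset.mem_range.2 (Nat.lt_succ_of_le hi))
      refine ⟨4 ^ n * cm ^ 2, ?_, ?_⟩
      · have h4 : (1:ℝ) ≤ 4 ^ n := one_le_pow₀ (by norm_num)
        have hcm2 : (1:ℝ) ≤ cm ^ 2 := one_le_pow₀ hcm1
        nlinarith
      intro dinv kF K u g hd hk hK hu hg hub hgb hud x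
      have hK0 : 0 ≤ K := hK ▸ mul_nonneg hk hd
      have h1K : (1:ℝ) ≤ 1 + K := by linarith
      have h1K0 : (0:ℝ) ≤ 1 + K := by linarith
      have hcm0 : (0:ℝ) ≤ cm := by linarith
      -- iterated derivative bounds from the inductive hypothesis
      have hIH : ∀ i, i ≤ n → ∀ y, ‖iteratedDeriv i u y‖ ≤ cm * dinv * (1 + K) ^ i := by
        intro i hi y
        have hlt : i < n + 1 := Nat.lt_succ_of_le hi
        have h0 := (ih i hlt).choose_spec.2 dinv kF K u g hd hk hK
          (hu.of_le (by exact_mod_cast Nat.le_succ_of_le hi))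
          (hg.of_le (by exact_mod_cast Nat.sub_le_sub_right (Nat.le_succ_of_le hi) 1))
          hub (fun m hm => hgb m (lt_trans hm hlt)) hud y
        have h0' : ‖iteratedDeriv i u y‖ ≤ cc i * dinv * (1 + K) ^ i := by
          simpa only [hcc, dif_pos hlt] using h0
        calc ‖iteratedDeriv i u y‖ ≤ cc i * dinv * (1 + K) ^ i := h0'
          _ ≤ cm * dinv * (1 + K) ^ i := by
              refine mul_le_mul_of_nonneg_right (mul_le_mul_of_nonneg_right
                (hcmle i hi) hd) (pow_nonneg h1K0 i)
      -- rewrite the (n+1)-st derivative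
      have heq : iteratedDeriv (n + 1) u x
          = -(iteratedDeriv n (fun y => g y * (u y * u y)) x) := by
        rw [iteratedDeriv_succ']
        have : deriv u = fun y => -(g y * (u y * u y)) := by
          funext y; rw [hud y]; ring
        rw [this]
        exact iteratedDeriv_neg n _ x
      rw [heq, norm_neg]
      -- smoothness
      have hgc : ContDiff ℝ (n : ℕ) g := by
        have hn1 : ((n+1) - 1 : ℕ) = n := rfl
        rw [hn1] at hg; exact hg
      have hun : ContDiff ℝ (n : ℕ) u := hu.of_le (by exact_mod_cast Nat.le_succ n)
      have huu : ContDiff ℝ (n : ℕ) (fun y => u y * u y) := hun.mul hun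
      -- bound on derivatives of u*u
      have huub : ∀ j, j ≤ n → ∀ y, ‖iteratedDeriv j (fun z => u z * u z) y‖
          ≤ 2 ^ n * cm ^ 2 * dinv ^ 2 * (1 + K) ^ n := by
        intro j hj y
        have hjc : ContDiff ℝ (j : ℕ) u := hun.of_le (by exact_mod_cast hj)
        have hchoose : (∑ a ∈ Finset.range (j + 1), (j.choose a : ℝ)) = 2 ^ j := by
          norm_cast
          exact Nat.sum_range_choose j
        calc ‖iteratedDeriv j (fun z => u z * u z) y‖
            ≤ ∑ a ∈ Finset.range (j + 1),
                (j.choose a : ℝ) * ‖iteratedDeriv a u y‖ * ‖iteratedDeriv (j - a) u y‖ :=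
              myNormIterMul j hjc hjc y
          _ ≤ ∑ a ∈ Finset.range (j + 1),
                (j.choose a : ℝ) * (cm ^ 2 * dinv ^ 2 * (1 + K) ^ j) := by
              refine Finset.sum_le_sum ?_
              intro a ha
              have ha' : a ≤ j := Nat.lt_succ_iff.mp (Finset.mem_range.mp ha)
              have h1 := hIH a (le_trans ha' hj) y
              have h2 := hIH (j - a) (le_trans (Nat.sub_le j a) hj) y
              have hb0 : (0:ℝ) ≤ (j.choose a : ℝ) := Nat.cast_nonneg _
              have hprod : (cm * dinv * (1 + K) ^ a) * (cm * dinv * (1 + K) ^ (j - a))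
                  = cm ^ 2 * dinv ^ 2 * (1 + K) ^ j := by
                rw [show cm * dinv * (1 + K) ^ a * (cm * dinv * (1 + K) ^ (j - a))
                    = cm ^ 2 * dinv ^ 2 * ((1 + K) ^ a * (1 + K) ^ (j - a)) by ring,
                  ← pow_add, Nat.add_sub_cancel' ha']
              calc (j.choose a : ℝ) * ‖iteratedDeriv a u y‖ * ‖iteratedDeriv (j - a) u y‖
                  = (j.choose a : ℝ)
                      * (‖iteratedDeriv a u y‖ * ‖iteratedDeriv (j - a) u y‖) := by ring
                _ ≤ (j.choose a : ℝ)
                      * ((cm * dinv * (1 + K) ^ a) * (cm * dinv * (1 + K) ^ (j - a))) := by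
                    refine mul_le_mul_of_nonneg_left ?_ hb0
                    exact mul_le_mul h1 h2 (norm_nonneg _)
                      (mul_nonneg (mul_nonneg hcm0 hd) (pow_nonneg h1K0 a))
                _ = (j.choose a : ℝ) * (cm ^ 2 * dinv ^ 2 * (1 + K) ^ j) := by rw [hprod]
          _ = 2 ^ j * (cm ^ 2 * dinv ^ 2 * (1 + K) ^ j) := by
              rw [← Finset.sum_mul, hchoose]
          _ ≤ 2 ^ n * cm ^ 2 * dinv ^ 2 * (1 + K) ^ n := by
              have h2j : (2:ℝ) ^ j ≤ 2 ^ n := pow_le_pow_right₀ (by norm_num) hj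
              have hKj : (1 + K) ^ j ≤ (1 + K) ^ n := pow_le_pow_right₀ h1K hj
              calc (2:ℝ) ^ j * (cm ^ 2 * dinv ^ 2 * (1 + K) ^ j)
                  ≤ 2 ^ n * (cm ^ 2 * dinv ^ 2 * (1 + K) ^ n) := by
                    refine mul_le_mul h2j ?_ ?_ (by positivity)
                    · exact mul_le_mul_of_nonneg_left hKj (by positivity)
                    · positivity
                _ = 2 ^ n * cm ^ 2 * dinv ^ 2 * (1 + K) ^ n := by ring
      -- main Leibniz estimate
      have hchoose : (∑ i ∈ Finset.range (n + 1), (n.choose i : ℝ)) = 2 ^ n := by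
        norm_cast
        exact Nat.sum_range_choose n
      calc ‖iteratedDeriv n (fun y => g y * (u y * u y)) x‖
          ≤ ∑ i ∈ Finset.range (n + 1),
              (n.choose i : ℝ) * ‖iteratedDeriv i g x‖
                * ‖iteratedDeriv (n - i) (fun z => u z * u z) x‖ :=
            myNormIterMul n hgc huu x
        _ ≤ ∑ i ∈ Finset.range (n + 1),
              (n.choose i : ℝ) * (kF * (2 ^ n * cm ^ 2 * dinv ^ 2 * (1 + K) ^ n)) := by
            refine Finset.sum_le_sum ?_
            intro i hi
            have hi' : i ≤ n := Nat.lt_succ_iff.mp (Finset.mem_range.mp hi)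
            have h1 := hgb i (Nat.lt_succ_of_le hi') x
            have h2 := huub (n - i) (Nat.sub_le n i) x
            calc (n.choose i : ℝ) * ‖iteratedDeriv i g x‖
                  * ‖iteratedDeriv (n - i) (fun z => u z * u z) x‖
                = (n.choose i : ℝ) * (‖iteratedDeriv i g x‖
                  * ‖iteratedDeriv (n - i) (fun z => u z * u z) x‖) := by ring
              _ ≤ (n.choose i : ℝ) * (kF * (2 ^ n * cm ^ 2 * dinv ^ 2 * (1 + K) ^ n)) := by
                  refine mul_le_mul_of_nonneg_left ?_ (Nat.cast_nonneg _)
                  exact mul_le_mul h1 h2 (norm_nonneg _) hk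
        _ = 2 ^ n * (kF * (2 ^ n * cm ^ 2 * dinv ^ 2 * (1 + K) ^ n)) := by
            rw [← Finset.sum_mul, hchoose]
        _ ≤ 4 ^ n * cm ^ 2 * dinv * (1 + K) ^ (n + 1) := by
            have h4 : (4:ℝ) ^ n = 2 ^ n * 2 ^ n := by rw [← mul_pow]; norm_num
            have e1 : 2 ^ n * (kF * (2 ^ n * cm ^ 2 * dinv ^ 2 * (1 + K) ^ n))
                = 4 ^ n * cm ^ 2 * dinv * (K * (1 + K) ^ n) := by
              rw [h4, hK]; ring
            rw [e1]
            refine mul_le_mul_of_nonneg_left ?_ (by positivity)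
            calc K * (1 + K) ^ n ≤ (1 + K) * (1 + K) ^ n :=
                  mul_le_mul_of_nonneg_right (by linarith) (pow_nonneg h1K0 n)
              _ = (1 + K) ^ (n + 1) := by rw [pow_succ]; ring

/-- Smoothness of the IBP iterates. -/
lemma gSmooth (N : ℕ) (hh u : ℝ → ℂ) (g : ℕ → ℝ → ℂ)
    (hhc : ContDiff ℝ (N : ℕ) hh) (huc : ContDiff ℝ (N : ℕ) u)
    (hg0 : g 0 = hh)
    (hgs : ∀ m, g (m + 1) = fun x => -deriv (fun y => g m y * u y) x) :
    ∀ m, m ≤ N → ContDiff ℝ ((N - m : ℕ)) (g m) := by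
  intro m
  induction m with
  | zero => intro _; simpa [hg0] using hhc
  | succ m ihm =>
    intro hm
    have hm' : m ≤ N := Nat.le_of_succ_le hm
    have h1 : ContDiff ℝ ((N - m : ℕ)) (fun y => g m y * u y) :=
      (ihm hm').mul (huc.of_le (by exact_mod_cast Nat.sub_le N m))
    have h2 : (N - m : ℕ) = (N - (m + 1)) + 1 := by omega
    rw [h2] at h1
    have h3 : ContDiff ℝ ((N - (m+1) : ℕ)) (deriv (fun y => g m y * u y)) :=
      myContDiff_deriv _ h1
    rw [hgs m]
    exact h3.neg

/-- Pointwise bound on the IBP iterates. -/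
lemma claimBound (cu : ℕ → ℝ) (Hc : ℝ) :
    ∀ m : ℕ, ∃ A : ℕ → ℝ, (∀ p, 0 ≤ A p) ∧
    ∀ (p N : ℕ) (dinv K : ℝ) (hh u : ℝ → ℂ) (g : ℕ → ℝ → ℂ),
      m + p ≤ N →
      0 ≤ dinv → 0 ≤ K → 1 ≤ Hc → (∀ q, 0 ≤ cu q) →
      ContDiff ℝ (N : ℕ) hh → ContDiff ℝ (N : ℕ) u →
      (∀ q, q ≤ N → ∀ x, ‖iteratedDeriv q hh x‖ ≤ Hc * ‖hh x‖) →
      (∀ q, q ≤ N → ∀ x, ‖iteratedDeriv q u x‖ ≤ cu q * dinv * (1 + K) ^ q) →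
      g 0 = hh →
      (∀ m', g (m' + 1) = fun x => -deriv (fun y => g m' y * u y) x) →
      ∀ x, ‖iteratedDeriv p (g m) x‖ ≤ A p * ‖hh x‖ * dinv ^ m * (1 + K) ^ (m + p) := by
  intro m
  induction m with
  | zero =>
    refine ⟨fun _ => max Hc 1, ?_, ?_⟩
    · intro p
      exact le_trans zero_le_one (le_max_right _ _)
    · intro p N dinv K hh u g hmp hd hK0 hHc hcu hhc huc hhb hub hg0 hgs x
      have hmax : max Hc 1 = Hc := max_eq_left hHc
      rw [hg0, hmax]
      have h1 := hhb p (le_trans (by omega) hmp) x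
      have h2 : (1:ℝ) ≤ (1 + K) ^ (0 + p) := one_le_pow₀ (by linarith)
      calc ‖iteratedDeriv p hh x‖ ≤ Hc * ‖hh x‖ := h1
        _ = Hc * ‖hh x‖ * dinv ^ 0 * 1 := by ring
        _ ≤ Hc * ‖hh x‖ * dinv ^ 0 * (1 + K) ^ (0 + p) := by
            refine mul_le_mul_of_nonneg_left h2 ?_
            have : (0:ℝ) ≤ Hc := by linarith
            positivity
  | succ m ihm =>
    obtain ⟨A, hA0, hA⟩ := ihm
    refine ⟨fun p => ∑ i ∈ Finset.range (p + 2),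
      ((p+1).choose i : ℝ) * A i * max (cu (p + 1 - i)) 0, ?_, ?_⟩
    · intro p
      refine Finset.sum_nonneg ?_
      intro i _
      exact mul_nonneg (mul_nonneg (Nat.cast_nonneg _) (hA0 i)) (le_max_right _ _)
    · intro p N dinv K hh u g hmp hd hK0 hHc hcu hhc huc hhb hub hg0 hgs x
      have h1K0 : (0:ℝ) ≤ 1 + K := by linarith
      -- rewrite the iterated derivative
      have heq : iteratedDeriv p (g (m + 1)) x
          = -(iteratedDeriv (p + 1) (fun y => g m y * u y) x) := by
        rw [hgs m]
        rw [show (fun x => -deriv (fun y => g m y * u y) x)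
            = (fun x => -(deriv (fun y => g m y * u y) x)) from rfl]
        rw [show iteratedDeriv p (fun x => -(deriv (fun y => g m y * u y) x)) x
            = -(iteratedDeriv p (deriv (fun y => g m y * u y)) x) from
          iteratedDeriv_neg p _ x]
        rw [← iteratedDeriv_succ']
      rw [heq, norm_neg]
      -- smoothness of g m
      have hgm : ContDiff ℝ ((N - m : ℕ)) (g m) := gSmooth N hh u g hhc huc hg0 hgs m (by omega)
      have hgmp : ContDiff ℝ ((p + 1 : ℕ)) (g m) :=
        hgm.of_le (by exact_mod_cast (by omega : p + 1 ≤ N - m))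
      have hup : ContDiff ℝ ((p + 1 : ℕ)) u :=
        huc.of_le (by exact_mod_cast (by omega : p + 1 ≤ N))
      calc ‖iteratedDeriv (p + 1) (fun y => g m y * u y) x‖
          ≤ ∑ i ∈ Finset.range (p + 2),
              ((p+1).choose i : ℝ) * ‖iteratedDeriv i (g m) x‖
                * ‖iteratedDeriv (p + 1 - i) u x‖ :=
            myNormIterMul (p + 1) hgmp hup x
        _ ≤ ∑ i ∈ Finset.range (p + 2),
              (((p+1).choose i : ℝ) * A i * max (cu (p + 1 - i)) 0)
                * ‖hh x‖ * dinv ^ (m + 1) * (1 + K) ^ ((m + 1) + p) := by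
            refine Finset.sum_le_sum ?_
            intro i hi
            have hi' : i ≤ p + 1 := Nat.lt_succ_iff.mp (Finset.mem_range.mp hi)
            have h1 : ‖iteratedDeriv i (g m) x‖
                ≤ A i * ‖hh x‖ * dinv ^ m * (1 + K) ^ (m + i) :=
              hA i N dinv K hh u g (by omega) hd hK0 hHc hcu hhc huc hhb hub hg0 hgs x
            have h2 : ‖iteratedDeriv (p + 1 - i) u x‖
                ≤ cu (p + 1 - i) * dinv * (1 + K) ^ (p + 1 - i) :=
              hub (p + 1 - i) (by omega) x
            have h2' : ‖iteratedDeriv (p + 1 - i) u x‖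
                ≤ max (cu (p + 1 - i)) 0 * dinv * (1 + K) ^ (p + 1 - i) := by
              refine le_trans h2 ?_
              refine mul_le_mul_of_nonneg_right (mul_le_mul_of_nonneg_right
                (le_max_left _ _) hd) (pow_nonneg h1K0 _)
            have hprod : (A i * ‖hh x‖ * dinv ^ m * (1 + K) ^ (m + i))
                * (max (cu (p + 1 - i)) 0 * dinv * (1 + K) ^ (p + 1 - i))
                = (A i * max (cu (p + 1 - i)) 0)
                    * ‖hh x‖ * dinv ^ (m + 1) * (1 + K) ^ ((m + 1) + p) := by
              rw [show (A i * ‖hh x‖ * dinv ^ m * (1 + K) ^ (m + i))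
                  * (max (cu (p + 1 - i)) 0 * dinv * (1 + K) ^ (p + 1 - i))
                  = (A i * max (cu (p + 1 - i)) 0) * ‖hh x‖ * (dinv ^ m * dinv)
                    * ((1 + K) ^ (m + i) * (1 + K) ^ (p + 1 - i)) by ring,
                ← pow_succ, ← pow_add]
              congr 2
              omega
            calc ((p+1).choose i : ℝ) * ‖iteratedDeriv i (g m) x‖
                  * ‖iteratedDeriv (p + 1 - i) u x‖
                = ((p+1).choose i : ℝ) * (‖iteratedDeriv i (g m) x‖
                  * ‖iteratedDeriv (p + 1 - i) u x‖) := by ring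
              _ ≤ ((p+1).choose i : ℝ) * ((A i * ‖hh x‖ * dinv ^ m * (1 + K) ^ (m + i))
                  * (max (cu (p + 1 - i)) 0 * dinv * (1 + K) ^ (p + 1 - i))) := by
                  refine mul_le_mul_of_nonneg_left ?_ (Nat.cast_nonneg _)
                  refine mul_le_mul h1 h2' (norm_nonneg _) ?_
                  have := hA0 i
                  positivity
              _ = (((p+1).choose i : ℝ) * A i * max (cu (p + 1 - i)) 0)
                  * ‖hh x‖ * dinv ^ (m + 1) * (1 + K) ^ ((m + 1) + p) := by
                  rw [hprod]; ring
        _ = (∑ i ∈ Finset.range (p + 2),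
              ((p+1).choose i : ℝ) * A i * max (cu (p + 1 - i)) 0)
                * ‖hh x‖ * dinv ^ (m + 1) * (1 + K) ^ ((m + 1) + p) := by
            rw [← Finset.sum_mul, ← Finset.sum_mul, ← Finset.sum_mul]

/-- Polynomial decay of the Fourier coefficient matrix of a generalized
transfer operator, under the differentiable distortion conditions. The constants `W r n`
depend only on `r`, `Υ` and `H`. Here `d(j, k[μ₂,μ₁])` is `Metric.infDist`. -/
theorem oscillatory_entry_bound_differentiable
    (r : ℕ) (hr : 1 ≤ r) (Υ H : ℕ → ℝ) :
    ∃ W : ℕ → ℝ, (∀ n, n ≤ r → 0 ≤ W n) ∧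
      ∀ (β : ℕ), 0 < β →
      ∀ (v : ℝ → ℝ) (h : ℝ → ℂ) (μ₁ μ₂ : ℝ),
        ContDiff ℝ (r + 1 : ℕ) v →
        (∀ x : ℝ, deriv v (x + 2 * Real.pi * β) = deriv v x) →
        (∃ m : ℤ, v (2 * Real.pi * β) - v 0 = 2 * Real.pi * m) →
        ContDiff ℝ (r : ℕ) h →
        (∀ x : ℝ, h (x + 2 * Real.pi * β) = h x) →
        (∀ x : ℝ, μ₂ ≤ deriv v x) → (∀ x : ℝ, deriv v x ≤ μ₁) →
        (∃ x : ℝ, deriv v x = μ₂) → (∃ x : ℝ, deriv v x = μ₁) →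
        (∀ n, 1 ≤ n → n ≤ r → ∀ x : ℝ, |iteratedDeriv (n + 1) v x| ≤ Υ n) →
        (∀ n, 1 ≤ n → n ≤ r → ∀ x : ℝ, ‖iteratedDeriv n h x‖ ≤ H n * ‖h x‖) →
        ∀ j k : ℤ,
          (j : ℝ) ∉ (fun t => (k : ℝ) * t) '' Set.Icc μ₂ μ₁ →
          ‖(1 / (2 * Real.pi) : ℂ) *
              ∫ x in (0 : ℝ)..(2 * Real.pi * β),
                h x * Complex.exp (Complex.I * ((↑k * v x - ↑j * x : ℝ) : ℂ))‖ ≤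
            (∫ x in (0 : ℝ)..(2 * Real.pi * β), ‖h x‖) / (2 * Real.pi) *
              ∑ n ∈ Finset.range (r + 1),
                W n * |(k : ℝ)| ^ n /
                  (Metric.infDist (j : ℝ) ((fun t => (k : ℝ) * t) '' Set.Icc μ₂ μ₁)) ^ (n + r) := by
  classical
  -- global constants
  set F : ℝ := 1 + ∑ n ∈ Finset.range (r + 1), |Υ n| with hFdef
  set Hc : ℝ := 1 + ∑ n ∈ Finset.range (r + 1), |H n| with hHcdef
  have hF1 : 1 ≤ F := by
    have : (0:ℝ) ≤ ∑ n ∈ Finset.range (r + 1), |Υ n| :=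
      Finset.sum_nonneg fun i _ => abs_nonneg _
    simp only [hFdef]; linarith
  have hHc1 : 1 ≤ Hc := by
    have : (0:ℝ) ≤ ∑ n ∈ Finset.range (r + 1), |H n| :=
      Finset.sum_nonneg fun i _ => abs_nonneg _
    simp only [hHcdef]; linarith
  have hFn : ∀ n, n ≤ r → Υ n ≤ F := by
    intro n hn
    have h1 : |Υ n| ≤ ∑ m ∈ Finset.range (r + 1), |Υ m| :=
      Finset.single_le_sum (f := fun m => |Υ m|) (fun i _ => abs_nonneg _)
        (Finset.mem_range.2 (Nat.lt_succ_of_le hn))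
    have := le_abs_self (Υ n)
    simp only [hFdef]; linarith
  have hHn : ∀ n, n ≤ r → H n ≤ Hc := by
    intro n hn
    have h1 : |H n| ≤ ∑ m ∈ Finset.range (r + 1), |H m| :=
      Finset.single_le_sum (f := fun m => |H m|) (fun i _ => abs_nonneg _)
        (Finset.mem_range.2 (Nat.lt_succ_of_le hn))
    have := le_abs_self (H n)
    simp only [hHcdef]; linarith
  set cu : ℕ → ℝ := fun q => (invBound q).choose with hcudef
  have hcu1 : ∀ q, 1 ≤ cu q := fun q => (invBound q).choose_spec.1
  have hcu0 : ∀ q, 0 ≤ cu q := fun q => le_trans zero_le_one (hcu1 q)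
  obtain ⟨A, hA0, hA⟩ := claimBound cu Hc r
  refine ⟨fun n => A 0 * (r.choose n : ℝ) * F ^ n, ?_, ?_⟩
  · intro n _
    have := hA0 0
    have hF0 : (0:ℝ) ≤ F := by linarith
    positivity
  intro β hβ v h μ₁ μ₂ hv hvper hvint hh hhper hμ₂le hleμ₁ hex₂ hex₁ hΥ hH j k hj
  have hπ : (0:ℝ) < Real.pi := Real.pi_pos
  set P : ℝ := 2 * Real.pi * β with hPdef
  have hP0 : 0 ≤ P := by positivity
  set S : Set ℝ := (fun t => (k : ℝ) * t) '' Set.Icc μ₂ μ₁ with hSdef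
  have hμ : μ₂ ≤ μ₁ := by
    obtain ⟨x, hx⟩ := hex₂
    rw [← hx]; exact hleμ₁ x
  have hSne : S.Nonempty := ⟨(k : ℝ) * μ₂, ⟨μ₂, Set.left_mem_Icc.2 hμ, rfl⟩⟩
  have hScl : IsClosed S :=
    (isCompact_Icc.image (continuous_const.mul continuous_id)).isClosed
  set d : ℝ := Metric.infDist (j : ℝ) S with hddef
  have hd0 : 0 < d := (hScl.notMem_iff_infDist_pos hSne).mp hj
  set dinv : ℝ := d⁻¹ with hdinvdef
  have hdinv0 : 0 ≤ dinv := le_of_lt (inv_pos.2 hd0)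
  set kF : ℝ := |(k : ℝ)| * F with hkFdef
  have hkF0 : 0 ≤ kF := mul_nonneg (abs_nonneg _) (by linarith)
  set K : ℝ := kF * dinv with hKdef
  have hK0 : 0 ≤ K := mul_nonneg hkF0 hdinv0
  -- the phase derivative and its inverse
  set vd : ℝ → ℝ := deriv v with hvddef
  have hvd : ContDiff ℝ (r : ℕ) vd := myContDiff_deriv r hv
  set w : ℝ → ℂ := fun x => Complex.I * (((k : ℝ) * vd x - (j : ℝ) : ℝ) : ℂ) with hwdef
  set u : ℝ → ℂ := fun x => (w x)⁻¹ with hudef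
  set E : ℝ → ℂ := fun x => Complex.exp (Complex.I * (((k : ℝ) * v x - (j : ℝ) * x : ℝ) : ℂ))
    with hEdef
  let g : ℕ → ℝ → ℂ :=
    fun m => Nat.rec h (fun _ gm => fun x => -deriv (fun y => gm y * u y) x) m
  have hg0 : g 0 = h := rfl
  have hgs : ∀ m, g (m + 1) = fun x => -deriv (fun y => g m y * u y) x := fun m => rfl
  -- basic norm facts
  have hdle : ∀ x, d ≤ |(k : ℝ) * vd x - (j : ℝ)| := by
    intro x
    have hmem : (k : ℝ) * vd x ∈ S := ⟨vd x, ⟨hμ₂le x, hleμ₁ x⟩, rfl⟩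
    calc d ≤ dist (j : ℝ) ((k : ℝ) * vd x) := Metric.infDist_le_dist_of_mem hmem
      _ = |(k : ℝ) * vd x - (j : ℝ)| := by rw [Real.dist_eq, abs_sub_comm]
  have hwnorm : ∀ x, ‖w x‖ = |(k : ℝ) * vd x - (j : ℝ)| := by
    intro x
    have hx : w x = Complex.I * (((k : ℝ) * vd x - (j : ℝ) : ℝ) : ℂ) := rfl
    rw [hx, norm_mul, Complex.norm_I, one_mul, Complex.norm_real, Real.norm_eq_abs]
  have hwne : ∀ x, w x ≠ 0 := by
    intro x hx
    have := hwnorm x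
    rw [hx, norm_zero] at this
    have := hdle x
    linarith
  have hub : ∀ x, ‖u x‖ ≤ dinv := by
    intro x
    rw [hudef]
    simp only [norm_inv]
    rw [hdinvdef]
    exact inv_anti₀ hd0 (by rw [hwnorm x]; exact hdle x)
  -- smoothness
  have hreal : ContDiff ℝ (r : ℕ) (fun x => (k : ℝ) * vd x - (j : ℝ)) :=
    (contDiff_const.mul hvd).sub contDiff_const
  have hwc : ContDiff ℝ (r : ℕ) w :=
    contDiff_const.mul (Complex.ofRealCLM.contDiff.comp hreal)
  have huc : ContDiff ℝ (r : ℕ) u := hwc.inv hwne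
  -- second derivative data
  set vdd : ℝ → ℝ := deriv vd with hvdddef
  have hvdd : ContDiff ℝ ((r - 1 : ℕ)) vdd := by
    have h1 : ContDiff ℝ (((r - 1) + 1 : ℕ)) vd := by
      have : (r - 1) + 1 = r := by omega
      rw [this]; exact hvd
    exact myContDiff_deriv (r - 1) h1
  set g₀ : ℝ → ℂ := fun x => Complex.I * (((k : ℝ) * vdd x : ℝ) : ℂ) with hg₀def
  have hg₀c : ContDiff ℝ ((r - 1 : ℕ)) g₀ :=
    contDiff_const.mul (Complex.ofRealCLM.contDiff.comp (contDiff_const.mul hvdd))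
  have hvd_diff : Differentiable ℝ vd :=
    hvd.differentiable (by exact_mod_cast (show r ≠ 0 by omega))
  have hw_hd : ∀ x, HasDerivAt w (g₀ x) x := by
    intro x
    have h1 : HasDerivAt (fun y => (k : ℝ) * vd y - (j : ℝ)) ((k : ℝ) * vdd x) x :=
      (((hvd_diff x).hasDerivAt).const_mul ((k : ℝ))).sub_const _
    exact (h1.ofReal_comp).const_mul Complex.I
  have hu_deriv : ∀ x, deriv u x = -(g₀ x * u x ^ 2) := by
    intro x
    have h2 : HasDerivAt (fun y : ℂ => y⁻¹) (-((w x) ^ 2)⁻¹) (w x) := hasDerivAt_inv (hwne x)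
    have h3 : HasDerivAt u (-((w x) ^ 2)⁻¹ * g₀ x) x := h2.comp x (hw_hd x)
    rw [h3.deriv, hudef]
    rw [inv_pow]
    ring
  -- bounds on derivatives of g₀
  have hg₀b : ∀ m, m < r → ∀ x, ‖iteratedDeriv m g₀ x‖ ≤ kF := by
    intro m hm x
    have hmr : (m : ℕ) ≤ r - 1 := by omega
    have hmc : ContDiff ℝ (m : ℕ) (fun x => (k : ℝ) * vdd x) :=
      contDiff_const.mul (hvdd.of_le (by exact_mod_cast hmr))
    have e1 : ‖iteratedDeriv m g₀ x‖ = |iteratedDeriv m (fun y => (k : ℝ) * vdd y) x| :=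
      myNormIterIMulOfReal m hmc x
    have e2 : iteratedDeriv m (fun y => (k : ℝ) * vdd y) x = (k : ℝ) * iteratedDeriv m vdd x :=
      myIterConstMulR m ((k : ℝ)) (hvdd.of_le (by exact_mod_cast hmr)) x
    have e3 : iteratedDeriv m vdd x = iteratedDeriv (m + 2) v x := by
      rw [show m + 2 = (m + 1) + 1 from rfl, iteratedDeriv_succ', iteratedDeriv_succ']
    rw [e1, e2, abs_mul, e3]
    have hb : |iteratedDeriv (m + 2) v x| ≤ Υ (m + 1) := by
      have := hΥ (m + 1) (by omega) (by omega) x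
      simpa using this
    calc |(k : ℝ)| * |iteratedDeriv (m + 2) v x| ≤ |(k : ℝ)| * F := by
          refine mul_le_mul_of_nonneg_left ?_ (abs_nonneg _)
          exact le_trans hb (hFn (m + 1) (by omega))
      _ = kF := rfl
  -- derivative bounds for u
  have hub' : ∀ q, q ≤ r → ∀ x, ‖iteratedDeriv q u x‖ ≤ cu q * dinv * (1 + K) ^ q := by
    intro q hq x
    exact (invBound q).choose_spec.2 dinv kF K u g₀ hdinv0 hkF0 rfl
      (huc.of_le (by exact_mod_cast hq))
      (hg₀c.of_le (by exact_mod_cast (by omega : q - 1 ≤ r - 1)))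
      hub (fun m hm x' => hg₀b m (lt_of_lt_of_le hm hq) x') hu_deriv x
  -- derivative bounds for h
  have hhb : ∀ q, q ≤ r → ∀ x, ‖iteratedDeriv q h x‖ ≤ Hc * ‖h x‖ := by
    intro q hq x
    rcases Nat.eq_zero_or_pos q with hq0 | hq1
    · subst hq0
      simp only [iteratedDeriv_zero]
      nlinarith [norm_nonneg (h x)]
    · have h1 := hH q hq1 hq x
      have h2 := hHn q hq
      nlinarith [norm_nonneg (h x)]
  -- pointwise bound on the final iterate
  have hgr : ∀ x, ‖g r x‖ ≤ A 0 * ‖h x‖ * dinv ^ r * (1 + K) ^ r := by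
    intro x
    have := hA 0 r dinv K h u g (by omega) hdinv0 hK0 hHc1 hcu0 hh huc hhb hub' hg0 hgs x
    simpa [iteratedDeriv_zero] using this
  -- periodicity
  have hvdper : ∀ x, vd (x + P) = vd x := hvper
  have huper : ∀ x, u (x + P) = u x := by
    intro x
    rw [hudef]
    simp only [hwdef, hvdper x]
  have hgper : ∀ m, ∀ x, g m (x + P) = g m x := by
    intro m
    induction m with
    | zero => intro x; exact hhper x
    | succ m ihm =>
      intro x
      rw [hgs m]
      have : ∀ y, (fun y => g m y * u y) (y + P) = (fun y => g m y * u y) y := by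
        intro y; simp only [ihm y, huper y]
      simp only
      rw [myPeriodicDeriv (fun y => g m y * u y) P this x]
  -- facts about the exponential factor
  have hv_diff : Differentiable ℝ v := hv.differentiable (by simp)
  have hE_hd : ∀ x, HasDerivAt E (w x * E x) x := by
    intro x
    have hv1 : HasDerivAt v (vd x) x := (hv_diff x).hasDerivAt
    have h2 : HasDerivAt (fun y : ℝ => (j : ℝ) * y) ((j : ℝ)) x := by
      simpa using (hasDerivAt_id x).const_mul ((j : ℝ))
    have h1 : HasDerivAt (fun y => (k : ℝ) * v y - (j : ℝ) * y) ((k : ℝ) * vd x - (j : ℝ)) x :=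
      (hv1.const_mul ((k : ℝ))).sub h2
    have h3 : HasDerivAt (fun y => Complex.I * (((k : ℝ) * v y - (j : ℝ) * y : ℝ) : ℂ))
        (Complex.I * (((k : ℝ) * vd x - (j : ℝ) : ℝ) : ℂ)) x :=
      (h1.ofReal_comp).const_mul Complex.I
    have h4 := h3.cexp
    have hE : E x = Complex.exp (Complex.I * (((k : ℝ) * v x - (j : ℝ) * x : ℝ) : ℂ)) := rfl
    have hw : w x = Complex.I * (((k : ℝ) * vd x - (j : ℝ) : ℝ) : ℂ) := rfl
    rw [hEdef, hw, mul_comm]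
    exact h4
  have hEnorm : ∀ x, ‖E x‖ = 1 := by
    intro x
    have hE : E x = Complex.exp (Complex.I * (((k : ℝ) * v x - (j : ℝ) * x : ℝ) : ℂ)) := rfl
    rw [hE, Complex.norm_exp]
    simp
  have hEP : E P = E 0 := by
    obtain ⟨mI, hmI⟩ := hvint
    have hvP : v P = v 0 + 2 * Real.pi * mI := by linarith
    have hφ : ((k : ℝ) * v P - (j : ℝ) * P)
        = ((k : ℝ) * v 0 - (j : ℝ) * 0) + 2 * Real.pi * (((k * mI - j * β : ℤ)) : ℝ) := by
      rw [hvP, hPdef]; push_cast; ring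
    have hE1 : E P = Complex.exp (Complex.I * (((k : ℝ) * v P - (j : ℝ) * P : ℝ) : ℂ)) := rfl
    have hE0 : E 0 = Complex.exp (Complex.I * (((k : ℝ) * v 0 - (j : ℝ) * 0 : ℝ) : ℂ)) := rfl
    have hcast : Complex.I * (((k : ℝ) * v P - (j : ℝ) * P : ℝ) : ℂ)
        = Complex.I * (((k : ℝ) * v 0 - (j : ℝ) * 0 : ℝ) : ℂ)
          + ((k * mI - j * β : ℤ) : ℂ) * (2 * (Real.pi : ℂ) * Complex.I) := by
      rw [hφ]; push_cast; ring
    rw [hE1, hE0, hcast, Complex.exp_add, Complex.exp_int_mul_two_pi_mul_I, mul_one]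
  -- continuity
  have hgcont : ∀ m, m ≤ r → Continuous (g m) := fun m hm =>
    (gSmooth r h u g hh huc hg0 hgs m hm).continuous
  have hEcont : Continuous E := by
    apply Complex.continuous_exp.comp
    exact continuous_const.mul (Complex.continuous_ofReal.comp
      ((continuous_const.mul hv.continuous).sub (continuous_const.mul continuous_id)))
  -- one step of integration by parts
  have hstep : ∀ m, m < r →
      (∫ x in (0:ℝ)..P, g m x * E x) = ∫ x in (0:ℝ)..P, g (m + 1) x * E x := by
    intro m hm
    set U : ℝ → ℂ := fun y => g m y * u y with hUdef
    have hUc : ContDiff ℝ ((r - m : ℕ)) U :=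
      (gSmooth r h u g hh huc hg0 hgs m (le_of_lt hm)).mul
        (huc.of_le (by exact_mod_cast Nat.sub_le r m))
    have hU1 : ContDiff ℝ (1 : WithTop ℕ∞) U :=
      hUc.of_le (by exact_mod_cast (by omega : (1:ℕ) ≤ r - m))
    have hUd : Differentiable ℝ U := hU1.differentiable one_ne_zero
    have hUderiv_cont : Continuous (deriv U) := (contDiff_one_iff_deriv.mp hU1).2
    have hi1 : ∀ x ∈ Set.uIcc (0:ℝ) P, HasDerivAt U (deriv U x) x := fun x _ => (hUd x).hasDerivAt
    have hi2 : ∀ x ∈ Set.uIcc (0:ℝ) P, HasDerivAt E (w x * E x) x := fun x _ => hE_hd x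
    have hi3 : IntervalIntegrable (deriv U) MeasureTheory.volume 0 P :=
      hUderiv_cont.intervalIntegrable _ _
    have hi4 : IntervalIntegrable (fun x => w x * E x) MeasureTheory.volume 0 P :=
      (hwc.continuous.mul hEcont).intervalIntegrable _ _
    have hibp := intervalIntegral.integral_mul_deriv_eq_deriv_mul hi1 hi2 hi3 hi4
    have hLHS : (fun x => U x * (w x * E x)) = fun x => g m x * E x := by
      funext x
      have h5 : u x * w x = 1 := inv_mul_cancel₀ (hwne x)
      calc U x * (w x * E x) = g m x * (u x * w x) * E x := by rw [hUdef]; ring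
        _ = g m x * E x := by rw [h5, mul_one]
    rw [hLHS] at hibp
    have hUP : U P = U 0 := by
      have h6 : U (0 + P) = U 0 := by
        rw [hUdef]
        simp only [hgper m (0:ℝ), huper (0:ℝ)]
      rwa [zero_add] at h6
    rw [hibp, hUP, hEP, hgs m]
    rw [sub_self, zero_sub, ← intervalIntegral.integral_neg]
    congr 1
    funext x
    rw [neg_mul]
  -- full integration by parts
  have hint : (∫ x in (0:ℝ)..P, h x * E x) = ∫ x in (0:ℝ)..P, g r x * E x := by
    have haux : ∀ m, m ≤ r →
        (∫ x in (0:ℝ)..P, h x * E x) = ∫ x in (0:ℝ)..P, g m x * E x := by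
      intro m
      induction m with
      | zero => intro _; rw [hg0]
      | succ m ihm =>
        intro hm
        rw [ihm (by omega), hstep m (by omega)]
    exact haux r le_rfl
  -- final estimate
  have hnormc : ‖(1 / (2 * Real.pi) : ℂ)‖ = 1 / (2 * Real.pi) := by
    rw [show ((1 / (2 * Real.pi) : ℂ)) = (((1 / (2 * Real.pi) : ℝ)) : ℂ) by push_cast; ring]
    rw [Complex.norm_real, Real.norm_eq_abs, abs_of_pos (by positivity)]
  have hIh : (0:ℝ) ≤ ∫ x in (0:ℝ)..P, ‖h x‖ :=
    intervalIntegral.integral_nonneg hP0 (fun x _ => norm_nonneg _)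
  set B : ℝ := A 0 * dinv ^ r * (1 + K) ^ r with hBdef
  have hB0 : 0 ≤ B := by
    have := hA0 0
    have h1K0 : (0:ℝ) ≤ 1 + K := by linarith
    positivity
  have hBsum : B = ∑ n ∈ Finset.range (r + 1),
      A 0 * (r.choose n : ℝ) * F ^ n * |(k : ℝ)| ^ n / d ^ (n + r) := by
    calc B = A 0 * dinv ^ r * ((K + 1) ^ r) := by rw [hBdef, add_comm K 1]
      _ = A 0 * dinv ^ r * (∑ n ∈ Finset.range (r + 1),
            K ^ n * 1 ^ (r - n) * (r.choose n : ℝ)) := by rw [add_pow]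
      _ = ∑ n ∈ Finset.range (r + 1),
            A 0 * (r.choose n : ℝ) * F ^ n * |(k : ℝ)| ^ n / d ^ (n + r) := by
          rw [Finset.mul_sum]
          refine Finset.sum_congr rfl ?_
          intro n _
          have hdn : (d : ℝ) ≠ 0 := ne_of_gt hd0
          rw [one_pow, mul_one, hKdef, hkFdef, hdinvdef]
          rw [pow_add, mul_pow, mul_pow]
          field_simp
          have h1 : d ^ r * d⁻¹ ^ r = 1 := by rw [← mul_pow, mul_inv_cancel₀ hdn, one_pow]
          have h2 : d ^ n * d⁻¹ ^ n = 1 := by rw [← mul_pow, mul_inv_cancel₀ hdn, one_pow]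
          linear_combination (A 0 * |(k : ℝ)| ^ n * (r.choose n : ℝ)) * (d ^ n * d⁻¹ ^ n * h1 + h2)
  calc ‖(1 / (2 * Real.pi) : ℂ) * ∫ x in (0:ℝ)..P, h x * E x‖
      = (1 / (2 * Real.pi)) * ‖∫ x in (0:ℝ)..P, g r x * E x‖ := by
        rw [norm_mul, hnormc, hint]
    _ ≤ (1 / (2 * Real.pi)) * ∫ x in (0:ℝ)..P, ‖g r x * E x‖ := by
        refine mul_le_mul_of_nonneg_left
          (intervalIntegral.norm_integral_le_integral_norm hP0) (by positivity)
    _ ≤ (1 / (2 * Real.pi)) * (B * ∫ x in (0:ℝ)..P, ‖h x‖) := by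
        refine mul_le_mul_of_nonneg_left ?_ (by positivity)
        have hmono : (∫ x in (0:ℝ)..P, ‖g r x * E x‖) ≤ ∫ x in (0:ℝ)..P, B * ‖h x‖ := by
          refine intervalIntegral.integral_mono_on hP0 ?_ ?_ ?_
          · exact ((hgcont r le_rfl).mul hEcont).norm.intervalIntegrable _ _
          · exact (continuous_const.mul hh.continuous.norm).intervalIntegrable _ _
          · intro x _
            rw [norm_mul, hEnorm x, mul_one]
            calc ‖g r x‖ ≤ A 0 * ‖h x‖ * dinv ^ r * (1 + K) ^ r := hgr x
              _ = B * ‖h x‖ := by rw [hBdef]; ring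
        calc (∫ x in (0:ℝ)..P, ‖g r x * E x‖) ≤ ∫ x in (0:ℝ)..P, B * ‖h x‖ := hmono
          _ = B * ∫ x in (0:ℝ)..P, ‖h x‖ := intervalIntegral.integral_const_mul B _
    _ = (∫ x in (0:ℝ)..P, ‖h x‖) / (2 * Real.pi) * B := by ring
    _ = (∫ x in (0:ℝ)..P, ‖h x‖) / (2 * Real.pi)
          * ∑ n ∈ Finset.range (r + 1),
              A 0 * (r.choose n : ℝ) * F ^ n * |(k : ℝ)| ^ n / d ^ (n + r) := by
        rw [hBsum]
end

section
/- Let β be a positive integer, r a positive integer, and 0 < λ₁ ≤ λ₂. Let v : ℝ → ℝ be C^{r+1} with v(x + 2πβ) = v(x) + 2π for all x, with λ₂⁻¹ ≤ v'(x) ≤ λ₁⁻¹ for all x, and with sup_x |v^{(n+1)}(x)/v'(x)| ≤ C_n < ∞ for n = 1,…,r. For j,k ∈ ℤ define L_{jk} = (1/2π) ∫₀^{2πβ} v'(x) e^{i(k v(x) − j x)} dx. Then: (i) for every p₁ > λ₁⁻¹ there exists C > 0 such that |L_{jk}| ≤ C (1 + |j − p₁ k|)^{−r} whenever k = 0 or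 j/k > p₁; and (ii) for every p₂ ∈ (0, λ₂⁻¹) there exists C' > 0 such that |L_{jk}| ≤ C' (1 + |j − p₂ k|)^{−r} whenever k = 0 or j/k < p₂. -/
open Finset intervalIntegral

noncomputable section

namespace TEB

variable (v : ℝ → ℝ)

/-- `u = 1/(k v' - j)`. -/
def uu (j k : ℤ) (x : ℝ) : ℝ := ((k : ℝ) * deriv v x - j)⁻¹

/-- iterated integration-by-parts integrands: `h 0 = v'`, `h (n+1) = (h n · u)'`. -/
def hh (j k : ℤ) : ℕ → ℝ → ℝ
  | 0 => deriv v
  | n + 1 => deriv (fun y => hh j k n y * uu v j k y)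

variable {v} {r : ℕ}

lemma contDiff_dv (hv : ContDiff ℝ (r + 1 : ℕ) v) : ContDiff ℝ r (deriv v) := by
  have : ((r + 1 : ℕ) : WithTop ℕ∞) = (r : WithTop ℕ∞) + 1 := by push_cast; ring
  rw [this] at hv
  exact (contDiff_succ_iff_deriv.mp hv).2.2

lemma contDiff_uu (hv : ContDiff ℝ (r + 1 : ℕ) v) {j k : ℤ}
    (hne : ∀ x : ℝ, (k : ℝ) * deriv v x - j ≠ 0) : ContDiff ℝ r (uu v j k) :=
  ((contDiff_const.mul (contDiff_dv hv)).sub contDiff_const).inv hne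

lemma contDiff_hh (hv : ContDiff ℝ (r + 1 : ℕ) v) {j k : ℤ}
    (hne : ∀ x : ℝ, (k : ℝ) * deriv v x - j ≠ 0) :
    ∀ n m : ℕ, n + m ≤ r → ContDiff ℝ m (hh v j k n) := by
  intro n
  induction n with
  | zero => intro m hm; exact (contDiff_dv hv).of_le (by exact_mod_cast (show m ≤ r by omega))
  | succ n ih =>
    intro m hm
    have h1 : ContDiff ℝ (m + 1 : ℕ) (fun y => hh v j k n y * uu v j k y) :=
      (ih (m + 1) (by omega)).mul ((contDiff_uu hv hne).of_le (by exact_mod_cast (show m + 1 ≤ r by omega)))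
    have : ((m + 1 : ℕ) : WithTop ℕ∞) = (m : WithTop ℕ∞) + 1 := by push_cast; ring
    rw [this] at h1
    exact (contDiff_succ_iff_deriv.mp h1).2.2

/-- Leibniz inequality for 1D iterated derivatives. -/
lemma abs_iteratedDeriv_mul_le {n : ℕ} {f g : ℝ → ℝ} (hf : ContDiff ℝ n f)
    (hg : ContDiff ℝ n g) (x : ℝ) :
    |iteratedDeriv n (fun y => f y * g y) x| ≤
      ∑ i ∈ range (n + 1), (n.choose i : ℝ) * |iteratedDeriv i f x| * |iteratedDeriv (n - i) g x| := by
  have := norm_iteratedFDeriv_mul_le (𝕜 := ℝ) hf hg x (le_refl (n : WithTop ℕ∞))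
  simpa only [norm_iteratedFDeriv_eq_norm_iteratedDeriv, Real.norm_eq_abs] using this

lemma iteratedDeriv_cmul {n : ℕ} {f : ℝ → ℝ} (hf : ContDiff ℝ n f) (c x : ℝ) :
    iteratedDeriv n (fun y => c * f y) x = c * iteratedDeriv n f x := by
  simp_rw [← iteratedDerivWithin_univ]
  exact iteratedDerivWithin_const_mul (Set.mem_univ x) uniqueDiffOn_univ c hf.contDiffWithinAt

lemma iteratedDeriv_deriv (f : ℝ → ℝ) (m : ℕ) (x : ℝ) :
    iteratedDeriv m (deriv f) x = iteratedDeriv (m + 1) f x := by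
  simp only [iteratedDeriv_eq_iterate]
  rw [Function.iterate_add_apply deriv m 1 f]
  simp

lemma iteratedDeriv_dv (m : ℕ) (x : ℝ) :
    iteratedDeriv m (deriv v) x = iteratedDeriv (m + 1) v x :=
  iteratedDeriv_deriv v m x

lemma iteratedDeriv_ddv (m : ℕ) (x : ℝ) :
    iteratedDeriv m (iteratedDeriv 2 v) x = iteratedDeriv (m + 2) v x := by
  simp only [iteratedDeriv_eq_iterate]
  rw [Function.iterate_add_apply deriv m 2 v]

/-- derivative of `u`. -/
lemma deriv_uu (hv : ContDiff ℝ (r + 1 : ℕ) v) (hr : 1 ≤ r) {j k : ℤ}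
    (hne : ∀ x : ℝ, (k : ℝ) * deriv v x - j ≠ 0) :
    deriv (uu v j k) = fun x =>
      -((k : ℝ) * iteratedDeriv 2 v x) * (uu v j k x * uu v j k x) := by
  funext x
  have hdv : ContDiff ℝ r (deriv v) := contDiff_dv hv
  have h2 : HasDerivAt (deriv v) (iteratedDeriv 2 v x) x := by
    have : DifferentiableAt ℝ (deriv v) x :=
      (hdv.differentiable (by exact_mod_cast (Nat.one_le_iff_ne_zero.mp hr))).differentiableAt
    have := this.hasDerivAt
    rwa [show deriv (deriv v) x = iteratedDeriv 2 v x by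
      rw [← iteratedDeriv_dv 1 x, iteratedDeriv_one]] at this
  have hψ : HasDerivAt (fun y => (k : ℝ) * deriv v y - j)
      ((k : ℝ) * iteratedDeriv 2 v x) x := by
    simpa using ((h2.const_mul (k : ℝ)).sub_const (j : ℝ))
  have hval : deriv (uu v j k) x
      = -((k : ℝ) * iteratedDeriv 2 v x) / ((k : ℝ) * deriv v x - j) ^ 2 :=
    (hψ.inv (hne x)).deriv
  rw [hval]
  unfold uu
  rw [div_eq_mul_inv, pow_two, mul_inv]


lemma contDiff_ddv (hv : ContDiff ℝ (r + 1 : ℕ) v) (hr : 1 ≤ r) :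
    ContDiff ℝ (r - 1 : ℕ) (iteratedDeriv 2 v) := by
  have h1 : ContDiff ℝ r (deriv v) := contDiff_dv hv
  have hcast : ((r : ℕ) : WithTop ℕ∞) = ((r - 1 : ℕ) : WithTop ℕ∞) + 1 := by
    rw [show r = (r - 1) + 1 by omega]; push_cast; ring
  rw [hcast] at h1
  have h2 := (contDiff_succ_iff_deriv.mp h1).2.2
  have : iteratedDeriv 2 v = deriv (deriv v) := by
    funext x; rw [← iteratedDeriv_dv 1 x, iteratedDeriv_one]
  rwa [this]

lemma uu_bound (hv : ContDiff ℝ (r + 1 : ℕ) v) (hr : 1 ≤ r) (C : ℕ → ℝ)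
    (hdvpos : ∀ x : ℝ, 0 < deriv v x)
    (hC : ∀ n, 1 ≤ n → n ≤ r → ∀ x : ℝ,
      |iteratedDeriv (n + 1) v x| ≤ C n * |deriv v x|) (M : ℝ) :
    ∀ s, s ≤ r → ∃ A : ℝ, 1 ≤ A ∧ ∀ j k : ℤ,
      (∀ x : ℝ, (k : ℝ) * deriv v x - j ≠ 0) →
      (∀ x : ℝ, |(k : ℝ)| * deriv v x ≤ M * |(k : ℝ) * deriv v x - j|) →
      ∀ t, t ≤ s → ∀ x : ℝ, |iteratedDeriv t (uu v j k) x| ≤ A * |uu v j k x| := by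
  intro s
  induction s with
  | zero =>
    refine fun _ => ⟨1, le_refl 1, fun j k hne hM t ht x => ?_⟩
    obtain rfl : t = 0 := by omega
    simp [iteratedDeriv_zero]
  | succ s ih =>
    intro hs
    obtain ⟨A, hA1, hA⟩ := ih (by omega)
    set Kbig : ℝ :=
      ∑ i ∈ range (s + 1), (s.choose i : ℝ) * 2 ^ (s - i) * A ^ 2 * (|C (i + 1)| * M) with hK
    refine ⟨max A (max Kbig 1), le_trans hA1 (le_max_left _ _), fun j k hne hM t ht x => ?_⟩
    have hu : ContDiff ℝ r (uu v j k) := contDiff_uu hv hne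
    have habsu : (0:ℝ) ≤ |uu v j k x| := abs_nonneg _
    rcases Nat.lt_or_ge t (s + 1) with ht' | ht'
    · exact le_trans (hA j k hne hM t (by omega) x)
        (mul_le_mul_of_nonneg_right (le_max_left _ _) habsu)
    obtain rfl : t = s + 1 := by omega
    -- main case
    have hw : ContDiff ℝ (r - 1 : ℕ) (iteratedDeriv 2 v) := contDiff_ddv hv hr
    have hwk : ContDiff ℝ s (fun y => (k : ℝ) * iteratedDeriv 2 v y) :=
      contDiff_const.mul (hw.of_le (by exact_mod_cast (show s ≤ r - 1 by omega)))
    have huus : ContDiff ℝ s (fun y => uu v j k y * uu v j k y) :=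
      (hu.of_le (by exact_mod_cast (show s ≤ r by omega))).mul
        (hu.of_le (by exact_mod_cast (show s ≤ r by omega)))
    -- key pointwise quantities
    have hq : |(k : ℝ)| * deriv v x * |uu v j k x| ≤ M := by
      have h1 : |(k : ℝ) * deriv v x - j| * |uu v j k x| = 1 := by
        rw [← abs_mul]
        unfold uu
        rw [mul_inv_cancel₀ (hne x), abs_one]
      calc |(k : ℝ)| * deriv v x * |uu v j k x|
          ≤ M * |(k : ℝ) * deriv v x - j| * |uu v j k x| :=
            mul_le_mul_of_nonneg_right (hM x) habsu
        _ = M * (|(k : ℝ) * deriv v x - j| * |uu v j k x|) := by ring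
        _ = M := by rw [h1, mul_one]
    have hM0 : 0 ≤ M :=
      le_trans (mul_nonneg (mul_nonneg (abs_nonneg _) (hdvpos x).le) habsu) hq
    -- inner Leibniz bound for (u·u)^(m), m ≤ s
    have hinner : ∀ m, m ≤ s →
        |iteratedDeriv m (fun y => uu v j k y * uu v j k y) x| ≤
          2 ^ m * A ^ 2 * |uu v j k x| ^ 2 := by
      intro m hm
      have hum : ContDiff ℝ m (uu v j k) :=
        hu.of_le (by exact_mod_cast (show m ≤ r by omega))
      refine le_trans (abs_iteratedDeriv_mul_le hum hum x) ?_
      have hterm : ∀ i ∈ range (m + 1),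
          (m.choose i : ℝ) * |iteratedDeriv i (uu v j k) x| *
              |iteratedDeriv (m - i) (uu v j k) x| ≤
            (m.choose i : ℝ) * (A ^ 2 * |uu v j k x| ^ 2) := by
        intro i hi
        have hi' : i ≤ m := by simpa using Nat.lt_succ_iff.mp (mem_range.mp hi)
        have b1 := hA j k hne hM i (by omega) x
        have b2 := hA j k hne hM (m - i) (by omega) x
        have : |iteratedDeriv i (uu v j k) x| * |iteratedDeriv (m - i) (uu v j k) x| ≤
            (A * |uu v j k x|) * (A * |uu v j k x|) :=
          mul_le_mul b1 b2 (abs_nonneg _) (by positivity)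
        calc (m.choose i : ℝ) * |iteratedDeriv i (uu v j k) x| *
              |iteratedDeriv (m - i) (uu v j k) x|
            = (m.choose i : ℝ) * (|iteratedDeriv i (uu v j k) x| *
              |iteratedDeriv (m - i) (uu v j k) x|) := by ring
          _ ≤ (m.choose i : ℝ) * ((A * |uu v j k x|) * (A * |uu v j k x|)) :=
              mul_le_mul_of_nonneg_left this (by positivity)
          _ = (m.choose i : ℝ) * (A ^ 2 * |uu v j k x| ^ 2) := by ring
      refine le_trans (Finset.sum_le_sum hterm) ?_
      rw [← Finset.sum_mul]
      have : ∑ i ∈ range (m + 1), (m.choose i : ℝ) = 2 ^ m := by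
        rw [← Nat.cast_sum]
        norm_cast
        exact Nat.sum_range_choose m
      rw [this]; ring_nf; rfl
    -- main chain
    have step1 : iteratedDeriv (s + 1) (uu v j k) x = iteratedDeriv s (deriv (uu v j k)) x := by
      rw [iteratedDeriv_succ']
    have step2 : deriv (uu v j k) = fun y =>
        -(((k : ℝ) * iteratedDeriv 2 v y) * (uu v j k y * uu v j k y)) := by
      rw [deriv_uu hv hr hne]
      funext y; ring
    have step3 : |iteratedDeriv (s + 1) (uu v j k) x| =
        |iteratedDeriv s (fun y =>
          ((k : ℝ) * iteratedDeriv 2 v y) * (uu v j k y * uu v j k y)) x| := by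
      rw [step1, step2]
      rw [iteratedDeriv_fun_neg]
      exact abs_neg _
    rw [step3]
    refine le_trans (abs_iteratedDeriv_mul_le hwk huus x) ?_
    have hterm : ∀ i ∈ range (s + 1),
        (s.choose i : ℝ) * |iteratedDeriv i (fun y => (k : ℝ) * iteratedDeriv 2 v y) x| *
            |iteratedDeriv (s - i) (fun y => uu v j k y * uu v j k y) x| ≤
          ((s.choose i : ℝ) * 2 ^ (s - i) * A ^ 2 * (|C (i + 1)| * M)) * |uu v j k x| := by
      intro i hi
      have hi' : i ≤ s := by simpa using Nat.lt_succ_iff.mp (mem_range.mp hi)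
      have hwi : ContDiff ℝ i (iteratedDeriv 2 v) :=
        hw.of_le (by exact_mod_cast (show i ≤ r - 1 by omega))
      have e1 : |iteratedDeriv i (fun y => (k : ℝ) * iteratedDeriv 2 v y) x| =
          |(k : ℝ)| * |iteratedDeriv (i + 2) v x| := by
        rw [iteratedDeriv_cmul hwi, abs_mul, iteratedDeriv_ddv]
      have e2 : |iteratedDeriv (i + 2) v x| ≤ C (i + 1) * deriv v x := by
        have := hC (i + 1) (by omega) (by omega) x
        rwa [abs_of_pos (hdvpos x)] at this
      have key : |(k : ℝ)| * |iteratedDeriv (i + 2) v x| * |uu v j k x| ≤ |C (i + 1)| * M := by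
        calc |(k : ℝ)| * |iteratedDeriv (i + 2) v x| * |uu v j k x|
            ≤ |(k : ℝ)| * (C (i + 1) * deriv v x) * |uu v j k x| := by
              refine mul_le_mul_of_nonneg_right (mul_le_mul_of_nonneg_left e2 (abs_nonneg _)) habsu
          _ = C (i + 1) * (|(k : ℝ)| * deriv v x * |uu v j k x|) := by ring
          _ ≤ |C (i + 1)| * (|(k : ℝ)| * deriv v x * |uu v j k x|) := by
              refine mul_le_mul_of_nonneg_right (le_abs_self _)
                (mul_nonneg (mul_nonneg (abs_nonneg _) (hdvpos x).le) habsu)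
          _ ≤ |C (i + 1)| * M := mul_le_mul_of_nonneg_left hq (abs_nonneg _)
      calc (s.choose i : ℝ) * |iteratedDeriv i (fun y => (k : ℝ) * iteratedDeriv 2 v y) x| *
            |iteratedDeriv (s - i) (fun y => uu v j k y * uu v j k y) x|
          ≤ (s.choose i : ℝ) * (|(k : ℝ)| * |iteratedDeriv (i + 2) v x|) *
            (2 ^ (s - i) * A ^ 2 * |uu v j k x| ^ 2) := by
            rw [e1]
            refine mul_le_mul_of_nonneg_left (hinner (s - i) (by omega)) (by positivity)
        _ = (s.choose i : ℝ) * 2 ^ (s - i) * A ^ 2 *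
            ((|(k : ℝ)| * |iteratedDeriv (i + 2) v x| * |uu v j k x|) * |uu v j k x|) := by
            ring
        _ ≤ (s.choose i : ℝ) * 2 ^ (s - i) * A ^ 2 * ((|C (i + 1)| * M) * |uu v j k x|) := by
            refine mul_le_mul_of_nonneg_left
              (mul_le_mul_of_nonneg_right key habsu) (by positivity)
        _ = ((s.choose i : ℝ) * 2 ^ (s - i) * A ^ 2 * (|C (i + 1)| * M)) * |uu v j k x| := by
            ring
    refine le_trans (Finset.sum_le_sum hterm) ?_
    rw [← Finset.sum_mul, ← hK]
    exact mul_le_mul_of_nonneg_right (le_trans (le_max_left _ _) (le_max_right _ _)) habsu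


lemma hh_bound (hv : ContDiff ℝ (r + 1 : ℕ) v) (hr : 1 ≤ r) (C : ℕ → ℝ)
    (hdvpos : ∀ x : ℝ, 0 < deriv v x)
    (hC : ∀ n, 1 ≤ n → n ≤ r → ∀ x : ℝ,
      |iteratedDeriv (n + 1) v x| ≤ C n * |deriv v x|) (M : ℝ) :
    ∀ n, n ≤ r → ∃ B : ℝ, 0 ≤ B ∧ ∀ j k : ℤ,
      (∀ x : ℝ, (k : ℝ) * deriv v x - j ≠ 0) →
      (∀ x : ℝ, |(k : ℝ)| * deriv v x ≤ M * |(k : ℝ) * deriv v x - j|) →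
      ∀ m, n + m ≤ r → ∀ x : ℝ,
        |iteratedDeriv m (hh v j k n) x| ≤ B * deriv v x * |uu v j k x| ^ n := by
  obtain ⟨A, hA1, hA⟩ := uu_bound hv hr C hdvpos hC M r (le_refl r)
  intro n
  induction n with
  | zero =>
    intro _
    refine ⟨1 + ∑ i ∈ range (r + 1), |C i|, by positivity, fun j k hne hM m hm x => ?_⟩
    have hB1 : (1 : ℝ) ≤ 1 + ∑ i ∈ range (r + 1), |C i| := by
      have : (0:ℝ) ≤ ∑ i ∈ range (r + 1), |C i| :=
        Finset.sum_nonneg fun i _ => abs_nonneg _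
      linarith
    show |iteratedDeriv m (deriv v) x| ≤ _
    rw [iteratedDeriv_dv, pow_zero, mul_one]
    rcases Nat.eq_zero_or_pos m with rfl | hm1
    · rw [show (0:ℕ) + 1 = 1 from rfl, iteratedDeriv_one, abs_of_pos (hdvpos x)]
      exact le_mul_of_one_le_left (hdvpos x).le hB1
    · have h1 := hC m hm1 (by omega) x
      rw [abs_of_pos (hdvpos x)] at h1
      refine le_trans h1 (mul_le_mul_of_nonneg_right ?_ (hdvpos x).le)
      have h2 : C m ≤ |C m| := le_abs_self _
      have h3 : |C m| ≤ ∑ i ∈ range (r + 1), |C i| :=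
        Finset.single_le_sum (fun i _ => abs_nonneg (C i)) (by simp; omega)
      linarith
  | succ n ih =>
    intro hn
    obtain ⟨B, hB0, hB⟩ := ih (by omega)
    refine ⟨2 ^ r * B * A, by positivity, fun j k hne hM m hm x => ?_⟩
    have hu : ContDiff ℝ r (uu v j k) := contDiff_uu hv hne
    have hhn : ContDiff ℝ (m + 1 : ℕ) (hh v j k n) := contDiff_hh hv hne n (m + 1) (by omega)
    have hum : ContDiff ℝ (m + 1 : ℕ) (uu v j k) :=
      hu.of_le (by exact_mod_cast (show m + 1 ≤ r by omega))
    have step : |iteratedDeriv m (hh v j k (n + 1)) x| =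
        |iteratedDeriv (m + 1) (fun y => hh v j k n y * uu v j k y) x| := by
      show |iteratedDeriv m (deriv (fun y => hh v j k n y * uu v j k y)) x| = _
      rw [iteratedDeriv_deriv]
    rw [step]
    refine le_trans (abs_iteratedDeriv_mul_le hhn hum x) ?_
    have hterm : ∀ i ∈ range (m + 2),
        ((m + 1).choose i : ℝ) * |iteratedDeriv i (hh v j k n) x| *
            |iteratedDeriv (m + 1 - i) (uu v j k) x| ≤
          ((m + 1).choose i : ℝ) * (B * A * deriv v x * |uu v j k x| ^ (n + 1)) := by
      intro i hi
      have hi' : i ≤ m + 1 := by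
        have := mem_range.mp hi; omega
      have b1 := hB j k hne hM i (by omega) x
      have b2 := hA j k hne hM (m + 1 - i) (by omega) x
      have hprod : |iteratedDeriv i (hh v j k n) x| * |iteratedDeriv (m + 1 - i) (uu v j k) x| ≤
          (B * deriv v x * |uu v j k x| ^ n) * (A * |uu v j k x|) :=
        mul_le_mul b1 b2 (abs_nonneg _)
          (mul_nonneg (mul_nonneg hB0 (hdvpos x).le) (by positivity))
      calc ((m + 1).choose i : ℝ) * |iteratedDeriv i (hh v j k n) x| *
            |iteratedDeriv (m + 1 - i) (uu v j k) x|
          = ((m + 1).choose i : ℝ) * (|iteratedDeriv i (hh v j k n) x| *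
            |iteratedDeriv (m + 1 - i) (uu v j k) x|) := by ring
        _ ≤ ((m + 1).choose i : ℝ) *
            ((B * deriv v x * |uu v j k x| ^ n) * (A * |uu v j k x|)) :=
            mul_le_mul_of_nonneg_left hprod (by positivity)
        _ = ((m + 1).choose i : ℝ) * (B * A * deriv v x * |uu v j k x| ^ (n + 1)) := by
            ring
    refine le_trans (Finset.sum_le_sum hterm) ?_
    rw [← Finset.sum_mul]
    have hsum : ∑ i ∈ range (m + 2), ((m + 1).choose i : ℝ) = 2 ^ (m + 1) := by
      rw [← Nat.cast_sum]
      norm_cast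
      exact Nat.sum_range_choose (m + 1)
    rw [hsum]
    have h2 : (2:ℝ) ^ (m + 1) ≤ 2 ^ r := by
      apply pow_le_pow_right₀ (by norm_num) (by omega)
    have hnn : (0:ℝ) ≤ B * A * deriv v x * |uu v j k x| ^ (n + 1) := by
      have := (hdvpos x).le
      positivity
    calc (2:ℝ) ^ (m + 1) * (B * A * deriv v x * |uu v j k x| ^ (n + 1))
        ≤ 2 ^ r * (B * A * deriv v x * |uu v j k x| ^ (n + 1)) :=
          mul_le_mul_of_nonneg_right h2 hnn
      _ = 2 ^ r * B * A * deriv v x * |uu v j k x| ^ (n + 1) := by ring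


section Periodic

lemma periodic_deriv_of {T : ℝ} {f : ℝ → ℝ} (hf : ∀ x, f (x + T) = f x) (x : ℝ) :
    deriv f (x + T) = deriv f x := by
  have h1 : deriv (fun y => f (y + T)) x = deriv f (x + T) := deriv_comp_add_const f T x
  rw [← h1, funext hf]

lemma periodic_dv {β : ℕ} (hlift : ∀ x : ℝ, v (x + 2 * Real.pi * β) = v x + 2 * Real.pi)
    (x : ℝ) : deriv v (x + 2 * Real.pi * β) = deriv v x := by
  have h1 : deriv (fun y => v (y + 2 * Real.pi * β)) x = deriv v (x + 2 * Real.pi * β) :=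
    deriv_comp_add_const v _ x
  rw [← h1, funext hlift]
  exact deriv_add_const _

lemma periodic_uu {β : ℕ} (hlift : ∀ x : ℝ, v (x + 2 * Real.pi * β) = v x + 2 * Real.pi)
    (j k : ℤ) (x : ℝ) : uu v j k (x + 2 * Real.pi * β) = uu v j k x := by
  unfold uu; rw [periodic_dv hlift]

lemma periodic_hh {β : ℕ} (hlift : ∀ x : ℝ, v (x + 2 * Real.pi * β) = v x + 2 * Real.pi)
    (j k : ℤ) (n : ℕ) (x : ℝ) : hh v j k n (x + 2 * Real.pi * β) = hh v j k n x := by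
  induction n generalizing x with
  | zero => exact periodic_dv hlift x
  | succ n ih =>
    show deriv (fun y => hh v j k n y * uu v j k y) (x + 2 * Real.pi * β) = _
    exact periodic_deriv_of (fun y => by rw [ih, periodic_uu hlift]) x

end Periodic

section IBP

lemma ibp_step {β : ℕ} (hv : ContDiff ℝ (r + 1 : ℕ) v) (hr : 1 ≤ r)
    (hlift : ∀ x : ℝ, v (x + 2 * Real.pi * β) = v x + 2 * Real.pi)
    (j k : ℤ) (hne : ∀ x : ℝ, (k : ℝ) * deriv v x - j ≠ 0)
    (w : ℝ → ℝ) (hw : Continuous w)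
    (hW : ContDiff ℝ 1 (fun y => w y * uu v j k y))
    (hper : ∀ x : ℝ, w (x + 2 * Real.pi * β) = w x) :
    (∫ x in (0:ℝ)..(2 * Real.pi * β),
        ((w x : ℝ) : ℂ) * Complex.exp (Complex.I * (((k : ℝ) * v x - (j : ℝ) * x : ℝ) : ℂ)))
      = Complex.I * ∫ x in (0:ℝ)..(2 * Real.pi * β),
        ((deriv (fun y => w y * uu v j k y) x : ℝ) : ℂ) *
          Complex.exp (Complex.I * (((k : ℝ) * v x - (j : ℝ) * x : ℝ) : ℂ)) := by
  set T : ℝ := 2 * Real.pi * β with hT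
  set W : ℝ → ℝ := fun y => w y * uu v j k y with hWdef
  set φ : ℝ → ℝ := fun x => (k : ℝ) * v x - (j : ℝ) * x with hφdef
  set E : ℝ → ℂ := fun x => Complex.exp (Complex.I * ((φ x : ℝ) : ℂ)) with hEdef
  have hvdiff : Differentiable ℝ v := hv.differentiable (by norm_num)
  have hWdiff : Differentiable ℝ W := hW.differentiable one_ne_zero
  have hW'cont : Continuous (deriv W) := (contDiff_one_iff_deriv.mp hW).2
  have hφcont : Continuous φ := ((continuous_const.mul hvdiff.continuous).sub
    (continuous_const.mul continuous_id))
  have hEcont : Continuous E := Complex.continuous_exp.comp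
    (continuous_const.mul (Complex.continuous_ofReal.comp hφcont))
  have hG : ∀ x : ℝ, HasDerivAt (fun y => -Complex.I * ((W y : ℝ) : ℂ) * E y)
      (((w x : ℝ) : ℂ) * E x - Complex.I * ((deriv W x : ℝ) : ℂ) * E x) x := by
    intro x
    have h1c : HasDerivAt (fun y => ((W y : ℝ) : ℂ)) ((deriv W x : ℝ) : ℂ) x :=
      (hWdiff x).hasDerivAt.ofReal_comp
    have hφ : HasDerivAt φ ((k : ℝ) * deriv v x - j) x := by
      have h2 : HasDerivAt (fun y => (k : ℝ) * v y) ((k : ℝ) * deriv v x) x :=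
        (hvdiff x).hasDerivAt.const_mul _
      have h3 : HasDerivAt (fun y => (j : ℝ) * y) ((j : ℝ)) x := by
        simpa using (hasDerivAt_id x).const_mul (j : ℝ)
      exact h2.sub h3
    have hE : HasDerivAt E (Complex.exp (Complex.I * ((φ x : ℝ) : ℂ)) *
        (Complex.I * (((k : ℝ) * deriv v x - j : ℝ) : ℂ))) x :=
      ((hφ.ofReal_comp).const_mul Complex.I).cexp
    have hmul : HasDerivAt (fun y => -Complex.I * ((W y : ℝ) : ℂ) * E y)
        (-Complex.I * ((deriv W x : ℝ) : ℂ) * E x + -Complex.I * ((W x : ℝ) : ℂ) *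
          (Complex.exp (Complex.I * ((φ x : ℝ) : ℂ)) *
            (Complex.I * (((k : ℝ) * deriv v x - j : ℝ) : ℂ)))) x :=
      (h1c.const_mul (-Complex.I)).fun_mul hE
    convert hmul using 1
    have hWψ : W x * ((k : ℝ) * deriv v x - j) = w x := by
      show w x * uu v j k x * ((k : ℝ) * deriv v x - j) = w x
      unfold uu
      rw [mul_assoc, inv_mul_cancel₀ (hne x), mul_one]
    have hkey : ((W x : ℝ) : ℂ) * (((k : ℝ) * deriv v x - j : ℝ) : ℂ) = ((w x : ℝ) : ℂ) := by
      rw [← Complex.ofReal_mul, hWψ]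
    have hii : Complex.I * Complex.I = -1 := Complex.I_mul_I
    linear_combination ((W x : ℝ) : ℂ) * (((k : ℝ) * deriv v x - j : ℝ) : ℂ) *
        Complex.exp (Complex.I * ((φ x : ℝ) : ℂ)) * hii -
      Complex.exp (Complex.I * ((φ x : ℝ) : ℂ)) * hkey
  have hint1 : IntervalIntegrable (fun x => ((w x : ℝ) : ℂ) * E x) MeasureTheory.volume 0 T :=
    ((Complex.continuous_ofReal.comp hw).mul hEcont).intervalIntegrable 0 T
  have hint2 : IntervalIntegrable (fun x => Complex.I * ((deriv W x : ℝ) : ℂ) * E x)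
      MeasureTheory.volume 0 T :=
    ((continuous_const.mul (Complex.continuous_ofReal.comp hW'cont)).mul hEcont).intervalIntegrable 0 T
  have hFTC : (∫ x in (0:ℝ)..T,
      (((w x : ℝ) : ℂ) * E x - Complex.I * ((deriv W x : ℝ) : ℂ) * E x))
      = -Complex.I * ((W T : ℝ) : ℂ) * E T - -Complex.I * ((W 0 : ℝ) : ℂ) * E 0 :=
    intervalIntegral.integral_eq_sub_of_hasDerivAt (fun x _ => hG x) (hint1.sub hint2)
  have hWper : W T = W 0 := by
    have := hper 0
    have h2 := periodic_uu (v := v) hlift j k 0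
    show w T * uu v j k T = w 0 * uu v j k 0
    rw [show T = 0 + T by ring] at *
    simp only [hT] at *
    simp only [zero_add] at this h2
    rw [this, h2]
  have hET : E T = E 0 := by
    have hvT : v T = v 0 + 2 * Real.pi := by
      have := hlift 0
      rwa [zero_add] at this
    have hφT : φ T = φ 0 + 2 * Real.pi * ((k : ℝ) - (β : ℝ) * (j : ℝ)) := by
      simp only [hφdef]; rw [hvT, hT]
      ring
    show Complex.exp _ = Complex.exp _
    rw [hφT]
    push_cast
    rw [mul_add, Complex.exp_add]
    have : Complex.I * (2 * (Real.pi : ℂ) * ((k : ℂ) - (β : ℂ) * (j : ℂ)))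
        = ((k - (β : ℤ) * j : ℤ) : ℂ) * (2 * (Real.pi : ℂ) * Complex.I) := by
      push_cast; ring
    rw [this, Complex.exp_int_mul_two_pi_mul_I, mul_one]
  rw [hWper, hET, sub_self] at hFTC
  have h2 := intervalIntegral.integral_sub hint1 hint2
  rw [hFTC] at h2
  have h0 : (∫ x in (0:ℝ)..T, ((w x : ℝ) : ℂ) * E x)
      = ∫ x in (0:ℝ)..T, Complex.I * ((deriv W x : ℝ) : ℂ) * E x :=
    sub_eq_zero.mp h2.symm
  rw [h0]
  rw [← intervalIntegral.integral_const_mul]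
  congr 1
  funext x
  ring

end IBP


lemma ibp_iterate {β : ℕ} (hv : ContDiff ℝ (r + 1 : ℕ) v) (hr : 1 ≤ r)
    (hlift : ∀ x : ℝ, v (x + 2 * Real.pi * β) = v x + 2 * Real.pi)
    (j k : ℤ) (hne : ∀ x : ℝ, (k : ℝ) * deriv v x - j ≠ 0) :
    ∀ n, n ≤ r →
      (∫ x in (0:ℝ)..(2 * Real.pi * β), ((deriv v x : ℝ) : ℂ) *
          Complex.exp (Complex.I * (((k : ℝ) * v x - (j : ℝ) * x : ℝ) : ℂ)))
        = Complex.I ^ n * ∫ x in (0:ℝ)..(2 * Real.pi * β), ((hh v j k n x : ℝ) : ℂ) *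
          Complex.exp (Complex.I * (((k : ℝ) * v x - (j : ℝ) * x : ℝ) : ℂ)) := by
  intro n
  induction n with
  | zero => intro _; rw [pow_zero, one_mul]; rfl
  | succ n ih =>
    intro hn
    rw [ih (by omega)]
    have hw : Continuous (hh v j k n) := by
      have := contDiff_hh hv hne n 0 (by omega)
      exact this.continuous
    have hW : ContDiff ℝ 1 (fun y => hh v j k n y * uu v j k y) := by
      have h1 : ContDiff ℝ (1 : ℕ) (hh v j k n) := contDiff_hh hv hne n 1 (by omega)
      have h2 : ContDiff ℝ (1 : ℕ) (uu v j k) :=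
        (contDiff_uu hv hne).of_le (by exact_mod_cast hr)
      exact_mod_cast h1.mul h2
    have := ibp_step (β := β) hv hr hlift j k hne (hh v j k n) hw hW
      (fun x => periodic_hh hlift j k n x)
    rw [this]
    rw [show (Complex.I : ℂ) ^ (n + 1) = Complex.I ^ n * Complex.I by ring, mul_assoc]
    simp only [hh]
    ring

/-- Core decay estimate. -/
lemma core {β : ℕ} (hβ : 0 < β) (hv : ContDiff ℝ (r + 1 : ℕ) v) (hr : 1 ≤ r)
    (hlift : ∀ x : ℝ, v (x + 2 * Real.pi * β) = v x + 2 * Real.pi)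
    (hdvpos : ∀ x : ℝ, 0 < deriv v x) {lam₁inv : ℝ}
    (hd₁ : ∀ x : ℝ, deriv v x ≤ lam₁inv)
    (C : ℕ → ℝ)
    (hC : ∀ n, 1 ≤ n → n ≤ r → ∀ x : ℝ,
      |iteratedDeriv (n + 1) v x| ≤ C n * |deriv v x|) (M : ℝ) :
    ∃ K : ℝ, 0 < K ∧ ∀ j k : ℤ,
      (∀ x : ℝ, (k : ℝ) * deriv v x - j ≠ 0) →
      (∀ x : ℝ, |(k : ℝ)| * deriv v x ≤ M * |(k : ℝ) * deriv v x - j|) →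
      ∀ D : ℝ, 0 < D → (∀ x : ℝ, D ≤ |(k : ℝ) * deriv v x - j|) →
      ‖(1 / (2 * Real.pi) : ℂ) * ∫ x in (0:ℝ)..(2 * Real.pi * β),
          ((deriv v x : ℝ) : ℂ) * Complex.exp (Complex.I * (((k : ℝ) * v x - (j : ℝ) * x : ℝ) : ℂ))‖
        ≤ K / D ^ r := by
  obtain ⟨B, hB0, hB⟩ := hh_bound hv hr C hdvpos hC M r (le_refl r)
  have hlam : 0 < lam₁inv := (hdvpos 0).trans_le (hd₁ 0)
  refine ⟨(β : ℝ) * B * lam₁inv + 1, by positivity, fun j k hne hM D hD0 hD => ?_⟩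
  have hπ := Real.pi_pos
  rw [ibp_iterate hv hr hlift j k hne r (le_refl r)]
  have hEnorm : ∀ x : ℝ,
      ‖Complex.exp (Complex.I * (((k : ℝ) * v x - (j : ℝ) * x : ℝ) : ℂ))‖ = 1 := by
    intro x
    rw [Complex.norm_exp]
    simp [Complex.mul_re]
  have hbound : ∀ x : ℝ, ‖((hh v j k r x : ℝ) : ℂ) *
      Complex.exp (Complex.I * (((k : ℝ) * v x - (j : ℝ) * x : ℝ) : ℂ))‖
        ≤ B * lam₁inv * (D⁻¹) ^ r := by
    intro x
    rw [norm_mul, hEnorm, mul_one, Complex.norm_real, Real.norm_eq_abs]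
    have h1 := hB j k hne hM 0 (by omega) x
    rw [iteratedDeriv_zero] at h1
    refine le_trans h1 ?_
    have hu : |uu v j k x| ≤ D⁻¹ := by
      have h2 : |uu v j k x| = |(k : ℝ) * deriv v x - j|⁻¹ := by
        unfold uu; rw [abs_inv]
      rw [h2]
      exact inv_anti₀ hD0 (hD x)
    have h3 : |uu v j k x| ^ r ≤ (D⁻¹) ^ r := pow_le_pow_left₀ (abs_nonneg _) hu r
    calc B * deriv v x * |uu v j k x| ^ r
        ≤ B * lam₁inv * |uu v j k x| ^ r := by
          refine mul_le_mul_of_nonneg_right (mul_le_mul_of_nonneg_left (hd₁ x) hB0) (by positivity)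
      _ ≤ B * lam₁inv * (D⁻¹) ^ r :=
          mul_le_mul_of_nonneg_left h3 (by positivity)
  have hint := intervalIntegral.norm_integral_le_of_norm_le_const
    (C := B * lam₁inv * (D⁻¹) ^ r) (f := fun x => ((hh v j k r x : ℝ) : ℂ) *
      Complex.exp (Complex.I * (((k : ℝ) * v x - (j : ℝ) * x : ℝ) : ℂ)))
    (a := (0:ℝ)) (b := 2 * Real.pi * β) (fun x _ => hbound x)
  rw [norm_mul, norm_mul]
  have hI : ‖(Complex.I : ℂ) ^ r‖ = 1 := by
    rw [norm_pow, Complex.norm_I, one_pow]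
  rw [hI, one_mul]
  have hnc : ‖(1 / (2 * Real.pi) : ℂ)‖ = 1 / (2 * Real.pi) := by
    rw [show (1 / (2 * Real.pi) : ℂ) = ((1 / (2 * Real.pi) : ℝ) : ℂ) by push_cast; ring]
    rw [Complex.norm_real, Real.norm_eq_abs, abs_of_pos (by positivity)]
  rw [hnc]
  have habs : |2 * Real.pi * (β : ℝ) - 0| = 2 * Real.pi * β := by
    rw [sub_zero, abs_of_pos]
    have : (0:ℝ) < (β : ℝ) := by exact_mod_cast hβ
    positivity
  rw [habs] at hint
  calc 1 / (2 * Real.pi) * ‖∫ x in (0:ℝ)..(2 * Real.pi * β), ((hh v j k r x : ℝ) : ℂ) *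
      Complex.exp (Complex.I * (((k : ℝ) * v x - (j : ℝ) * x : ℝ) : ℂ))‖
      ≤ 1 / (2 * Real.pi) * (B * lam₁inv * (D⁻¹) ^ r * (2 * Real.pi * β)) :=
        mul_le_mul_of_nonneg_left hint (by positivity)
    _ = (β : ℝ) * B * lam₁inv * (D⁻¹) ^ r := by field_simp
    _ = (β : ℝ) * B * lam₁inv / D ^ r := by rw [inv_pow]; field_simp
    _ ≤ ((β : ℝ) * B * lam₁inv + 1) / D ^ r := by
        gcongr
        linarith


lemma region1 (hdvpos : ∀ x : ℝ, 0 < deriv v x) {lam₁inv p δ : ℝ}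
    (hd₁ : ∀ x : ℝ, deriv v x ≤ lam₁inv) (hδ : 0 < δ) (hp : lam₁inv + δ = p)
    (j k : ℤ) (hjk : ¬(j = 0 ∧ k = 0)) (hreg : k = 0 ∨ p < (j : ℝ) / (k : ℝ)) :
    (∀ x : ℝ, min δ 1 / 2 * (1 + |(j : ℝ) - p * k|) ≤ |(k : ℝ) * deriv v x - j|) ∧
    (∀ x : ℝ, |(k : ℝ)| * deriv v x ≤ lam₁inv / δ * |(k : ℝ) * deriv v x - j|) := by
  have hlam : 0 < lam₁inv := (hdvpos 0).trans_le (hd₁ 0)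
  have hM0 : 0 ≤ lam₁inv / δ := by positivity
  have hc1 : min δ 1 / 2 ≤ δ / 2 := by
    have := min_le_left δ 1; linarith
  have hc2 : min δ 1 / 2 ≤ 1 / 2 := by
    have := min_le_right δ 1; linarith
  have hc0 : 0 < min δ 1 / 2 := by
    have := lt_min hδ one_pos; linarith
  rcases hreg with rfl | hreg
  · -- k = 0
    have hj : j ≠ 0 := fun h => hjk ⟨h, rfl⟩
    have hj1 : (1 : ℝ) ≤ |(j : ℝ)| := by
      rw [← Int.cast_abs]
      exact_mod_cast Int.one_le_abs (by omega)
    constructor <;> intro x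
    · simp only [Int.cast_zero, zero_mul, zero_sub, abs_neg, mul_zero, sub_zero]
      have h1 : min δ 1 / 2 * (1 + |(j : ℝ)|) ≤ 1 / 2 * (1 + |(j : ℝ)|) :=
        mul_le_mul_of_nonneg_right hc2 (by positivity)
      linarith
    · simp only [Int.cast_zero, abs_zero, zero_mul]
      positivity
  · have hk : k ≠ 0 := by
      rintro rfl
      simp only [Int.cast_zero, div_zero] at hreg
      have : (0:ℝ) < p := by linarith [(hdvpos 0).trans_le (hd₁ 0)]
      linarith
    rcases hk.lt_or_gt with hkneg | hkpos
    · -- k < 0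
      have hk' : (k : ℝ) < 0 := by exact_mod_cast hkneg
      have hk1 : (1 : ℝ) ≤ -(k : ℝ) := by
        have : (k : ℝ) ≤ -1 := by exact_mod_cast (by omega : k ≤ -1)
        linarith
      have hj : (j : ℝ) < p * k := by
        have := (lt_div_iff_of_neg hk').mp hreg
        linarith
      have ha : 0 < p * k - (j : ℝ) := by linarith
      have habs : |(j : ℝ) - p * k| = p * k - j := by
        rw [abs_of_nonpos (by linarith)]; ring
      have hkey : ∀ x : ℝ, p * k - j + -(k : ℝ) * δ ≤ (k : ℝ) * deriv v x - j := by
        intro x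
        have h2 : (k : ℝ) * lam₁inv ≤ k * deriv v x :=
          mul_le_mul_of_nonpos_left (hd₁ x) hk'.le
        nlinarith [hp]
      constructor <;> intro x
      · have h3 := hkey x
        have h4 : δ ≤ -(k : ℝ) * δ := by nlinarith
        have h5 : (k : ℝ) * deriv v x - j ≤ |(k : ℝ) * deriv v x - j| := le_abs_self _
        rw [habs]
        have h6 : min δ 1 / 2 * (p * k - j) ≤ 1 / 2 * (p * k - j) :=
          mul_le_mul_of_nonneg_right hc2 ha.le
        nlinarith
      · have h3 := hkey x
        have h5 : (k : ℝ) * deriv v x - j ≤ |(k : ℝ) * deriv v x - j| := le_abs_self _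
        have h6 : |(k : ℝ)| = -(k : ℝ) := abs_of_neg hk'
        rw [h6]
        have h7 : -(k : ℝ) * deriv v x ≤ -(k : ℝ) * lam₁inv :=
          mul_le_mul_of_nonneg_left (hd₁ x) (by linarith)
        have h8 : -(k : ℝ) * lam₁inv = lam₁inv / δ * (-(k : ℝ) * δ) := by
          field_simp
        have h9 : -(k : ℝ) * δ ≤ |(k : ℝ) * deriv v x - j| := by nlinarith
        nlinarith
    · -- k > 0
      have hk' : (0 : ℝ) < k := by exact_mod_cast hkpos
      have hk1 : (1 : ℝ) ≤ (k : ℝ) := by exact_mod_cast (by omega : (1:ℤ) ≤ k)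
      have hj : p * k < (j : ℝ) := by
        have := (lt_div_iff₀ hk').mp hreg
        linarith
      have ha : 0 < (j : ℝ) - p * k := by linarith
      have habs : |(j : ℝ) - p * k| = (j : ℝ) - p * k := abs_of_pos ha
      have hkey : ∀ x : ℝ, (j : ℝ) - p * k + (k : ℝ) * δ ≤ (j : ℝ) - k * deriv v x := by
        intro x
        have h2 : (k : ℝ) * deriv v x ≤ k * lam₁inv :=
          mul_le_mul_of_nonneg_left (hd₁ x) hk'.le
        nlinarith [hp]
      constructor <;> intro x
      · have h3 := hkey x
        have h4 : δ ≤ (k : ℝ) * δ := by nlinarith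
        have h5 : (j : ℝ) - k * deriv v x ≤ |(k : ℝ) * deriv v x - j| := by
          rw [abs_sub_comm]
          exact le_abs_self _
        rw [habs]
        have h6 : min δ 1 / 2 * ((j : ℝ) - p * k) ≤ 1 / 2 * ((j : ℝ) - p * k) :=
          mul_le_mul_of_nonneg_right hc2 ha.le
        nlinarith
      · have h3 := hkey x
        have h5 : (j : ℝ) - k * deriv v x ≤ |(k : ℝ) * deriv v x - j| := by
          rw [abs_sub_comm]
          exact le_abs_self _
        have h6 : |(k : ℝ)| = (k : ℝ) := abs_of_pos hk'
        rw [h6]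
        have h7 : (k : ℝ) * deriv v x ≤ (k : ℝ) * lam₁inv :=
          mul_le_mul_of_nonneg_left (hd₁ x) hk'.le
        have h8 : (k : ℝ) * lam₁inv = lam₁inv / δ * ((k : ℝ) * δ) := by
          field_simp
        have h9 : (k : ℝ) * δ ≤ |(k : ℝ) * deriv v x - j| := by nlinarith
        nlinarith

lemma region2 (hdvpos : ∀ x : ℝ, 0 < deriv v x) {lam₁inv lam₂inv p δ : ℝ}
    (hd₁ : ∀ x : ℝ, deriv v x ≤ lam₁inv) (hd₂ : ∀ x : ℝ, lam₂inv ≤ deriv v x)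
    (hδ : 0 < δ) (hp : p + δ = lam₂inv)
    (j k : ℤ) (hjk : ¬(j = 0 ∧ k = 0)) (hreg : k = 0 ∨ (j : ℝ) / (k : ℝ) < p) :
    (∀ x : ℝ, min δ 1 / 2 * (1 + |(j : ℝ) - p * k|) ≤ |(k : ℝ) * deriv v x - j|) ∧
    (∀ x : ℝ, |(k : ℝ)| * deriv v x ≤ lam₁inv / δ * |(k : ℝ) * deriv v x - j|) := by
  have hlam : 0 < lam₁inv := (hdvpos 0).trans_le (hd₁ 0)
  have hM0 : 0 ≤ lam₁inv / δ := by positivity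
  have hc1 : min δ 1 / 2 ≤ δ / 2 := by
    have := min_le_left δ 1; linarith
  have hc2 : min δ 1 / 2 ≤ 1 / 2 := by
    have := min_le_right δ 1; linarith
  rcases eq_or_ne k 0 with rfl | hk
  · -- k = 0
    have hj : j ≠ 0 := fun h => hjk ⟨h, rfl⟩
    have hj1 : (1 : ℝ) ≤ |(j : ℝ)| := by
      rw [← Int.cast_abs]
      exact_mod_cast Int.one_le_abs (by omega)
    constructor <;> intro x
    · simp only [Int.cast_zero, zero_mul, zero_sub, abs_neg, mul_zero, sub_zero]
      have h1 : min δ 1 / 2 * (1 + |(j : ℝ)|) ≤ 1 / 2 * (1 + |(j : ℝ)|) :=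
        mul_le_mul_of_nonneg_right hc2 (by positivity)
      linarith
    · simp only [Int.cast_zero, abs_zero, zero_mul]
      positivity
  · have hreg : (j : ℝ) / (k : ℝ) < p := hreg.resolve_left hk
    rcases hk.lt_or_gt with hkneg | hkpos
    · -- k < 0 : j > p k
      have hk' : (k : ℝ) < 0 := by exact_mod_cast hkneg
      have hk1 : (1 : ℝ) ≤ -(k : ℝ) := by
        have : (k : ℝ) ≤ -1 := by exact_mod_cast (by omega : k ≤ -1)
        linarith
      have hj : p * k < (j : ℝ) := by
        have := (div_lt_iff_of_neg hk').mp hreg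
        linarith
      have ha : 0 < (j : ℝ) - p * k := by linarith
      have habs : |(j : ℝ) - p * k| = (j : ℝ) - p * k := abs_of_pos ha
      have hkey : ∀ x : ℝ, (j : ℝ) - p * k + -(k : ℝ) * δ ≤ (j : ℝ) - k * deriv v x := by
        intro x
        have h2 : (k : ℝ) * deriv v x ≤ k * lam₂inv :=
          mul_le_mul_of_nonpos_left (hd₂ x) hk'.le
        nlinarith [hp]
      constructor <;> intro x
      · have h3 := hkey x
        have h4 : δ ≤ -(k : ℝ) * δ := by nlinarith
        have h5 : (j : ℝ) - k * deriv v x ≤ |(k : ℝ) * deriv v x - j| := by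
          rw [abs_sub_comm]
          exact le_abs_self _
        rw [habs]
        have h6 : min δ 1 / 2 * ((j : ℝ) - p * k) ≤ 1 / 2 * ((j : ℝ) - p * k) :=
          mul_le_mul_of_nonneg_right hc2 ha.le
        nlinarith
      · have h3 := hkey x
        have h5 : (j : ℝ) - k * deriv v x ≤ |(k : ℝ) * deriv v x - j| := by
          rw [abs_sub_comm]
          exact le_abs_self _
        have h6 : |(k : ℝ)| = -(k : ℝ) := abs_of_neg hk'
        rw [h6]
        have h7 : -(k : ℝ) * deriv v x ≤ -(k : ℝ) * lam₁inv :=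
          mul_le_mul_of_nonneg_left (hd₁ x) (by linarith)
        have h8 : -(k : ℝ) * lam₁inv = lam₁inv / δ * (-(k : ℝ) * δ) := by
          field_simp
        have h9 : -(k : ℝ) * δ ≤ |(k : ℝ) * deriv v x - j| := by nlinarith
        nlinarith
    · -- k > 0 : j < p k
      have hk' : (0 : ℝ) < k := by exact_mod_cast hkpos
      have hk1 : (1 : ℝ) ≤ (k : ℝ) := by exact_mod_cast (by omega : (1:ℤ) ≤ k)
      have hj : (j : ℝ) < p * k := by
        have := (div_lt_iff₀ hk').mp hreg
        linarith
      have ha : 0 < p * k - (j : ℝ) := by linarith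
      have habs : |(j : ℝ) - p * k| = p * k - (j : ℝ) := by
        rw [abs_of_nonpos (by linarith)]; ring
      have hkey : ∀ x : ℝ, p * k - j + (k : ℝ) * δ ≤ (k : ℝ) * deriv v x - j := by
        intro x
        have h2 : (k : ℝ) * lam₂inv ≤ k * deriv v x :=
          mul_le_mul_of_nonneg_left (hd₂ x) hk'.le
        nlinarith [hp]
      constructor <;> intro x
      · have h3 := hkey x
        have h4 : δ ≤ (k : ℝ) * δ := by nlinarith
        have h5 : (k : ℝ) * deriv v x - j ≤ |(k : ℝ) * deriv v x - j| := le_abs_self _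
        rw [habs]
        have h6 : min δ 1 / 2 * (p * k - (j : ℝ)) ≤ 1 / 2 * (p * k - (j : ℝ)) :=
          mul_le_mul_of_nonneg_right hc2 ha.le
        nlinarith
      · have h3 := hkey x
        have h5 : (k : ℝ) * deriv v x - j ≤ |(k : ℝ) * deriv v x - j| := le_abs_self _
        have h6 : |(k : ℝ)| = (k : ℝ) := abs_of_pos hk'
        rw [h6]
        have h7 : (k : ℝ) * deriv v x ≤ (k : ℝ) * lam₁inv :=
          mul_le_mul_of_nonneg_left (hd₁ x) hk'.le
        have h8 : (k : ℝ) * lam₁inv = lam₁inv / δ * ((k : ℝ) * δ) := by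
          field_simp
        have h9 : (k : ℝ) * δ ≤ |(k : ℝ) * deriv v x - j| := by nlinarith
        nlinarith


lemma zero_case {β : ℕ} (hv : ContDiff ℝ (r + 1 : ℕ) v) (hr : 1 ≤ r)
    (hlift : ∀ x : ℝ, v (x + 2 * Real.pi * β) = v x + 2 * Real.pi) :
    ‖(1 / (2 * Real.pi) : ℂ) * ∫ x in (0:ℝ)..(2 * Real.pi * β),
        ((deriv v x : ℝ) : ℂ) * Complex.exp (Complex.I *
          ((((0:ℤ) : ℝ) * v x - ((0:ℤ) : ℝ) * x : ℝ) : ℂ))‖ = 1 := by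
  have hπ := Real.pi_pos
  have hE : ∀ x : ℝ, Complex.exp (Complex.I *
      ((((0:ℤ) : ℝ) * v x - ((0:ℤ) : ℝ) * x : ℝ) : ℂ)) = 1 := by
    intro x
    norm_num
  have h1 : (∫ x in (0:ℝ)..(2 * Real.pi * β),
      ((deriv v x : ℝ) : ℂ) * Complex.exp (Complex.I *
        ((((0:ℤ) : ℝ) * v x - ((0:ℤ) : ℝ) * x : ℝ) : ℂ)))
      = ∫ x in (0:ℝ)..(2 * Real.pi * β), ((deriv v x : ℝ) : ℂ) := by
    congr 1
    funext x
    rw [hE x, mul_one]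
  rw [h1]
  have h2 : (∫ x in (0:ℝ)..(2 * Real.pi * β), ((deriv v x : ℝ) : ℂ))
      = ((∫ x in (0:ℝ)..(2 * Real.pi * β), deriv v x : ℝ) : ℂ) :=
    intervalIntegral.integral_ofReal
  have h3 : (∫ x in (0:ℝ)..(2 * Real.pi * β), deriv v x) = v (2 * Real.pi * β) - v 0 := by
    apply intervalIntegral.integral_deriv_eq_sub
    · intro x _
      exact (hv.differentiable (by norm_num)).differentiableAt
    · exact ((contDiff_dv hv).continuous).intervalIntegrable _ _
  have h4 : v (2 * Real.pi * β) - v 0 = 2 * Real.pi := by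
    have := hlift 0
    rw [zero_add] at this
    rw [this]; ring
  rw [h2, h3, h4]
  rw [norm_mul]
  rw [show ((2 * Real.pi : ℝ) : ℂ) = (2 * Real.pi : ℂ) by push_cast; ring]
  rw [show (1 / (2 * Real.pi) : ℂ) = ((1 / (2 * Real.pi) : ℝ) : ℂ) by push_cast; ring]
  rw [Complex.norm_real, Real.norm_eq_abs, abs_of_pos (by positivity)]
  rw [show (2 * Real.pi : ℂ) = ((2 * Real.pi : ℝ) : ℂ) by push_cast; ring]
  rw [Complex.norm_real, Real.norm_eq_abs, abs_of_pos (by positivity)]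
  field_simp

end TEB

/-- Polynomial decay of the Fourier-basis transfer operator matrix
`L_{jk} = (1/2π) ∫₀^{2πβ} v'(x) e^{i(k v(x) - j x)} dx` of a uniformly expanding circle map
satisfying the generalized distortion condition (DD_r). -/
theorem transfer_entry_bound_periodic_differentiable
    (β r : ℕ) (hβ : 0 < β) (hr : 1 ≤ r)
    (lam₁ lam₂ : ℝ) (hlam₁ : 0 < lam₁) (hlam : lam₁ ≤ lam₂)
    (v : ℝ → ℝ) (hv : ContDiff ℝ (r + 1 : ℕ) v)
    (hlift : ∀ x : ℝ, v (x + 2 * Real.pi * β) = v x + 2 * Real.pi)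
    (hd₂ : ∀ x : ℝ, lam₂⁻¹ ≤ deriv v x) (hd₁ : ∀ x : ℝ, deriv v x ≤ lam₁⁻¹)
    (C : ℕ → ℝ)
    (hC : ∀ n, 1 ≤ n → n ≤ r → ∀ x : ℝ,
      |iteratedDeriv (n + 1) v x| ≤ C n * |deriv v x|) :
    (∀ p₁ : ℝ, lam₁⁻¹ < p₁ → ∃ Cb > (0 : ℝ), ∀ j k : ℤ,
      (k = 0 ∨ p₁ < (j : ℝ) / (k : ℝ)) →
      ‖(1 / (2 * Real.pi) : ℂ) * ∫ x in (0 : ℝ)..(2 * Real.pi * β),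
          ((deriv v x : ℝ) : ℂ) * Complex.exp (Complex.I * ((↑k * v x - ↑j * x : ℝ) : ℂ))‖ ≤
        Cb / (1 + |(j : ℝ) - p₁ * (k : ℝ)|) ^ r) ∧
    (∀ p₂ : ℝ, 0 < p₂ → p₂ < lam₂⁻¹ → ∃ Cb > (0 : ℝ), ∀ j k : ℤ,
      (k = 0 ∨ (j : ℝ) / (k : ℝ) < p₂) →
      ‖(1 / (2 * Real.pi) : ℂ) * ∫ x in (0 : ℝ)..(2 * Real.pi * β),
          ((deriv v x : ℝ) : ℂ) * Complex.exp (Complex.I * ((↑k * v x - ↑j * x : ℝ) : ℂ))‖ ≤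
        Cb / (1 + |(j : ℝ) - p₂ * (k : ℝ)|) ^ r) := by
  have hdvpos : ∀ x : ℝ, 0 < deriv v x := fun x =>
    lt_of_lt_of_le (inv_pos.mpr (lt_of_lt_of_le hlam₁ hlam)) (hd₂ x)
  constructor
  · intro p₁ hp₁
    set δ : ℝ := p₁ - lam₁⁻¹ with hδdef
    have hδ : 0 < δ := by simp only [hδdef]; linarith
    have hp : lam₁⁻¹ + δ = p₁ := by simp only [hδdef]; ring
    obtain ⟨K, hK0, hK⟩ := TEB.core hβ hv hr hlift hdvpos hd₁ C hC (lam₁⁻¹ / δ)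
    set c : ℝ := min δ 1 / 2 with hcdef
    have hc0 : 0 < c := by
      have := lt_min hδ one_pos
      simp only [hcdef]; linarith
    refine ⟨max (K / c ^ r) 1, lt_of_lt_of_le one_pos (le_max_right _ _), fun j k hreg => ?_⟩
    by_cases hjk : j = 0 ∧ k = 0
    · obtain ⟨rfl, rfl⟩ := hjk
      rw [TEB.zero_case hv hr hlift]
      simp only [Int.cast_zero, mul_zero, sub_zero, abs_zero, add_zero, one_pow, div_one]
      exact le_max_right _ _
    · obtain ⟨h1, h2⟩ := TEB.region1 hdvpos hd₁ hδ hp j k hjk hreg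
      have habs0 : (0:ℝ) ≤ |(j : ℝ) - p₁ * k| := abs_nonneg _
      have hD0 : (0:ℝ) < c * (1 + |(j : ℝ) - p₁ * k|) := by positivity
      have hne : ∀ x : ℝ, (k : ℝ) * deriv v x - j ≠ 0 := fun x => by
        have := lt_of_lt_of_le hD0 (h1 x)
        exact abs_pos.mp this
      have := hK j k hne h2 (c * (1 + |(j : ℝ) - p₁ * k|)) hD0 h1
      refine le_trans this ?_
      rw [mul_pow, ← div_div]
      have hpow : (0:ℝ) < (1 + |(j : ℝ) - p₁ * k|) ^ r := by positivity
      gcongr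
      exact le_max_left _ _
  · intro p₂ hp₂0 hp₂
    set δ : ℝ := lam₂⁻¹ - p₂ with hδdef
    have hδ : 0 < δ := by simp only [hδdef]; linarith
    have hp : p₂ + δ = lam₂⁻¹ := by simp only [hδdef]; ring
    obtain ⟨K, hK0, hK⟩ := TEB.core hβ hv hr hlift hdvpos hd₁ C hC (lam₁⁻¹ / δ)
    set c : ℝ := min δ 1 / 2 with hcdef
    have hc0 : 0 < c := by
      have := lt_min hδ one_pos
      simp only [hcdef]; linarith
    refine ⟨max (K / c ^ r) 1, lt_of_lt_of_le one_pos (le_max_right _ _), fun j k hreg => ?_⟩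
    by_cases hjk : j = 0 ∧ k = 0
    · obtain ⟨rfl, rfl⟩ := hjk
      rw [TEB.zero_case hv hr hlift]
      simp only [Int.cast_zero, mul_zero, sub_zero, abs_zero, add_zero, one_pow, div_one]
      exact le_max_right _ _
    · obtain ⟨h1, h2⟩ := TEB.region2 hdvpos hd₁ hd₂ hδ hp j k hjk hreg
      have habs0 : (0:ℝ) ≤ |(j : ℝ) - p₂ * k| := abs_nonneg _
      have hD0 : (0:ℝ) < c * (1 + |(j : ℝ) - p₂ * k|) := by positivity
      have hne : ∀ x : ℝ, (k : ℝ) * deriv v x - j ≠ 0 := fun x => by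
        have := lt_of_lt_of_le hD0 (h1 x)
        exact abs_pos.mp this
      have := hK j k hne h2 (c * (1 + |(j : ℝ) - p₂ * k|)) hD0 h1
      refine le_trans this ?_
      rw [mul_pow, ← div_div]
      have hpow : (0:ℝ) < (1 + |(j : ℝ) - p₂ * k|) ^ r := by positivity
      gcongr
      exact le_max_left _ _
end
end

section
/- Let β be a positive integer, 0 < λ₁ ≤ λ₂, and δ > 0. Let v : ℝ → ℝ satisfy v(x + 2πβ) = v(x) + 2π for all x and λ₂⁻¹ ≤ v'(x) ≤ λ₁⁻¹ for all real x, and suppose v extends to a holomorphic function on the closed strip {z ∈ ℂ : |Im z| ≤ δ} with v' nonvanishing there and sup_{|Im z| ≤ δ} |v''(z)/v'(z)| ≤ C_{1,δ} < ∞. For j,k ∈ ℤ define L_{jk} = (1/2π) ∫₀^{2πβ} v'(x) e^{i(k v(x) − j x)} dx. Then: (i) for every p₁ > λ₁⁻¹ there exist C > 0 and ζ ∈ (0,δ] such that |L_{jk}| ≤ C e^{−ζ|j − p₁ k|} whenever k = 0 or j/k > p₁; and (ii) for every p₂ ∈ (0, λ₂⁻¹) there exist C' > 0 and ζ' ∈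 (0,δ] such that |L_{jk}| ≤ C' e^{−ζ'|j − p₂ k|} whenever k = 0 or j/k < p₂. -/
open Complex Set intervalIntegral

set_option maxHeartbeats 1000000 in
/-- Exponential decay of the Fourier-basis transfer operator matrix
`L_{jk} = (1/2π) ∫₀^{2πβ} v'(x) e^{i(k v(x) - j x)} dx` of a uniformly expanding circle map
satisfying the analytic distortion condition (AD_δ). -/
theorem transfer_entry_bound_periodic_analytic
    (β : ℕ) (hβ : 0 < β)
    (lam₁ lam₂ δ : ℝ) (hlam₁ : 0 < lam₁) (hlam : lam₁ ≤ lam₂) (hδ : 0 < δ)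
    (v : ℝ → ℝ) (V : ℂ → ℂ)
    (hVv : ∀ x : ℝ, V x = (v x : ℂ))
    (hVhol : DifferentiableOn ℂ V {z : ℂ | |z.im| ≤ δ})
    (hlift : ∀ x : ℝ, v (x + 2 * Real.pi * β) = v x + 2 * Real.pi)
    (hd₂ : ∀ x : ℝ, lam₂⁻¹ ≤ deriv v x) (hd₁ : ∀ x : ℝ, deriv v x ≤ lam₁⁻¹)
    (C₁δ : ℝ)
    (hV' : ∀ z : ℂ, |z.im| ≤ δ → deriv V z ≠ 0)
    (hAD : ∀ z : ℂ, |z.im| ≤ δ → ‖deriv (deriv V) z‖ ≤ C₁δ * ‖deriv V z‖) :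
    (∀ p₁ : ℝ, lam₁⁻¹ < p₁ → ∃ Cb > (0 : ℝ), ∃ ζ : ℝ, 0 < ζ ∧ ζ ≤ δ ∧ ∀ j k : ℤ,
      (k = 0 ∨ p₁ < (j : ℝ) / (k : ℝ)) →
      ‖(1 / (2 * Real.pi) : ℂ) * ∫ x in (0 : ℝ)..(2 * Real.pi * β),
          ((deriv v x : ℝ) : ℂ) * Complex.exp (Complex.I * ((↑k * v x - ↑j * x : ℝ) : ℂ))‖ ≤
        Cb * Real.exp (-ζ * |(j : ℝ) - p₁ * (k : ℝ)|)) ∧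
    (∀ p₂ : ℝ, 0 < p₂ → p₂ < lam₂⁻¹ → ∃ Cb > (0 : ℝ), ∃ ζ : ℝ, 0 < ζ ∧ ζ ≤ δ ∧ ∀ j k : ℤ,
      (k = 0 ∨ (j : ℝ) / (k : ℝ) < p₂) →
      ‖(1 / (2 * Real.pi) : ℂ) * ∫ x in (0 : ℝ)..(2 * Real.pi * β),
          ((deriv v x : ℝ) : ℂ) * Complex.exp (Complex.I * ((↑k * v x - ↑j * x : ℝ) : ℂ))‖ ≤
        Cb * Real.exp (-ζ * |(j : ℝ) - p₂ * (k : ℝ)|)) := by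
  have hπ : 0 < Real.pi := Real.pi_pos
  have hβ' : (0:ℝ) < (β:ℝ) := by exact_mod_cast hβ
  set T : ℝ := 2 * Real.pi * β with hTdef
  have hT0 : 0 < T := by positivity
  -- the open strip
  set S : Set ℂ := {z : ℂ | |z.im| < δ} with hSdef
  have hSopen : IsOpen S := by
    have h : S = Complex.im ⁻¹' (Set.Ioo (-δ) δ) := by
      ext z; simp [hSdef, abs_lt]
    rw [h]; exact isOpen_Ioo.preimage Complex.continuous_im
  have hmemS : ∀ x : ℝ, (x:ℂ) ∈ S := fun x => by simp [hSdef, hδ]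
  have hTS : ∀ z ∈ S, z + (T:ℂ) ∈ S := by
    intro z hz; simpa [hSdef] using hz
  have hVS : DifferentiableOn ℂ V S := hVhol.mono fun z hz => le_of_lt (by simpa [hSdef] using hz)
  have hVana : AnalyticOnNhd ℂ V S := hVS.analyticOnNhd hSopen
  have hdVana : AnalyticOnNhd ℂ (deriv V) S := hVana.deriv
  have hdVdiff : DifferentiableOn ℂ (deriv V) S := hdVana.differentiableOn
  have hdVcont : ContinuousOn (deriv V) S := hdVdiff.continuousOn
  -- derivative of V at real points
  have hVd : ∀ x : ℝ, HasDerivAt (fun t : ℝ => V t) (deriv V x) x := fun x =>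
    ((hVS.differentiableAt (hSopen.mem_nhds (hmemS x))).hasDerivAt).comp_ofReal
  have hvd : ∀ x : ℝ, HasDerivAt v ((deriv V x).re) x := by
    intro x
    have h := (hVS.differentiableAt
      (hSopen.mem_nhds (hmemS x))).hasDerivAt.real_of_complex
    simpa [hVv] using h
  have hreal : ∀ x : ℝ, deriv V x = ((deriv v x : ℝ) : ℂ) := by
    intro x
    have h2 : HasDerivAt (fun t : ℝ => ((v t : ℝ) : ℂ)) (((deriv V x).re : ℝ) : ℂ) x :=
      (hvd x).ofReal_comp
    have h1 : HasDerivAt (fun t : ℝ => ((v t : ℝ) : ℂ)) (deriv V x) x := by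
      have := hVd x; simpa [hVv] using this
    rw [(hvd x).deriv]
    exact h1.unique h2
  -- periodicity of V
  have hzero : ∀ x : ℝ, V (↑x + (T:ℂ)) - V ↑x - 2*Real.pi = 0 := by
    intro x
    have h1 : (↑x + (T:ℂ)) = ((x + T : ℝ) : ℂ) := by push_cast; ring
    rw [h1, hVv, hVv, hTdef, hlift x]
    push_cast; ring
  have hVper : ∀ z ∈ S, V (z + (T:ℂ)) = V z + 2*Real.pi := by
    have hFdiff : DifferentiableOn ℂ (fun z => V (z + (T:ℂ)) - V z - 2*Real.pi) S := by
      refine DifferentiableOn.sub_const ?_ _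
      refine DifferentiableOn.sub ?_ hVS
      exact hVS.comp ((differentiable_id.add_const _).differentiableOn) hTS
    have hFana : AnalyticOnNhd ℂ (fun z => V (z + (T:ℂ)) - V z - 2*Real.pi) S :=
      hFdiff.analyticOnNhd hSopen
    have hconv : Convex ℝ S := by
      have h : S = Complex.imLm ⁻¹' (Set.Ioo (-δ) δ) := by
        ext z; simp [hSdef, abs_lt]
      rw [h]; exact (convex_Ioo _ _).linear_preimage _
    have hfreq : ∃ᶠ z in nhdsWithin (0:ℂ) {(0:ℂ)}ᶜ,
        (fun z => V (z + (T:ℂ)) - V z - 2*Real.pi) z = 0 := by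
      have hseq : Filter.Tendsto (fun n : ℕ => ((1/(n+1) : ℝ) : ℂ)) Filter.atTop
          (nhdsWithin (0:ℂ) {(0:ℂ)}ᶜ) := by
        apply tendsto_nhdsWithin_of_tendsto_nhds_of_eventually_within
        · have := Complex.continuous_ofReal.continuousAt (x := (0:ℝ))
          have h2 := this.tendsto.comp tendsto_one_div_add_atTop_nhds_zero_nat
          exact h2
        · refine Filter.Eventually.of_forall fun n => ?_
          simp only [Set.mem_compl_iff, Set.mem_singleton_iff]
          intro h
          have : (1/(n+1:ℝ)) = 0 := by exact_mod_cast h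
          have hn : (0:ℝ) < 1/(n+1:ℝ) := by positivity
          linarith
      exact hseq.frequently (Filter.Eventually.of_forall (fun n => hzero _)).frequently
    have hEq := hFana.eqOn_zero_of_preconnected_of_frequently_eq_zero
      hconv.isPreconnected (hmemS 0) (by simpa using hfreq)
    intro z hz
    have := hEq hz
    simp only [Pi.zero_apply] at this
    linear_combination this
  -- periodicity of deriv V
  have hdVper : ∀ z ∈ S, deriv V (z + (T:ℂ)) = deriv V z := by
    intro z hz
    have h1 : deriv (fun w => V (w + (T:ℂ))) z = deriv V (z + (T:ℂ)) :=
      deriv_comp_add_const V (T:ℂ) z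
    have h2 : (fun w => V (w + (T:ℂ))) =ᶠ[nhds z] (fun w => V w + 2*Real.pi) :=
      Filter.eventuallyEq_of_mem (hSopen.mem_nhds hz) (fun w hw => hVper w hw)
    calc deriv V (z + (T:ℂ)) = deriv (fun w => V (w + (T:ℂ))) z := h1.symm
      _ = deriv (fun w => V w + 2*Real.pi) z := h2.deriv_eq
      _ = deriv V z := by simp
  -- compact rectangle and bounds
  set K : Set ℂ := Set.Icc 0 T ×ℂ Set.Icc (-(δ/2)) (δ/2) with hKdef
  have hKS : K ⊆ S := by
    intro z hz
    rw [Complex.mem_reProdIm] at hz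
    have h2 := hz.2
    simp only [Set.mem_Icc] at h2
    simp only [hSdef, Set.mem_setOf_eq]
    rw [abs_lt]; constructor <;> linarith [h2.1, h2.2]
  have hKc : IsCompact K := by
    apply Metric.isCompact_of_isClosed_isBounded
    · exact isClosed_Icc.reProdIm isClosed_Icc
    · exact (Metric.isBounded_Icc _ _).reProdIm (Metric.isBounded_Icc _ _)
  obtain ⟨M0, hM0⟩ := hKc.exists_bound_of_continuousOn (hdVcont.mono hKS)
  set M : ℝ := max M0 1 with hMdef
  have hM1 : (0:ℝ) < M := lt_of_lt_of_le one_pos (le_max_right _ _)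
  have hMb : ∀ z ∈ K, ‖deriv V z‖ ≤ M := fun z hz => (hM0 z hz).trans (le_max_left _ _)
  have hUC : UniformContinuousOn (deriv V) K :=
    hKc.uniformContinuousOn_of_continuous (hdVcont.mono hKS)
  -- the key estimate
  have key : ∀ p ζ A B : ℝ, 0 < ζ → ζ ≤ δ/2 →
      (∀ x : ℝ, x ∈ Set.Icc 0 T → ∀ s : ℝ, |s| ≤ ζ →
        (deriv V (↑x + (s:ℂ)*Complex.I)).re ∈ Set.Icc A B) →
      ∀ (j k : ℤ) (σ : ℝ), (σ = 1 ∨ σ = -1) →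
      (∀ u ∈ Set.Icc (ζ*A) (ζ*B), σ*(j:ℝ)*ζ - σ*(k:ℝ)*u ≤ -ζ*|(j:ℝ) - p*(k:ℝ)|) →
      ‖(1 / (2 * Real.pi) : ℂ) * ∫ x in (0 : ℝ)..T,
          ((deriv v x : ℝ) : ℂ) * Complex.exp (Complex.I * ((↑k * v x - ↑j * x : ℝ) : ℂ))‖ ≤
        ((β:ℝ)*M) * Real.exp (-ζ * |(j:ℝ) - p*(k:ℝ)|) := by
    intro p ζ A B hζ hζδ2 hAB j k σ hσ hE
    have hσ2 : σ * σ = 1 := by rcases hσ with h|h <;> simp [h]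
    have hσabs : |σ| = 1 := by rcases hσ with h|h <;> simp [h]
    set g : ℂ → ℂ := fun z => deriv V z * Complex.exp (Complex.I * ((k:ℂ) * V z - (j:ℂ) * z))
      with hgdef
    -- the integrand is g on the reals
    have hAeq : Set.EqOn (fun x : ℝ => ((deriv v x : ℝ) : ℂ) *
        Complex.exp (Complex.I * ((↑k * v x - ↑j * x : ℝ) : ℂ))) (fun x : ℝ => g ↑x)
        (Set.uIcc (0:ℝ) T) := by
      intro x _
      simp only [hgdef]
      rw [← hreal x]
      congr 2
      rw [hVv x]
      push_cast
      ring
    -- g is differentiable on S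
    have hgd : DifferentiableOn ℂ g S := by
      apply hdVdiff.mul
      apply DifferentiableOn.cexp
      exact DifferentiableOn.const_mul ((hVS.const_mul _).sub
        (differentiableOn_id.const_mul _)) _
    -- periodicity of g
    have hgper : ∀ z ∈ S, g (z + (T:ℂ)) = g z := by
      intro z hz
      simp only [hgdef]
      rw [hdVper z hz, hVper z hz]
      congr 1
      have h : Complex.I * ((k:ℂ)*(V z + 2*Real.pi) - (j:ℂ)*(z + (T:ℂ)))
          = Complex.I*((k:ℂ)*V z - (j:ℂ)*z) + ((k - j*(β:ℤ) : ℤ):ℂ) * (2*(Real.pi:ℂ)*Complex.I) := by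
        rw [hTdef]; push_cast; ring
      rw [h, Complex.exp_add, Complex.exp_int_mul_two_pi_mul_I, mul_one]
    have hσζ1 : σ*ζ ≤ ζ := by rcases hσ with h|h <;> rw [h] <;> linarith
    have hσζ2 : -ζ ≤ σ*ζ := by rcases hσ with h|h <;> rw [h] <;> linarith
    -- contour shift
    have hvert : ∀ y : ℝ, |y| ≤ ζ → g ((T:ℂ) + (y:ℂ)*Complex.I) = g ((y:ℂ)*Complex.I) := by
      intro y hy
      have hyS : ((y:ℂ)*Complex.I) ∈ S := by
        simp only [hSdef, Set.mem_setOf_eq]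
        simp only [Complex.mul_I_im, Complex.ofReal_re]
        calc |y| ≤ ζ := hy
          _ < δ := by linarith
      have := hgper _ hyS
      rw [add_comm] at this
      simpa using this
    have hrectsub : (Set.uIcc (0:ℝ) T ×ℂ Set.uIcc (0:ℝ) (σ*ζ)) ⊆ S := by
      intro z hz
      rw [Complex.mem_reProdIm] at hz
      have h2 := hz.2
      rw [Set.mem_uIcc] at h2
      simp only [hSdef, Set.mem_setOf_eq]
      rw [abs_lt]
      rcases h2 with h2|h2 <;> constructor <;> linarith [h2.1, h2.2]
    have hshift : (∫ x in (0:ℝ)..T, g ↑x) = ∫ x in (0:ℝ)..T, g (↑x + ((σ*ζ:ℝ):ℂ)*Complex.I) := by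
      have hw : ((T:ℂ) + ((σ*ζ:ℝ):ℂ)*Complex.I).re = T := by simp
      have hwim : ((T:ℂ) + ((σ*ζ:ℝ):ℂ)*Complex.I).im = σ*ζ := by simp
      have hrect := Complex.integral_boundary_rect_eq_zero_of_differentiableOn g 0
        ((T:ℂ) + ((σ*ζ:ℝ):ℂ)*Complex.I) (by
          rw [hw, hwim]
          simp only [Complex.zero_re, Complex.zero_im]
          exact hgd.mono hrectsub)
      rw [hw, hwim] at hrect
      simp only [Complex.zero_re, Complex.zero_im, Complex.ofReal_zero, zero_mul, add_zero,
        zero_add, smul_eq_mul] at hrect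
      have hveq : (∫ y in (0:ℝ)..(σ*ζ), g ((T:ℂ) + (y:ℂ)*Complex.I))
          = ∫ y in (0:ℝ)..(σ*ζ), g ((y:ℂ)*Complex.I) := by
        apply intervalIntegral.integral_congr
        intro y hy
        apply hvert
        rw [Set.mem_uIcc] at hy
        rcases hy with hy|hy <;> rw [abs_le] <;> constructor <;> linarith [hy.1, hy.2]
      rw [hveq] at hrect
      linear_combination hrect
    -- pointwise bound on the shifted line
    have hbound : ∀ x ∈ Set.uIoc (0:ℝ) T, ‖g (↑x + ((σ*ζ:ℝ):ℂ)*Complex.I)‖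
        ≤ M * Real.exp (-ζ * |(j:ℝ) - p*(k:ℝ)|) := by
      intro x hx
      have hx' : x ∈ Set.Icc (0:ℝ) T := by
        rw [Set.uIoc_of_le hT0.le] at hx; exact ⟨hx.1.le, hx.2⟩
      set z : ℂ := ↑x + ((σ*ζ:ℝ):ℂ)*Complex.I with hzdef
      have hzre : z.re = x := by simp [hzdef]
      have hzim : z.im = σ*ζ := by simp [hzdef]
      have hzK : z ∈ K := by
        rw [Complex.mem_reProdIm, hzre, hzim]
        exact ⟨hx', by constructor <;> linarith⟩
      -- the vertical path derivative
      have hpath : ∀ s : ℝ, s ∈ Set.uIcc (0:ℝ) ζ →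
          HasDerivAt (fun s : ℝ => σ*(V (↑x + ((σ*s:ℝ):ℂ)*Complex.I)).im)
            ((deriv V (↑x + ((σ*s:ℝ):ℂ)*Complex.I)).re) s := by
        intro s hs
        rw [Set.uIcc_of_le hζ.le] at hs
        have hsζ : |σ*s| ≤ ζ := by
          rw [abs_mul, hσabs, one_mul, _root_.abs_of_nonneg hs.1]; exact hs.2
        have hzS : (↑x + ((σ*s:ℝ):ℂ)*Complex.I) ∈ S := by
          simp only [hSdef, Set.mem_setOf_eq]
          have him : (↑x + ((σ*s:ℝ):ℂ)*Complex.I).im = σ*s := by simp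
          rw [him]
          calc |σ*s| ≤ ζ := hsζ
            _ < δ := by linarith
        have hV1 : HasDerivAt V (deriv V (↑x + ((σ*s:ℝ):ℂ)*Complex.I))
            (↑x + ((σ*s:ℝ):ℂ)*Complex.I) :=
          (hVS.differentiableAt (hSopen.mem_nhds hzS)).hasDerivAt
        have hγ : HasDerivAt (fun s : ℝ => (↑x + ((σ*s:ℝ):ℂ)*Complex.I : ℂ))
            ((σ:ℂ)*Complex.I) s := by
          have h00 : HasDerivAt (fun s : ℝ => σ*s) σ s := by
            simpa using (hasDerivAt_id s).const_mul σ
          have h0 : HasDerivAt (fun s : ℝ => ((σ*s : ℝ) : ℂ)) ((σ:ℝ):ℂ) s := h00.ofReal_comp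
          have h1 := (h0.mul_const Complex.I).const_add (↑x : ℂ)
          simpa using h1
        have hcomp : HasDerivAt (fun s : ℝ => V (↑x + ((σ*s:ℝ):ℂ)*Complex.I))
            (((σ:ℂ)*Complex.I) • deriv V (↑x + ((σ*s:ℝ):ℂ)*Complex.I)) s :=
          HasDerivAt.scomp s hV1 hγ
        have hIm : HasDerivAt (fun s : ℝ => (V (↑x + ((σ*s:ℝ):ℂ)*Complex.I)).im)
            ((((σ:ℂ)*Complex.I) * deriv V (↑x + ((σ*s:ℝ):ℂ)*Complex.I)).im) s := by
          have hF := Complex.imCLM.hasFDerivAt.comp s hcomp.hasFDerivAt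
          have h2 := hF.hasDerivAt
          simpa [Function.comp_def] using h2
        have hfinal := hIm.const_mul σ
        refine hfinal.congr_deriv ?_
        have hc : (((σ:ℂ)*Complex.I) * deriv V (↑x + ((σ*s:ℝ):ℂ)*Complex.I)).im
            = σ * (deriv V (↑x + ((σ*s:ℝ):ℂ)*Complex.I)).re := by
          simp [Complex.mul_im, Complex.mul_re]
        rw [hc]
        linear_combination (deriv V (↑x + ((σ*s:ℝ):ℂ)*Complex.I)).re * hσ2
      -- FTC along the vertical segment
      have hcontD : ContinuousOn (fun s : ℝ => (deriv V (↑x + ((σ*s:ℝ):ℂ)*Complex.I)).re)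
          (Set.uIcc (0:ℝ) ζ) := by
        apply Complex.continuous_re.comp_continuousOn
        apply hdVcont.comp
        · refine Continuous.continuousOn ?_
          exact continuous_const.add ((Complex.continuous_ofReal.comp
            (continuous_const.mul continuous_id)).mul continuous_const)
        · intro s hs
          rw [Set.uIcc_of_le hζ.le] at hs
          simp only [hSdef, Set.mem_setOf_eq]
          have him : (↑x + ((σ*s:ℝ):ℂ)*Complex.I).im = σ*s := by simp
          rw [him]
          have : |σ*s| ≤ ζ := by
            rw [abs_mul, hσabs, one_mul, _root_.abs_of_nonneg hs.1]; exact hs.2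
          calc |σ*s| ≤ ζ := this
            _ < δ := by linarith
      have hInt := intervalIntegral.integral_eq_sub_of_hasDerivAt hpath
        hcontD.intervalIntegrable
      have h00 : σ*(V (↑x + ((σ*(0:ℝ):ℝ):ℂ)*Complex.I)).im = 0 := by
        simp [hVv x]
      -- bounds for u
      have huB : σ * (V z).im ∈ Set.Icc (ζ*A) (ζ*B) := by
        have hle : ∀ s ∈ Set.Icc (0:ℝ) ζ,
            (deriv V (↑x + ((σ*s:ℝ):ℂ)*Complex.I)).re ≤ B := by
          intro s hs
          have : |σ*s| ≤ ζ := by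
            rw [abs_mul, hσabs, one_mul, _root_.abs_of_nonneg hs.1]; exact hs.2
          exact (hAB x hx' (σ*s) this).2
        have hge : ∀ s ∈ Set.Icc (0:ℝ) ζ,
            A ≤ (deriv V (↑x + ((σ*s:ℝ):ℂ)*Complex.I)).re := by
          intro s hs
          have : |σ*s| ≤ ζ := by
            rw [abs_mul, hσabs, one_mul, _root_.abs_of_nonneg hs.1]; exact hs.2
          exact (hAB x hx' (σ*s) this).1
        have hII : IntervalIntegrable (fun s : ℝ => (deriv V (↑x + ((σ*s:ℝ):ℂ)*Complex.I)).re)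
            MeasureTheory.volume 0 ζ := hcontD.intervalIntegrable
        have hi1 : (∫ s in (0:ℝ)..ζ, (deriv V (↑x + ((σ*s:ℝ):ℂ)*Complex.I)).re)
            ≤ ∫ _s in (0:ℝ)..ζ, B :=
          intervalIntegral.integral_mono_on hζ.le hII intervalIntegrable_const hle
        have hi2 : (∫ _s in (0:ℝ)..ζ, A)
            ≤ ∫ s in (0:ℝ)..ζ, (deriv V (↑x + ((σ*s:ℝ):ℂ)*Complex.I)).re :=
          intervalIntegral.integral_mono_on hζ.le intervalIntegrable_const hII hge
        rw [intervalIntegral.integral_const] at hi1 hi2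
        have hz2 : σ * (V z).im = ∫ s in (0:ℝ)..ζ, (deriv V (↑x + ((σ*s:ℝ):ℂ)*Complex.I)).re := by
          rw [hInt, h00, sub_zero, hzdef]
        rw [hz2]
        constructor
        · calc ζ*A = (ζ - 0) • A := by rw [smul_eq_mul, sub_zero]
            _ ≤ _ := hi2
        · calc _ ≤ (ζ - 0) • B := hi1
            _ = ζ*B := by rw [smul_eq_mul, sub_zero]
      -- norm of g at z
      have hgnorm : ‖g z‖ = ‖deriv V z‖
          * Real.exp ((Complex.I * ((k:ℂ)*V z - (j:ℂ)*z)).re) := by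
        simp only [hgdef]
        rw [norm_mul, Complex.norm_exp]
      have hre : (Complex.I * ((k:ℂ)*V z - (j:ℂ)*z)).re
          = σ*(j:ℝ)*ζ - σ*(k:ℝ)*(σ*(V z).im) := by
        simp [Complex.mul_re, Complex.mul_im, Complex.I_re, Complex.I_im, hzim]
        linear_combination ((k:ℝ)*(V z).im) * hσ2
      rw [hgnorm, hre]
      exact mul_le_mul (hMb z hzK) (Real.exp_le_exp.mpr (hE _ huB))
        (Real.exp_pos _).le hM1.le
    -- final assembly
    have hnormint : ‖∫ x in (0:ℝ)..T, g (↑x + ((σ*ζ:ℝ):ℂ)*Complex.I)‖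
        ≤ M * Real.exp (-ζ*|(j:ℝ) - p*(k:ℝ)|) * |T - 0| :=
      intervalIntegral.norm_integral_le_of_norm_le_const hbound
    have hintrw : (∫ x in (0:ℝ)..T,
        ((deriv v x : ℝ):ℂ) * Complex.exp (Complex.I * ((↑k * v x - ↑j * x : ℝ) : ℂ)))
        = ∫ x in (0:ℝ)..T, g ↑x := by
      exact intervalIntegral.integral_congr hAeq
    rw [norm_mul, hintrw, hshift]
    have hnc : ‖(1 / (2 * Real.pi) : ℂ)‖ = 1/(2*Real.pi) := by
      have hcast : ((1 / (2 * Real.pi) : ℝ) : ℂ) = (1 / (2 * Real.pi) : ℂ) := by push_cast; ring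
      rw [← hcast, Complex.norm_real, Real.norm_eq_abs, abs_of_pos (by positivity)]
    rw [hnc]
    calc 1/(2*Real.pi) * ‖∫ x in (0:ℝ)..T, g (↑x + ((σ*ζ:ℝ):ℂ)*Complex.I)‖
        ≤ 1/(2*Real.pi) * (M * Real.exp (-ζ*|(j:ℝ) - p*(k:ℝ)|) * T) := by
          apply mul_le_mul_of_nonneg_left ?_ (by positivity)
          rw [sub_zero, abs_of_pos hT0] at hnormint
          exact hnormint
      _ = (β:ℝ)*M * Real.exp (-ζ * |(j:ℝ) - p*(k:ℝ)|) := by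
          rw [hTdef]; field_simp
  -- uniform closeness of Re (deriv V) to deriv v near the real axis
  have hABgen : ∀ ε : ℝ, 0 < ε → ∃ ζ : ℝ, 0 < ζ ∧ ζ ≤ δ/2 ∧ ∀ x ∈ Set.Icc (0:ℝ) T,
      ∀ s : ℝ, |s| ≤ ζ →
      (deriv V (↑x + (s:ℂ)*Complex.I)).re ∈ Set.Icc (lam₂⁻¹ - ε) (lam₁⁻¹ + ε) := by
    intro ε hε0
    obtain ⟨ζ0, hζ00, hζ0⟩ := Metric.uniformContinuousOn_iff.mp hUC ε hε0
    refine ⟨min (ζ0/2) (δ/2), lt_min (by linarith) (by linarith), min_le_right _ _, ?_⟩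
    intro x hx s hs
    have hsδ : |s| ≤ δ/2 := le_trans hs (min_le_right _ _)
    have hsζ0 : |s| < ζ0 := lt_of_le_of_lt (le_trans hs (min_le_left _ _)) (by linarith)
    have hzK : (↑x + (s:ℂ)*Complex.I) ∈ K := by
      rw [Complex.mem_reProdIm]
      constructor
      · simpa using hx
      · have him : ((x:ℂ) + (s:ℂ)*Complex.I).im = s := by simp
        rw [him]
        rw [abs_le] at hsδ
        exact ⟨by linarith [hsδ.1], hsδ.2⟩
    have hxK : ((x:ℂ)) ∈ K := by
      rw [Complex.mem_reProdIm]
      constructor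
      · simpa using hx
      · simp only [Complex.ofReal_im, Set.mem_Icc]
        constructor <;> linarith
    have hdist : dist (↑x + (s:ℂ)*Complex.I) ((x:ℂ)) < ζ0 := by
      rw [Complex.dist_eq]
      have hsub : ((x:ℂ) + (s:ℂ)*Complex.I) - (x:ℂ) = (s:ℂ)*Complex.I := by ring
      rw [hsub]
      rw [norm_mul, Complex.norm_real, Complex.norm_I, mul_one, Real.norm_eq_abs]
      exact hsζ0
    have hd := hζ0 _ hzK _ hxK hdist
    rw [Complex.dist_eq] at hd
    have hre : |(deriv V (↑x + (s:ℂ)*Complex.I)).re - deriv v x| ≤ ε := by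
      have h1 : (deriv V (↑x + (s:ℂ)*Complex.I)).re - deriv v x
          = (deriv V (↑x + (s:ℂ)*Complex.I) - deriv V ↑x).re := by
        rw [Complex.sub_re, hreal x, Complex.ofReal_re]
      rw [h1]
      calc |(deriv V (↑x + (s:ℂ)*Complex.I) - deriv V ↑x).re|
          ≤ ‖deriv V (↑x + (s:ℂ)*Complex.I) - deriv V ↑x‖ :=
            Complex.abs_re_le_norm _
        _ = ‖deriv V (↑x + (s:ℂ)*Complex.I) - deriv V ↑x‖ := rfl
        _ ≤ ε := hd.le
    rw [abs_le] at hre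
    exact ⟨by linarith [hd₂ x, hre.1], by linarith [hd₁ x, hre.2]⟩
  constructor
  · -- part (i)
    intro p₁ hp₁
    have hε0 : 0 < p₁ - lam₁⁻¹ := sub_pos.mpr hp₁
    obtain ⟨ζ, hζ, hζδ2, hAB⟩ := hABgen (p₁ - lam₁⁻¹) hε0
    refine ⟨(β:ℝ)*M, by positivity, ζ, hζ, by linarith, ?_⟩
    intro j k hjk
    by_cases hc : p₁ * (k:ℝ) ≤ (j:ℝ)
    · refine key p₁ ζ _ _ hζ hζδ2 hAB j k (-1) (Or.inr rfl) ?_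
      intro u hu
      rw [_root_.abs_of_nonneg (by linarith : (0:ℝ) ≤ (j:ℝ) - p₁*(k:ℝ))]
      have hBp : ζ*(lam₁⁻¹ + (p₁ - lam₁⁻¹)) = ζ*p₁ := by ring
      rw [hBp] at hu
      rcases lt_trichotomy ((k:ℝ)) 0 with hk|hk|hk
      · exfalso
        have hk0 : k ≠ 0 := by
          intro h; rw [h] at hk; simp at hk
        rcases hjk with h|h
        · exact hk0 h
        · have := (lt_div_iff_of_neg hk).mp h
          linarith
      · have hku : (k:ℝ)*u = 0 := by rw [hk, zero_mul]
        have hpk : p₁*(k:ℝ) = 0 := by rw [hk, mul_zero]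
        nlinarith [hku, hpk]
      · nlinarith [mul_le_mul_of_nonneg_left hu.2 hk.le]
    · push_neg at hc
      refine key p₁ ζ _ _ hζ hζδ2 hAB j k 1 (Or.inl rfl) ?_
      intro u hu
      rw [_root_.abs_of_neg (by linarith : (j:ℝ) - p₁*(k:ℝ) < 0)]
      have hBp : ζ*(lam₁⁻¹ + (p₁ - lam₁⁻¹)) = ζ*p₁ := by ring
      rw [hBp] at hu
      rcases lt_trichotomy ((k:ℝ)) 0 with hk|hk|hk
      · nlinarith [mul_le_mul_of_nonpos_left hu.2 hk.le]
      · have hku : (k:ℝ)*u = 0 := by rw [hk, zero_mul]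
        have hpk : p₁*(k:ℝ) = 0 := by rw [hk, mul_zero]
        nlinarith [hku, hpk]
      · exfalso
        have hk0 : k ≠ 0 := by
          intro h; rw [h] at hk; simp at hk
        rcases hjk with h|h
        · exact hk0 h
        · have := (lt_div_iff₀ hk).mp h
          linarith
  · -- part (ii)
    intro p₂ hp₂0 hp₂
    have hε0 : 0 < lam₂⁻¹ - p₂ := sub_pos.mpr hp₂
    obtain ⟨ζ, hζ, hζδ2, hAB⟩ := hABgen (lam₂⁻¹ - p₂) hε0
    refine ⟨(β:ℝ)*M, by positivity, ζ, hζ, by linarith, ?_⟩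
    intro j k hjk
    by_cases hc : p₂ * (k:ℝ) ≤ (j:ℝ)
    · refine key p₂ ζ _ _ hζ hζδ2 hAB j k (-1) (Or.inr rfl) ?_
      intro u hu
      rw [_root_.abs_of_nonneg (by linarith : (0:ℝ) ≤ (j:ℝ) - p₂*(k:ℝ))]
      have hAp : ζ*(lam₂⁻¹ - (lam₂⁻¹ - p₂)) = ζ*p₂ := by ring
      rw [hAp] at hu
      rcases lt_trichotomy ((k:ℝ)) 0 with hk|hk|hk
      · nlinarith [mul_le_mul_of_nonpos_left hu.1 hk.le]
      · have hku : (k:ℝ)*u = 0 := by rw [hk, zero_mul]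
        have hpk : p₂*(k:ℝ) = 0 := by rw [hk, mul_zero]
        nlinarith [hku, hpk]
      · exfalso
        have hk0 : k ≠ 0 := by
          intro h; rw [h] at hk; simp at hk
        rcases hjk with h|h
        · exact hk0 h
        · have := (div_lt_iff₀ hk).mp h
          linarith
    · push_neg at hc
      refine key p₂ ζ _ _ hζ hζδ2 hAB j k 1 (Or.inl rfl) ?_
      intro u hu
      rw [_root_.abs_of_neg (by linarith : (j:ℝ) - p₂*(k:ℝ) < 0)]
      have hAp : ζ*(lam₂⁻¹ - (lam₂⁻¹ - p₂)) = ζ*p₂ := by ring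
      rw [hAp] at hu
      rcases lt_trichotomy ((k:ℝ)) 0 with hk|hk|hk
      · exfalso
        have hk0 : k ≠ 0 := by
          intro h; rw [h] at hk; simp at hk
        rcases hjk with h|h
        · exact hk0 h
        · have := (div_lt_iff_of_neg hk).mp h
          linarith
      · have hku : (k:ℝ)*u = 0 := by rw [hk, zero_mul]
        have hpk : p₂*(k:ℝ) = 0 := by rw [hk, mul_zero]
        nlinarith [hku, hpk]
      · nlinarith [mul_le_mul_of_nonneg_left hu.1 hk.le]
end

section
/- Let I be a countable index set, let (O_ι)_{ι∈I} be pairwise disjoint nonempty open subintervals of (−1,1), and for each ι let v_ι : [−1,1] → [−1,1] be a C² strictly monotone map with v_ι([−1,1]) equal to the closure of O_ι and with |v_ι''(x)/v_ι'(x)| ≤ C for all x ∈ [−1,1]. Let g : ⋃_ι O_ι → (−1,1) be the full-branch Markov map whose restriction to O_ι is the inverse of v_ι, and suppose |g'(x)| ≥ μ > 0 for all x ∈ ⋃_ι O_ι. Then for every x ∈ ⋃_ι O_ι: √((1 − x²)/(1 − g(x)²)) · |g'(x)| ≥ √(e^{−2C} μ / 2). -/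
open Set Filter

private lemma deriv_nonneg_of_monotoneOn {f : ℝ → ℝ} {s : Set ℝ} {t d : ℝ}
    (hs : s ∈ nhds t) (hf : MonotoneOn f s) (hd : HasDerivAt f d t) : 0 ≤ d := by
  have ht : t ∈ s := mem_of_mem_nhds hs
  have htend : Tendsto (slope f t) (nhdsWithin t (Set.Ioi t)) (nhds d) :=
    (hasDerivAt_iff_tendsto_slope.1 hd).mono_left
      (nhdsWithin_mono t (fun z hz => ne_of_gt hz))
  refine ge_of_tendsto htend ?_
  filter_upwards [self_mem_nhdsWithin, mem_nhdsWithin_of_mem_nhds hs] with z hz hzs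
  rw [slope_def_field]
  have h1 : f t ≤ f z := hf ht hzs (le_of_lt hz)
  have h2 : (0:ℝ) < z - t := sub_pos.2 hz
  exact div_nonneg (by linarith) h2.le

private lemma key_mono {V : ℝ → ℝ} {C y : ℝ}
    (hreg : ContDiffOn ℝ 2 V (Set.Icc (-1) 1))
    (hmono : MonotoneOn V (Set.Icc (-1:ℝ) 1))
    (hC0 : 0 ≤ C)
    (hC : ∀ t ∈ Set.Icc (-1:ℝ) 1, |iteratedDerivWithin 2 V (Set.Icc (-1) 1) t| ≤
        C * |derivWithin V (Set.Icc (-1) 1) t|)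
    (hy : y ∈ Set.Ioo (-1:ℝ) 1) :
    Real.exp (-2*C) * derivWithin V (Set.Icc (-1) 1) y * (1 - y) ≤ V 1 - V y ∧
    Real.exp (-2*C) * derivWithin V (Set.Icc (-1) 1) y * (1 + y) ≤ V y - V (-1) := by
  have h11 : (-1:ℝ) < 1 := by norm_num
  have hUD : UniqueDiffOn ℝ (Set.Icc (-1:ℝ) 1) := uniqueDiffOn_Icc h11
  set S : Set ℝ := Set.Icc (-1:ℝ) 1 with hS
  set V' : ℝ → ℝ := derivWithin V S with hV'
  set V'' : ℝ → ℝ := iteratedDerivWithin 2 V S with hV''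
  have hsub : Set.Ioo (-1:ℝ) 1 ⊆ S := Set.Ioo_subset_Icc_self
  have hmemN : ∀ t ∈ Set.Ioo (-1:ℝ) 1, S ∈ nhds t := fun t ht => Icc_mem_nhds ht.1 ht.2
  have hV'cd : ContDiffOn ℝ 1 V' S := hreg.derivWithin hUD (by norm_num)
  have hVd : ∀ t ∈ Set.Ioo (-1:ℝ) 1, HasDerivAt V (V' t) t := by
    intro t ht
    have h2 : DifferentiableAt ℝ V t :=
      ((hreg.differentiableOn (by norm_num)) t (hsub ht)).differentiableAt (hmemN t ht)
    have h3 : V' t = deriv V t := derivWithin_of_mem_nhds (hmemN t ht)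
    rw [h3]; exact h2.hasDerivAt
  have hV'd : ∀ t ∈ Set.Ioo (-1:ℝ) 1, HasDerivAt V' (V'' t) t := by
    intro t ht
    have h2 : DifferentiableAt ℝ V' t :=
      ((hV'cd.differentiableOn (by norm_num)) t (hsub ht)).differentiableAt (hmemN t ht)
    have e1 : V'' t = derivWithin (iteratedDerivWithin 1 V S) S t :=
      congrFun iteratedDerivWithin_succ t
    have e2 : Set.EqOn (iteratedDerivWithin 1 V S) V' S := fun z hz =>
      congrFun iteratedDerivWithin_one z
    have e3 : derivWithin (iteratedDerivWithin 1 V S) S t = derivWithin V' S t :=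
      derivWithin_congr e2 (e2 (hsub ht))
    have e4 : derivWithin V' S t = deriv V' t := derivWithin_of_mem_nhds (hmemN t ht)
    rw [e1, e3, e4]; exact h2.hasDerivAt
  have hV'nonneg : ∀ t ∈ Set.Ioo (-1:ℝ) 1, 0 ≤ V' t := fun t ht =>
    deriv_nonneg_of_monotoneOn (hmemN t ht) hmono (hVd t ht)
  have hbound : ∀ t ∈ Set.Ioo (-1:ℝ) 1, |V'' t| ≤ C * V' t := by
    intro t ht
    have h := hC t (hsub ht)
    rwa [abs_of_nonneg (hV'nonneg t ht)] at h
  have hcont : ContinuousOn V' S := hV'cd.continuousOn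
  -- monotone auxiliary function V' t * exp (C t)
  have hψ : MonotoneOn (fun t => V' t * Real.exp (C * t)) S := by
    refine monotoneOn_of_hasDerivWithinAt_nonneg (convex_Icc _ _)
      (hcont.mul (Real.continuous_exp.comp (continuous_const.mul continuous_id)).continuousOn)
      (f' := fun t => V'' t * Real.exp (C * t) + V' t * (Real.exp (C * t) * (C * 1))) ?_ ?_
    · intro t ht
      rw [interior_Icc] at ht
      exact ((hV'd t ht).mul (((hasDerivAt_id t).const_mul C).exp)).hasDerivWithinAt
    · intro t ht
      rw [interior_Icc] at ht
      have h1 := hbound t ht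
      have h2 := hV'nonneg t ht
      have h3 : -(C * V' t) ≤ V'' t := (abs_le.1 h1).1
      have h4 : (0:ℝ) < Real.exp (C * t) := Real.exp_pos _
      show 0 ≤ V'' t * Real.exp (C * t) + V' t * (Real.exp (C * t) * (C * 1))
      nlinarith [mul_le_mul_of_nonneg_right h3 h4.le]
  -- antitone auxiliary function V' t * exp (-(C t))
  have hχ : AntitoneOn (fun t => V' t * Real.exp (-(C * t))) S := by
    refine antitoneOn_of_hasDerivWithinAt_nonpos (convex_Icc _ _)
      (hcont.mul (Real.continuous_exp.comp (continuous_const.mul continuous_id).neg).continuousOn)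
      (f' := fun t => V'' t * Real.exp (-(C * t)) + V' t * (Real.exp (-(C * t)) * (-(C * 1)))) ?_ ?_
    · intro t ht
      rw [interior_Icc] at ht
      exact ((hV'd t ht).mul ((((hasDerivAt_id t).const_mul C)).neg.exp)).hasDerivWithinAt
    · intro t ht
      rw [interior_Icc] at ht
      have h1 := hbound t ht
      have h2 := hV'nonneg t ht
      have h3 : V'' t ≤ C * V' t := (abs_le.1 h1).2
      have h4 : (0:ℝ) < Real.exp (-(C * t)) := Real.exp_pos _
      show V'' t * Real.exp (-(C * t)) + V' t * (Real.exp (-(C * t)) * (-(C * 1))) ≤ 0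
      nlinarith [mul_le_mul_of_nonneg_right h3 h4.le]
  have hys : y ∈ S := hsub hy
  have hV'y : 0 ≤ V' y := hV'nonneg y hy
  -- lower bound for V' on [y,1]
  have hlow : ∀ t ∈ Set.Icc y 1, Real.exp (-2*C) * V' y ≤ V' t := by
    intro t ht
    have hts : t ∈ S := ⟨le_trans hy.1.le ht.1, ht.2⟩
    have h1 : V' y * Real.exp (C * y) ≤ V' t * Real.exp (C * t) := hψ hys hts ht.1
    have h2 : Real.exp (-2*C) ≤ Real.exp (C * (y - t)) := by
      apply Real.exp_le_exp.2
      nlinarith [mul_nonneg hC0 (show (0:ℝ) ≤ y - t + 2 by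
        have := ht.2; have := hy.1; linarith)]
    have h4 := mul_le_mul_of_nonneg_right h1 (Real.exp_pos (-(C * t))).le
    rw [mul_assoc, mul_assoc, ← Real.exp_add, ← Real.exp_add] at h4
    have e1 : C * y + -(C * t) = C * (y - t) := by ring
    have e2 : C * t + -(C * t) = 0 := by ring
    rw [e1, e2, Real.exp_zero, mul_one] at h4
    calc Real.exp (-2*C) * V' y ≤ Real.exp (C * (y - t)) * V' y :=
          mul_le_mul_of_nonneg_right h2 hV'y
      _ = V' y * Real.exp (C * (y - t)) := mul_comm _ _
      _ ≤ V' t := h4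
  -- lower bound for V' on [-1,y]
  have hhigh : ∀ t ∈ Set.Icc (-1:ℝ) y, Real.exp (-2*C) * V' y ≤ V' t := by
    intro t ht
    have hts : t ∈ S := ⟨ht.1, le_trans ht.2 hy.2.le⟩
    have h1 : V' y * Real.exp (-(C * y)) ≤ V' t * Real.exp (-(C * t)) := hχ hts hys ht.2
    have h2 : Real.exp (-2*C) ≤ Real.exp (C * (t - y)) := by
      apply Real.exp_le_exp.2
      nlinarith [mul_nonneg hC0 (show (0:ℝ) ≤ t - y + 2 by
        have := ht.1; have := hy.2; linarith)]
    have h4 := mul_le_mul_of_nonneg_right h1 (Real.exp_pos (C * t)).le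
    rw [mul_assoc, mul_assoc, ← Real.exp_add, ← Real.exp_add] at h4
    have e1 : -(C * y) + C * t = C * (t - y) := by ring
    have e2 : -(C * t) + C * t = 0 := by ring
    rw [e1, e2, Real.exp_zero, mul_one] at h4
    calc Real.exp (-2*C) * V' y ≤ Real.exp (C * (t - y)) * V' y :=
          mul_le_mul_of_nonneg_right h2 hV'y
      _ = V' y * Real.exp (C * (t - y)) := mul_comm _ _
      _ ≤ V' t := h4
  constructor
  · -- on [y, 1]
    have hφ : MonotoneOn (fun t => V t - Real.exp (-2*C) * V' y * t) (Set.Icc y 1) := by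
      refine monotoneOn_of_hasDerivWithinAt_nonneg (convex_Icc _ _)
        ((hreg.continuousOn.mono (Icc_subset_Icc hy.1.le le_rfl)).sub
          (continuous_const.mul continuous_id).continuousOn)
        (f' := fun t => V' t - Real.exp (-2*C) * V' y * 1) ?_ ?_
      · intro t ht
        rw [interior_Icc] at ht
        have htI : t ∈ Set.Ioo (-1:ℝ) 1 := ⟨hy.1.trans ht.1, ht.2⟩
        exact ((hVd t htI).sub ((hasDerivAt_id t).const_mul _)).hasDerivWithinAt
      · intro t ht
        rw [interior_Icc] at ht
        have := hlow t ⟨ht.1.le, ht.2.le⟩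
        show 0 ≤ V' t - Real.exp (-2*C) * V' y * 1
        rw [mul_one]
        linarith
    have h := hφ ⟨le_rfl, hy.2.le⟩ ⟨hy.2.le, le_rfl⟩ hy.2.le
    have hexpand : Real.exp (-2*C) * V' y * (1 - y)
        = Real.exp (-2*C) * V' y * 1 - Real.exp (-2*C) * V' y * y := by ring
    simp only [] at h
    linarith [h, hexpand.le, hexpand.ge]
  · -- on [-1, y]
    have hφ : MonotoneOn (fun t => V t - Real.exp (-2*C) * V' y * t) (Set.Icc (-1:ℝ) y) := by
      refine monotoneOn_of_hasDerivWithinAt_nonneg (convex_Icc _ _)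
        ((hreg.continuousOn.mono (Icc_subset_Icc le_rfl hy.2.le)).sub
          (continuous_const.mul continuous_id).continuousOn)
        (f' := fun t => V' t - Real.exp (-2*C) * V' y * 1) ?_ ?_
      · intro t ht
        rw [interior_Icc] at ht
        have htI : t ∈ Set.Ioo (-1:ℝ) 1 := ⟨ht.1, ht.2.trans hy.2⟩
        exact ((hVd t htI).sub ((hasDerivAt_id t).const_mul _)).hasDerivWithinAt
      · intro t ht
        rw [interior_Icc] at ht
        have := hhigh t ⟨ht.1.le, ht.2.le⟩
        show 0 ≤ V' t - Real.exp (-2*C) * V' y * 1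
        rw [mul_one]
        linarith
    have h := hφ ⟨le_rfl, hy.1.le⟩ ⟨hy.1.le, le_rfl⟩ hy.1.le
    have hexpand : Real.exp (-2*C) * V' y * (1 + y)
        = Real.exp (-2*C) * V' y * y - Real.exp (-2*C) * V' y * (-1) := by ring
    simp only [] at h
    linarith [h, hexpand.le, hexpand.ge]

/-- A full-branch Markov map `g` of `[-1,1]` with `C²` inverse branches
`v_ι` (branch domains `O_ι = (a ι, b ι)`), distortion bound `|v_ι''/v_ι'| ≤ C`, and uniform
expansion `|g'| ≥ μ > 0` satisfies the C-expansion lower bound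
`√((1-x²)/(1-g(x)²)) |g'(x)| ≥ √(e^{-2C} μ / 2)` on its domain. -/
theorem expansion_implies_C_expansion
    {I : Type} [Countable I]
    (a b : I → ℝ) (hab : ∀ i, a i < b i) (ha : ∀ i, -1 ≤ a i) (hb : ∀ i, b i ≤ 1)
    (hdisj : ∀ i j, i ≠ j → Disjoint (Set.Ioo (a i) (b i)) (Set.Ioo (a j) (b j)))
    (v : I → ℝ → ℝ)
    (hreg : ∀ i, ContDiffOn ℝ 2 (v i) (Set.Icc (-1) 1))
    (hmono : ∀ i, StrictMonoOn (v i) (Set.Icc (-1) 1) ∨ StrictAntiOn (v i) (Set.Icc (-1) 1))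
    (himage : ∀ i, v i '' Set.Icc (-1) 1 = Set.Icc (a i) (b i))
    (C : ℝ)
    (hC : ∀ i, ∀ x ∈ Set.Icc (-1 : ℝ) 1,
      |iteratedDerivWithin 2 (v i) (Set.Icc (-1) 1) x| ≤
        C * |derivWithin (v i) (Set.Icc (-1) 1) x|)
    (g : ℝ → ℝ)
    (hg : ∀ i, ∀ x ∈ Set.Ioo (a i) (b i), g x ∈ Set.Icc (-1 : ℝ) 1 ∧ v i (g x) = x)
    (μ : ℝ) (hμ : 0 < μ)
    (hexp : ∀ x ∈ ⋃ i, Set.Ioo (a i) (b i), μ ≤ |deriv g x|) :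
    ∀ x ∈ ⋃ i, Set.Ioo (a i) (b i),
      Real.sqrt (Real.exp (-2 * C) * μ / 2) ≤
        Real.sqrt ((1 - x ^ 2) / (1 - g x ^ 2)) * |deriv g x| := by
  intro x hx
  obtain ⟨i, hxi⟩ : ∃ i, x ∈ Set.Ioo (a i) (b i) := by simpa using hx
  obtain ⟨hgx, hVgx⟩ := hg i x hxi
  have hexpx := hexp x hx
  have h11 : (-1:ℝ) < 1 := by norm_num
  have hUD : UniqueDiffOn ℝ (Set.Icc (-1:ℝ) 1) := uniqueDiffOn_Icc h11
  -- g is differentiable at x with nonzero derivative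
  have hgd : DifferentiableAt ℝ g x := by
    by_contra h
    rw [deriv_zero_of_not_differentiableAt h, abs_zero] at hexpx
    linarith
  have hg0 : deriv g x ≠ 0 := by
    intro h
    rw [h, abs_zero] at hexpx
    linarith
  set y := g x with hydef
  -- y is interior
  have hyI : y ∈ Set.Ioo (-1:ℝ) 1 := by
    have haimg : a i ∈ v i '' Set.Icc (-1:ℝ) 1 := by
      rw [himage i]; exact ⟨le_rfl, (hab i).le⟩
    have hbimg : b i ∈ v i '' Set.Icc (-1:ℝ) 1 := by
      rw [himage i]; exact ⟨(hab i).le, le_rfl⟩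
    obtain ⟨s, hs, hvs⟩ := haimg
    obtain ⟨t, ht, hvt⟩ := hbimg
    rcases hmono i with hm | hm
    · have h1 : s < y := by
        by_contra h
        push_neg at h
        have := hm.monotoneOn hgx hs h
        rw [hvs, hVgx] at this
        exact absurd hxi.1 (not_lt.2 this)
      have h2 : y < t := by
        by_contra h
        push_neg at h
        have := hm.monotoneOn ht hgx h
        rw [hvt, hVgx] at this
        exact absurd hxi.2 (not_lt.2 this)
      exact ⟨lt_of_le_of_lt hs.1 h1, lt_of_lt_of_le h2 ht.2⟩
    · have h1 : t < y := by
        by_contra h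
        push_neg at h
        have := hm.antitoneOn hgx ht h
        rw [hvt, hVgx] at this
        exact absurd hxi.2 (not_lt.2 this)
      have h2 : y < s := by
        by_contra h
        push_neg at h
        have := hm.antitoneOn hs hgx h
        rw [hvs, hVgx] at this
        exact absurd hxi.1 (not_lt.2 this)
      exact ⟨lt_of_le_of_lt ht.1 h1, lt_of_lt_of_le h2 hs.2⟩
  have hSN : Set.Icc (-1:ℝ) 1 ∈ nhds y := Icc_mem_nhds hyI.1 hyI.2
  set V'y := derivWithin (v i) (Set.Icc (-1:ℝ) 1) y with hV'ydef
  have hVdy : HasDerivAt (v i) V'y y := by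
    have h2 : DifferentiableAt ℝ (v i) y :=
      (((hreg i).differentiableOn (by norm_num)) y hgx).differentiableAt hSN
    have h3 : V'y = deriv (v i) y := derivWithin_of_mem_nhds hSN
    rw [h3]; exact h2.hasDerivAt
  -- chain rule : V'y * g' = 1
  have hcomp : HasDerivAt (fun z => v i (g z)) (V'y * deriv g x) x :=
    HasDerivAt.comp x hVdy hgd.hasDerivAt
  have hev : (fun z => v i (g z)) =ᶠ[nhds x] id := by
    filter_upwards [Ioo_mem_nhds hxi.1 hxi.2] with z hz
    exact (hg i z hz).2
  have hid : HasDerivAt (fun z => v i (g z)) 1 x :=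
    (hasDerivAt_id x).congr_of_eventuallyEq hev
  have hkey : V'y * deriv g x = 1 := hcomp.unique hid
  have hV'y0 : V'y ≠ 0 := by
    intro h
    rw [h, zero_mul] at hkey
    norm_num at hkey
  -- C is nonnegative
  have hCnn : 0 ≤ C := by
    have h1 := hC i y hgx
    have h2 : 0 < |V'y| := abs_pos.2 hV'y0
    by_contra hcon
    push_neg at hcon
    have h3 := mul_neg_of_neg_of_pos hcon h2
    have h4 := abs_nonneg (iteratedDerivWithin 2 (v i) (Set.Icc (-1:ℝ) 1) y)
    rw [← hV'ydef] at h1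
    linarith
  set K := Real.exp (-2*C) with hKdef
  have hKpos : 0 < K := Real.exp_pos _
  have hKV : 0 ≤ K * |V'y| := mul_nonneg hKpos.le (abs_nonneg _)
  -- main distortion bounds
  have hmain : (K * |V'y| * (1 - y) ≤ 1 - x ∧ K * |V'y| * (1 + y) ≤ 1 + x)
      ∨ (K * |V'y| * (1 + y) ≤ 1 - x ∧ K * |V'y| * (1 - y) ≤ 1 + x) := by
    have hv1 : v i 1 ∈ Set.Icc (a i) (b i) := by
      rw [← himage i]; exact ⟨1, ⟨by norm_num, le_rfl⟩, rfl⟩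
    have hvm1 : v i (-1) ∈ Set.Icc (a i) (b i) := by
      rw [← himage i]; exact ⟨-1, ⟨le_rfl, by norm_num⟩, rfl⟩
    have hv1le : v i 1 ≤ 1 := hv1.2.trans (hb i)
    have hv1ge : -1 ≤ v i 1 := (ha i).trans hv1.1
    have hvm1le : v i (-1) ≤ 1 := hvm1.2.trans (hb i)
    have hvm1ge : -1 ≤ v i (-1) := (ha i).trans hvm1.1
    rcases hmono i with hm | hm
    · left
      have hk := key_mono (hreg i) hm.monotoneOn hCnn (hC i) hyI
      have hV'ypos : 0 ≤ V'y :=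
        deriv_nonneg_of_monotoneOn hSN hm.monotoneOn hVdy
      have habs : |V'y| = V'y := abs_of_nonneg hV'ypos
      rw [habs]
      constructor
      · have := hk.1
        rw [← hV'ydef, hVgx] at this
        linarith
      · have := hk.2
        rw [← hV'ydef, hVgx] at this
        linarith
    · right
      have hWreg : ContDiffOn ℝ 2 (fun t => -(v i t)) (Set.Icc (-1:ℝ) 1) := (hreg i).neg
      have hWmono : MonotoneOn (fun t => -(v i t)) (Set.Icc (-1:ℝ) 1) :=
        fun p hp q hq hpq => neg_le_neg (hm.antitoneOn hp hq hpq)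
      have hWC : ∀ t ∈ Set.Icc (-1:ℝ) 1,
          |iteratedDerivWithin 2 (fun u => -(v i u)) (Set.Icc (-1:ℝ) 1) t| ≤
            C * |derivWithin (fun u => -(v i u)) (Set.Icc (-1:ℝ) 1) t| := by
        intro t ht
        rw [iteratedDerivWithin_fun_neg (v i), derivWithin.fun_neg, abs_neg, abs_neg]
        exact hC i t ht
      have hk := key_mono hWreg hWmono hCnn hWC hyI
      have hWd : derivWithin (fun t => -(v i t)) (Set.Icc (-1:ℝ) 1) y = -V'y :=
        derivWithin.fun_neg
      rw [hWd] at hk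
      have hWdy : HasDerivAt (fun t => -(v i t)) (-V'y) y := hVdy.neg
      have hV'yneg : 0 ≤ -V'y := deriv_nonneg_of_monotoneOn hSN hWmono hWdy
      have habs : |V'y| = -V'y := abs_of_nonpos (by linarith)
      rw [habs]
      constructor
      · have := hk.2
        rw [hVgx] at this
        linarith
      · have := hk.1
        rw [hVgx] at this
        linarith
  -- combine into bound for 1 - x^2
  have hy1 : (0:ℝ) ≤ 1 - y := by linarith [hyI.2]
  have hy2 : (0:ℝ) ≤ 1 + y := by linarith [hyI.1]
  have hx1 : x ≤ 1 := le_trans hxi.2.le (hb i)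
  have hx2 : -1 ≤ x := le_trans (ha i) hxi.1.le
  have hsq : K * |V'y| * ((1 - y) * (1 + y)) / 2 ≤ 1 - x^2 := by
    rcases hmain with ⟨h1, h2⟩ | ⟨h1, h2⟩ <;> rcases le_or_gt 0 x with hx0 | hx0
    · nlinarith [mul_nonneg (mul_nonneg hKV hy1) (show (0:ℝ) ≤ 2 - (1+y) by linarith),
        mul_nonneg hx0 (show (0:ℝ) ≤ 1 - x by linarith)]
    · nlinarith [mul_nonneg (mul_nonneg hKV hy2) (show (0:ℝ) ≤ 2 - (1-y) by linarith),
        mul_nonneg (show (0:ℝ) ≤ -x by linarith) (show (0:ℝ) ≤ 1 + x by linarith)]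
    · nlinarith [mul_nonneg (mul_nonneg hKV hy2) (show (0:ℝ) ≤ 2 - (1-y) by linarith),
        mul_nonneg hx0 (show (0:ℝ) ≤ 1 - x by linarith)]
    · nlinarith [mul_nonneg (mul_nonneg hKV hy1) (show (0:ℝ) ≤ 2 - (1+y) by linarith),
        mul_nonneg (show (0:ℝ) ≤ -x by linarith) (show (0:ℝ) ≤ 1 + x by linarith)]
  -- use |V'y| = 1/|g'|
  have hg'pos : 0 < |deriv g x| := abs_pos.2 hg0
  have habsK : |V'y| * |deriv g x| = 1 := by
    rw [← abs_mul, hkey, abs_one]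
  have hV'abs : |V'y| = 1 / |deriv g x| := by
    field_simp
    linarith [habsK]
  have h1y2 : (0:ℝ) < 1 - y^2 := by nlinarith [hyI.1, hyI.2]
  have hfinal : K * μ / 2 ≤ (1 - x^2) / (1 - y^2) * (deriv g x)^2 := by
    rw [hV'abs] at hsq
    have hGG : (deriv g x)^2 = |deriv g x|^2 := (sq_abs _).symm
    have hstep : K * (1 - y^2) / (2 * |deriv g x|) ≤ 1 - x^2 := by
      have heq : K * (1 / |deriv g x|) * ((1 - y) * (1 + y)) / 2
          = K * (1 - y^2) / (2 * |deriv g x|) := by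
        field_simp
        ring
      linarith [heq ▸ hsq]
    calc K * μ / 2 ≤ K * |deriv g x| / 2 := by nlinarith
      _ = (K * (1 - y^2) / (2 * |deriv g x|)) * |deriv g x|^2 / (1 - y^2) := by
          field_simp
      _ ≤ (1 - x^2) * |deriv g x|^2 / (1 - y^2) := by
          gcongr
      _ = (1 - x^2) / (1 - y^2) * (deriv g x)^2 := by
          rw [hGG]; ring
  have hnn : (0:ℝ) ≤ (1 - x^2) / (1 - y^2) := by
    apply div_nonneg _ h1y2.le
    nlinarith
  calc Real.sqrt (Real.exp (-2 * C) * μ / 2)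
      ≤ Real.sqrt ((1 - x^2) / (1 - y^2) * (deriv g x)^2) := by
        apply Real.sqrt_le_sqrt
        exact hfinal
    _ = Real.sqrt ((1 - x^2) / (1 - y^2)) * |deriv g x| := by
        rw [Real.sqrt_mul hnn, Real.sqrt_sq_eq_abs]
end

section
/- Let I be a countable index set, let (O_ι)_{ι∈I} be pairwise disjoint nonempty open subintervals of (−1,1), and for each ι let v_ι : [−1,1] → [−1,1] be a C² strictly monotone map with v_ι([−1,1]) equal to the closure of O_ι and with |v_ι''(x)/v_ι'(x)| ≤ C₁ for all x ∈ [−1,1]. Let g : ⋃_ι O_ι → (−1,1) be the full-branch Markov map whose restriction to O_ι is the inverse of v_ι, and assume g is uniformly C-expanding with parameter λ̌ > 1, i.e. √(1 − x²) · |g'(x)| ≥ λ̌ · √(1 − g(x)²) for all x ∈ ⋃_ι O_ι. Then for every n ≥ 1 and every x such that x, g(x), …, g^{n−1}(x) all lie in ⋃_ι O_ι: |(gⁿ)'(x)| ≥ (2/π) · e^{−π C₁ λ̌/(λ̌ − 1)} · λ̌ⁿ. In particular gⁿ is uniformly expanding for all sufficiently large n. -/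
open Set Real

lemma aux_cos_lip (p q : ℝ) : |Real.cos p - Real.cos q| ≤ |p - q| := by
  rw [Real.cos_sub_cos]
  have h1 : |Real.sin ((p + q) / 2)| ≤ 1 := abs_le.2 ⟨Real.neg_one_le_sin _, Real.sin_le_one _⟩
  have h2 : |Real.sin ((p - q) / 2)| ≤ |(p - q) / 2| := Real.abs_sin_le_abs
  calc |(-2) * Real.sin ((p + q) / 2) * Real.sin ((p - q) / 2)|
      = 2 * (|Real.sin ((p + q) / 2)| * |Real.sin ((p - q) / 2)|) := by
        rw [abs_mul, abs_mul]; norm_num; ring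
    _ ≤ 2 * (1 * |(p - q) / 2|) := by
        apply mul_le_mul_of_nonneg_left _ (by norm_num)
        exact mul_le_mul h1 h2 (abs_nonneg _) zero_le_one
    _ = |p - q| := by rw [abs_div, abs_two]; ring

lemma aux_arccos_exp {p q : ℝ} (hp : p ∈ Set.Icc (-1:ℝ) 1) (hq : q ∈ Set.Icc (-1:ℝ) 1) :
    |p - q| ≤ |Real.arccos p - Real.arccos q| := by
  have := aux_cos_lip (Real.arccos p) (Real.arccos q)
  rwa [Real.cos_arccos hp.1 hp.2, Real.cos_arccos hq.1 hq.2] at this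

lemma aux_gronwall_dir {f f' : ℝ → ℝ} {K : ℝ}
    (hf : ∀ t ∈ Set.Icc (-1:ℝ) 1, HasDerivWithinAt f (f' t) (Set.Icc (-1:ℝ) 1) t)
    (hbound : ∀ t ∈ Set.Icc (-1:ℝ) 1, |f' t| ≤ K * |f t|) :
    ∀ p ∈ Set.Icc (-1:ℝ) 1, ∀ q ∈ Set.Icc (-1:ℝ) 1, q ≤ p →
      |f p| ≤ |f q| * Real.exp (K * (p - q)) := by
  intro p hp q hq hqp
  have hcont : ContinuousOn f (Set.Icc (-1) 1) := fun t ht => (hf t ht).continuousWithinAt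
  have key := norm_le_gronwallBound_of_norm_deriv_right_le (f := f) (f' := f')
    (δ := |f q|) (K := K) (ε := 0) (a := q) (b := p)
    (hcont.mono (Set.Icc_subset_Icc hq.1 hp.2))
    (fun t ht => by
      have htI : t ∈ Set.Icc (-1:ℝ) 1 := ⟨hq.1.trans ht.1, (ht.2.le).trans hp.2⟩
      refine (hf t htI).mono_of_mem_nhdsWithin ?_
      have h1 : Set.Iio (1:ℝ) ∈ nhds t := Iio_mem_nhds (lt_of_lt_of_le ht.2 hp.2)
      refine Filter.mem_of_superset (Filter.inter_mem (nhdsWithin_le_nhds h1) self_mem_nhdsWithin) ?_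
      rintro y ⟨hy1, hy2⟩
      exact ⟨le_trans htI.1 hy2, le_of_lt hy1⟩)
    (by simp [Real.norm_eq_abs]) (fun t ht => by
      have htI : t ∈ Set.Icc (-1:ℝ) 1 := ⟨hq.1.trans ht.1, (ht.2.le).trans hp.2⟩
      simpa [Real.norm_eq_abs] using hbound t htI) p ⟨hqp, le_refl p⟩
  rw [Real.norm_eq_abs, gronwallBound_ε0] at key
  exact key

lemma aux_gronwall {f f' : ℝ → ℝ} {K : ℝ}
    (hf : ∀ t ∈ Set.Icc (-1:ℝ) 1, HasDerivWithinAt f (f' t) (Set.Icc (-1:ℝ) 1) t)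
    (hbound : ∀ t ∈ Set.Icc (-1:ℝ) 1, |f' t| ≤ K * |f t|) :
    ∀ p ∈ Set.Icc (-1:ℝ) 1, ∀ q ∈ Set.Icc (-1:ℝ) 1,
      |f p| ≤ |f q| * Real.exp (K * |p - q|) := by
  intro p hp q hq
  rcases le_total q p with h | h
  · rw [abs_of_nonneg (by linarith : (0:ℝ) ≤ p - q)]
    exact aux_gronwall_dir hf hbound p hp q hq h
  · -- apply the directional lemma to f ∘ Neg.neg
    have hneg : ∀ t ∈ Set.Icc (-1:ℝ) 1, -t ∈ Set.Icc (-1:ℝ) 1 := by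
      intro t ht; exact ⟨by linarith [ht.2], by linarith [ht.1]⟩
    have hF : ∀ t ∈ Set.Icc (-1:ℝ) 1,
        HasDerivWithinAt (f ∘ (fun u : ℝ => -u)) (f' (-t) * (-1)) (Set.Icc (-1:ℝ) 1) t := by
      intro t ht
      exact HasDerivWithinAt.comp t (hf (-t) (hneg t ht))
        ((hasDerivAt_neg t).hasDerivWithinAt) (fun u hu => hneg u hu)
    have hFb : ∀ t ∈ Set.Icc (-1:ℝ) 1,
        |f' (-t) * (-1)| ≤ K * |(f ∘ (fun u : ℝ => -u)) t| := by
      intro t ht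
      simpa [abs_mul] using hbound (-t) (hneg t ht)
    have := aux_gronwall_dir hF hFb (-p) (hneg p hp) (-q) (hneg q hq) (by linarith)
    simp only [Function.comp_apply, neg_neg] at this
    rw [abs_of_nonpos (by linarith : p - q ≤ 0)]
    convert this using 3
    ring


noncomputable def dW (V : ℝ → ℝ) : ℝ → ℝ := derivWithin V (Set.Icc (-1) 1)

lemma br_UD : UniqueDiffOn ℝ (Set.Icc (-1:ℝ) 1) := uniqueDiffOn_Icc (by norm_num)

lemma br_deriv {V : ℝ → ℝ} (hreg : ContDiffOn ℝ 2 V (Set.Icc (-1) 1)) :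
    ∀ y ∈ Set.Icc (-1:ℝ) 1, HasDerivWithinAt V (dW V y) (Set.Icc (-1:ℝ) 1) y :=
  fun y hy => (((hreg.differentiableOn (by norm_num))) y hy).hasDerivWithinAt

lemma br_dW2 {V : ℝ → ℝ} (hreg : ContDiffOn ℝ 2 V (Set.Icc (-1) 1)) :
    ∀ t ∈ Set.Icc (-1:ℝ) 1,
      HasDerivWithinAt (dW V) (derivWithin (dW V) (Set.Icc (-1) 1) t) (Set.Icc (-1:ℝ) 1) t :=
  fun t ht =>
    (((hreg.derivWithin (m := 1) br_UD (by norm_num)).differentiableOn (by norm_num)) t ht).hasDerivWithinAt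

lemma br_iter {V : ℝ → ℝ} :
    ∀ t ∈ Set.Icc (-1:ℝ) 1,
      iteratedDerivWithin 2 V (Set.Icc (-1) 1) t = derivWithin (dW V) (Set.Icc (-1) 1) t := by
  intro t ht
  rw [show (2:ℕ) = 1 + 1 from rfl, iteratedDerivWithin_succ]
  exact derivWithin_congr (fun y hy => congrFun iteratedDerivWithin_one y)
    (congrFun iteratedDerivWithin_one t)

section
variable {V : ℝ → ℝ} {A B C₁ lam : ℝ}

lemma br_gron (hreg : ContDiffOn ℝ 2 V (Set.Icc (-1) 1))
    (hC : ∀ x ∈ Set.Icc (-1:ℝ) 1,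
      |iteratedDerivWithin 2 V (Set.Icc (-1) 1) x| ≤ C₁ * |derivWithin V (Set.Icc (-1) 1) x|) :
    ∀ p ∈ Set.Icc (-1:ℝ) 1, ∀ q ∈ Set.Icc (-1:ℝ) 1,
      |dW V p| ≤ |dW V q| * Real.exp (C₁ * |p - q|) :=
  aux_gronwall (br_dW2 hreg) (fun t ht => by rw [← br_iter t ht]; exact hC t ht)

lemma br_ne (hAB : A < B) (hreg : ContDiffOn ℝ 2 V (Set.Icc (-1) 1))
    (himage : V '' Set.Icc (-1) 1 = Set.Icc A B)
    (hC : ∀ x ∈ Set.Icc (-1:ℝ) 1,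
      |iteratedDerivWithin 2 V (Set.Icc (-1) 1) x| ≤ C₁ * |derivWithin V (Set.Icc (-1) 1) x|) :
    ∀ y ∈ Set.Icc (-1:ℝ) 1, dW V y ≠ 0 := by
  intro y hy hzero
  have hall : ∀ p ∈ Set.Icc (-1:ℝ) 1, ‖derivWithin V (Set.Icc (-1) 1) p‖ ≤ 0 := by
    intro p hp
    have h := br_gron hreg hC p hp y hy
    rw [hzero] at h
    simpa [Real.norm_eq_abs, dW] using h
  have hdiff : DifferentiableOn ℝ V (Set.Icc (-1:ℝ) 1) := hreg.differentiableOn (by norm_num)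
  have hmemA : A ∈ V '' Set.Icc (-1:ℝ) 1 := by rw [himage]; exact ⟨le_refl A, hAB.le⟩
  have hmemB : B ∈ V '' Set.Icc (-1:ℝ) 1 := by rw [himage]; exact ⟨hAB.le, le_refl B⟩
  obtain ⟨p, hp, hpA⟩ := hmemA
  obtain ⟨q, hq, hqB⟩ := hmemB
  have := (convex_Icc (-1:ℝ) 1).norm_image_sub_le_of_norm_derivWithin_le hdiff hall hp hq
  rw [hpA, hqB] at this
  have h0 : |B - A| ≤ 0 := by simpa [Real.norm_eq_abs] using this
  have h1 := abs_nonneg (B - A)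
  have h2 : B - A = 0 := abs_eq_zero.1 (le_antisymm h0 h1)
  linarith

lemma br_endpoints (hAB : A < B)
    (hmono : StrictMonoOn V (Set.Icc (-1) 1) ∨ StrictAntiOn V (Set.Icc (-1) 1))
    (himage : V '' Set.Icc (-1) 1 = Set.Icc A B) :
    ∀ y ∈ Set.Ioo (-1:ℝ) 1, V y ∈ Set.Ioo A B := by
  have hm1 : (-1:ℝ) ∈ Set.Icc (-1:ℝ) 1 := by norm_num
  have h1 : (1:ℝ) ∈ Set.Icc (-1:ℝ) 1 := by norm_num
  have hVmem : ∀ t ∈ Set.Icc (-1:ℝ) 1, V t ∈ Set.Icc A B := by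
    intro t ht; rw [← himage]; exact ⟨t, ht, rfl⟩
  have hmemA : A ∈ V '' Set.Icc (-1:ℝ) 1 := by rw [himage]; exact ⟨le_refl A, hAB.le⟩
  have hmemB : B ∈ V '' Set.Icc (-1:ℝ) 1 := by rw [himage]; exact ⟨hAB.le, le_refl B⟩
  obtain ⟨p, hp, hpA⟩ := hmemA
  obtain ⟨q, hq, hqB⟩ := hmemB
  intro y hy
  have hyI : y ∈ Set.Icc (-1:ℝ) 1 := ⟨hy.1.le, hy.2.le⟩
  rcases hmono with mo | an
  · have e1 : V (-1) = A :=
      le_antisymm (by rw [← hpA]; exact mo.monotoneOn hm1 hp hp.1) (hVmem _ hm1).1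
    have e2 : V 1 = B :=
      le_antisymm (hVmem _ h1).2 (by rw [← hqB]; exact mo.monotoneOn hq h1 hq.2)
    exact ⟨e1 ▸ mo hm1 hyI hy.1, e2 ▸ mo hyI h1 hy.2⟩
  · have e1 : V (-1) = B :=
      le_antisymm (hVmem _ hm1).2 (by rw [← hqB]; exact an.antitoneOn hm1 hq hq.1)
    have e2 : V 1 = A :=
      le_antisymm (by rw [← hpA]; exact an.antitoneOn hp h1 hp.2) (hVmem _ h1).1
    exact ⟨e2 ▸ an hyI h1 hy.2, e1 ▸ an hm1 hyI hy.1⟩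

end

section
variable {V : ℝ → ℝ} {A B C₁ lam : ℝ} {g : ℝ → ℝ}

lemma br_inj (hmono : StrictMonoOn V (Set.Icc (-1) 1) ∨ StrictAntiOn V (Set.Icc (-1) 1)) :
    Set.InjOn V (Set.Icc (-1) 1) := by
  rcases hmono with mo | an
  exacts [mo.injOn, an.injOn]

lemma br_ends (hAB : A < B)
    (hmono : StrictMonoOn V (Set.Icc (-1) 1) ∨ StrictAntiOn V (Set.Icc (-1) 1))
    (himage : V '' Set.Icc (-1) 1 = Set.Icc A B) :
    (V (-1) = A ∧ V 1 = B) ∨ (V (-1) = B ∧ V 1 = A) := by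
  have hm1 : (-1:ℝ) ∈ Set.Icc (-1:ℝ) 1 := by norm_num
  have h1 : (1:ℝ) ∈ Set.Icc (-1:ℝ) 1 := by norm_num
  have hVmem : ∀ t ∈ Set.Icc (-1:ℝ) 1, V t ∈ Set.Icc A B := by
    intro t ht; rw [← himage]; exact ⟨t, ht, rfl⟩
  have hmemA : A ∈ V '' Set.Icc (-1:ℝ) 1 := by rw [himage]; exact ⟨le_refl A, hAB.le⟩
  have hmemB : B ∈ V '' Set.Icc (-1:ℝ) 1 := by rw [himage]; exact ⟨hAB.le, le_refl B⟩
  obtain ⟨p, hp, hpA⟩ := hmemA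
  obtain ⟨q, hq, hqB⟩ := hmemB
  rcases hmono with mo | an
  · left
    exact ⟨le_antisymm (by rw [← hpA]; exact mo.monotoneOn hm1 hp hp.1) (hVmem _ hm1).1,
      le_antisymm (hVmem _ h1).2 (by rw [← hqB]; exact mo.monotoneOn hq h1 hq.2)⟩
  · right
    exact ⟨le_antisymm (hVmem _ hm1).2 (by rw [← hqB]; exact an.antitoneOn hm1 hq hq.1),
      le_antisymm (by rw [← hpA]; exact an.antitoneOn hp h1 hp.2) (hVmem _ h1).1⟩

lemma br_gmem (hAB : A < B)
    (hmono : StrictMonoOn V (Set.Icc (-1) 1) ∨ StrictAntiOn V (Set.Icc (-1) 1))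
    (himage : V '' Set.Icc (-1) 1 = Set.Icc A B)
    (hgV : ∀ x ∈ Set.Ioo A B, g x ∈ Set.Icc (-1:ℝ) 1 ∧ V (g x) = x) :
    ∀ x ∈ Set.Ioo A B, g x ∈ Set.Ioo (-1:ℝ) 1 := by
  intro x hx
  obtain ⟨hgI, hVg⟩ := hgV x hx
  have hends := br_ends hAB hmono himage
  rcases lt_or_eq_of_le hgI.1 with h1 | h1
  · rcases lt_or_eq_of_le hgI.2 with h2 | h2
    · exact ⟨h1, h2⟩
    · exfalso
      rw [h2] at hVg
      rcases hends with ⟨_, e⟩ | ⟨_, e⟩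
      · rw [e] at hVg; exact absurd hVg.symm (ne_of_lt hx.2)
      · rw [e] at hVg; exact absurd hVg.symm (ne_of_gt hx.1)
  · exfalso
    rw [← h1] at hVg
    rcases hends with ⟨e, _⟩ | ⟨e, _⟩
    · rw [e] at hVg; exact absurd hVg.symm (ne_of_gt hx.1)
    · rw [e] at hVg; exact absurd hVg.symm (ne_of_lt hx.2)

lemma br_g (hAB : A < B) (hreg : ContDiffOn ℝ 2 V (Set.Icc (-1) 1))
    (hmono : StrictMonoOn V (Set.Icc (-1) 1) ∨ StrictAntiOn V (Set.Icc (-1) 1))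
    (himage : V '' Set.Icc (-1) 1 = Set.Icc A B)
    (hC : ∀ x ∈ Set.Icc (-1:ℝ) 1,
      |iteratedDerivWithin 2 V (Set.Icc (-1) 1) x| ≤ C₁ * |derivWithin V (Set.Icc (-1) 1) x|)
    (hgV : ∀ x ∈ Set.Ioo A B, g x ∈ Set.Icc (-1:ℝ) 1 ∧ V (g x) = x) :
    ∀ x ∈ Set.Ioo A B, HasDerivAt g ((dW V (g x))⁻¹) x := by
  intro x hx
  have hgmem : g x ∈ Set.Ioo (-1:ℝ) 1 := br_gmem hAB hmono himage hgV x hx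
  have hIccnh : Set.Icc (-1:ℝ) 1 ∈ nhds (g x) := Icc_mem_nhds hgmem.1 hgmem.2
  have hstrict : HasStrictDerivAt V (dW V (g x)) (g x) := by
    have h := (hreg.contDiffAt hIccnh).hasStrictDerivAt (by norm_num)
    rwa [show deriv V (g x) = dW V (g x) from (derivWithin_of_mem_nhds hIccnh).symm] at h
  have hne : dW V (g x) ≠ 0 :=
    br_ne hAB hreg himage hC (g x) (Set.Ioo_subset_Icc_self hgmem)
  have hev : ∀ᶠ y in nhds (g x), g (V y) = y := by
    filter_upwards [Ioo_mem_nhds hgmem.1 hgmem.2] with y hy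
    have hVy : V y ∈ Set.Ioo A B := br_endpoints hAB hmono himage y hy
    obtain ⟨hg2, hV2⟩ := hgV (V y) hVy
    exact br_inj hmono hg2 ⟨hy.1.le, hy.2.le⟩ (by rw [hV2])
  have h := hstrict.to_local_left_inverse hne hev
  rw [(hgV x hx).2] at h
  exact h.hasDerivAt

lemma br_CE (hlam : 1 < lam) (hAB : A < B) (hreg : ContDiffOn ℝ 2 V (Set.Icc (-1) 1))
    (hmono : StrictMonoOn V (Set.Icc (-1) 1) ∨ StrictAntiOn V (Set.Icc (-1) 1))
    (himage : V '' Set.Icc (-1) 1 = Set.Icc A B)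
    (hC : ∀ x ∈ Set.Icc (-1:ℝ) 1,
      |iteratedDerivWithin 2 V (Set.Icc (-1) 1) x| ≤ C₁ * |derivWithin V (Set.Icc (-1) 1) x|)
    (hgV : ∀ x ∈ Set.Ioo A B, g x ∈ Set.Icc (-1:ℝ) 1 ∧ V (g x) = x)
    (hCEx : ∀ x ∈ Set.Ioo A B,
      lam * Real.sqrt (1 - g x ^ 2) ≤ Real.sqrt (1 - x ^ 2) * |deriv g x|) :
    ∀ y ∈ Set.Ioo (-1:ℝ) 1,
      lam * (|dW V y| * Real.sqrt (1 - y ^ 2)) ≤ Real.sqrt (1 - V y ^ 2) := by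
  intro y hy
  have hyI : y ∈ Set.Icc (-1:ℝ) 1 := Set.Ioo_subset_Icc_self hy
  have hVy : V y ∈ Set.Ioo A B := br_endpoints hAB hmono himage y hy
  have hgVy : g (V y) = y := by
    obtain ⟨hg2, hV2⟩ := hgV (V y) hVy
    exact br_inj hmono hg2 hyI (by rw [hV2])
  have hder := br_g hAB hreg hmono himage hC hgV (V y) hVy
  rw [hgVy] at hder
  have hderiv : deriv g (V y) = (dW V y)⁻¹ := hder.deriv
  have hce := hCEx (V y) hVy
  rw [hgVy, hderiv, abs_inv] at hce
  have hdpos : 0 < |dW V y| := abs_pos.2 (br_ne hAB hreg himage hC y hyI)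
  have h1 := mul_le_mul_of_nonneg_right hce hdpos.le
  rw [mul_assoc (Real.sqrt (1 - V y ^ 2)), inv_mul_cancel₀ hdpos.ne', mul_one] at h1
  calc lam * (|dW V y| * Real.sqrt (1 - y ^ 2))
      = lam * Real.sqrt (1 - y ^ 2) * |dW V y| := by ring
    _ ≤ Real.sqrt (1 - V y ^ 2) := h1

end

section
variable {V : ℝ → ℝ} {A B C₁ lam : ℝ}

lemma br_contr (hlam : 1 < lam) (hAB : A < B) (hA : -1 ≤ A) (hB : B ≤ 1)
    (hreg : ContDiffOn ℝ 2 V (Set.Icc (-1) 1))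
    (hmono : StrictMonoOn V (Set.Icc (-1) 1) ∨ StrictAntiOn V (Set.Icc (-1) 1))
    (himage : V '' Set.Icc (-1) 1 = Set.Icc A B)
    (hce : ∀ y ∈ Set.Ioo (-1:ℝ) 1,
      lam * (|dW V y| * Real.sqrt (1 - y ^ 2)) ≤ Real.sqrt (1 - V y ^ 2)) :
    ∀ y ∈ Set.Icc (-1:ℝ) 1, ∀ z ∈ Set.Icc (-1:ℝ) 1,
      |Real.arccos (V y) - Real.arccos (V z)| ≤ lam⁻¹ * |Real.arccos y - Real.arccos z| := by
  have hlam0 : (0:ℝ) < lam := lt_trans one_pos hlam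
  have main : ∀ θ₁ θ₂ : ℝ, 0 ≤ θ₁ → θ₂ ≤ π → θ₁ < θ₂ →
      |Real.arccos (V (Real.cos θ₂)) - Real.arccos (V (Real.cos θ₁))| ≤ lam⁻¹ * (θ₂ - θ₁) := by
    intro θ₁ θ₂ h0 hπ hlt
    have hcont : ContinuousOn (fun θ => Real.arccos (V (Real.cos θ))) (Set.Icc θ₁ θ₂) := by
      apply Real.continuous_arccos.comp_continuousOn
      apply (hreg.continuousOn).comp Real.continuous_cos.continuousOn
      intro t _; exact ⟨Real.neg_one_le_cos t, Real.cos_le_one t⟩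
    have hderiv : ∀ c ∈ Set.Ioo θ₁ θ₂, HasDerivAt (fun θ => Real.arccos (V (Real.cos θ)))
        (-(1 / Real.sqrt (1 - V (Real.cos c) ^ 2)) * (dW V (Real.cos c) * (-Real.sin c))) c := by
      intro c hc
      have hc0 : 0 < c := lt_of_le_of_lt h0 hc.1
      have hcπ : c < π := lt_of_lt_of_le hc.2 hπ
      have hw : Real.cos c ∈ Set.Ioo (-1:ℝ) 1 := by
        constructor
        · have := Real.strictAntiOn_cos ⟨hc0.le, hcπ.le⟩ ⟨Real.pi_pos.le, le_refl π⟩ hcπ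
          simpa [Real.cos_pi] using this
        · have := Real.strictAntiOn_cos ⟨le_refl (0:ℝ), Real.pi_pos.le⟩ ⟨hc0.le, hcπ.le⟩ hc0
          simpa [Real.cos_zero] using this
      have hu : V (Real.cos c) ∈ Set.Ioo A B := br_endpoints hAB hmono himage _ hw
      have huI : V (Real.cos c) ∈ Set.Ioo (-1:ℝ) 1 :=
        ⟨lt_of_le_of_lt hA hu.1, lt_of_lt_of_le hu.2 hB⟩
      have h1 : HasDerivAt Real.cos (-Real.sin c) c := Real.hasDerivAt_cos c
      have hIccnh : Set.Icc (-1:ℝ) 1 ∈ nhds (Real.cos c) := Icc_mem_nhds hw.1 hw.2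
      have h2 : HasDerivAt V (dW V (Real.cos c)) (Real.cos c) := by
        have h := (hreg.contDiffAt hIccnh).hasStrictDerivAt (by norm_num)
        rw [show deriv V (Real.cos c) = dW V (Real.cos c) from
          (derivWithin_of_mem_nhds hIccnh).symm] at h
        exact h.hasDerivAt
      have h3 : HasDerivAt Real.arccos (-(1 / Real.sqrt (1 - V (Real.cos c) ^ 2)))
          (V (Real.cos c)) := Real.hasDerivAt_arccos (ne_of_gt huI.1) (ne_of_lt huI.2)
      have h4 := h3.comp c (h2.comp c h1); exact h4
    obtain ⟨c, hc, hceq⟩ := exists_hasDerivAt_eq_slope _ _ hlt hcont hderiv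
    have hc0 : 0 < c := lt_of_le_of_lt h0 hc.1
    have hcπ : c < π := lt_of_lt_of_le hc.2 hπ
    have hw : Real.cos c ∈ Set.Ioo (-1:ℝ) 1 := by
      constructor
      · have := Real.strictAntiOn_cos ⟨hc0.le, hcπ.le⟩ ⟨Real.pi_pos.le, le_refl π⟩ hcπ
        simpa [Real.cos_pi] using this
      · have := Real.strictAntiOn_cos ⟨le_refl (0:ℝ), Real.pi_pos.le⟩ ⟨hc0.le, hcπ.le⟩ hc0
        simpa [Real.cos_zero] using this
    have hu : V (Real.cos c) ∈ Set.Ioo A B := br_endpoints hAB hmono himage _ hw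
    have huI : V (Real.cos c) ∈ Set.Ioo (-1:ℝ) 1 :=
      ⟨lt_of_le_of_lt hA hu.1, lt_of_lt_of_le hu.2 hB⟩
    have hsV : 0 < Real.sqrt (1 - V (Real.cos c) ^ 2) :=
      Real.sqrt_pos.2 (by nlinarith [huI.1, huI.2])
    have hsc : 0 ≤ Real.sin c := Real.sin_nonneg_of_nonneg_of_le_pi hc0.le hcπ.le
    have hsin : Real.sin c = Real.sqrt (1 - Real.cos c ^ 2) :=
      Real.sin_eq_sqrt_one_sub_cos_sq hc0.le hcπ.le
    -- bound on the derivative at c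
    have hFc : |(-(1 / Real.sqrt (1 - V (Real.cos c) ^ 2)) *
        (dW V (Real.cos c) * (-Real.sin c)))| ≤ lam⁻¹ := by
      have habs : |(-(1 / Real.sqrt (1 - V (Real.cos c) ^ 2)) *
          (dW V (Real.cos c) * (-Real.sin c)))| =
          (1 / Real.sqrt (1 - V (Real.cos c) ^ 2)) * (|dW V (Real.cos c)| * Real.sin c) := by
        rw [abs_mul, abs_neg, abs_mul, abs_neg, abs_of_nonneg hsc,
          abs_of_nonneg (by positivity : (0:ℝ) ≤ 1 / Real.sqrt (1 - V (Real.cos c) ^ 2))]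
      rw [habs]
      have hkey : |dW V (Real.cos c)| * Real.sin c ≤
          lam⁻¹ * Real.sqrt (1 - V (Real.cos c) ^ 2) := by
        have h := hce (Real.cos c) hw
        rw [hsin]
        calc |dW V (Real.cos c)| * Real.sqrt (1 - Real.cos c ^ 2)
            = lam⁻¹ * (lam * (|dW V (Real.cos c)| * Real.sqrt (1 - Real.cos c ^ 2))) := by
              field_simp
          _ ≤ lam⁻¹ * Real.sqrt (1 - V (Real.cos c) ^ 2) :=
              mul_le_mul_of_nonneg_left h (inv_nonneg.2 hlam0.le)
      calc (1 / Real.sqrt (1 - V (Real.cos c) ^ 2)) * (|dW V (Real.cos c)| * Real.sin c)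
          ≤ (1 / Real.sqrt (1 - V (Real.cos c) ^ 2)) *
            (lam⁻¹ * Real.sqrt (1 - V (Real.cos c) ^ 2)) :=
            mul_le_mul_of_nonneg_left hkey (by positivity)
        _ = lam⁻¹ := by field_simp
    have heq : Real.arccos (V (Real.cos θ₂)) - Real.arccos (V (Real.cos θ₁)) =
        (-(1 / Real.sqrt (1 - V (Real.cos c) ^ 2)) *
          (dW V (Real.cos c) * (-Real.sin c))) * (θ₂ - θ₁) := by
      rw [hceq]
      exact (div_mul_cancel₀ _ (sub_ne_zero.2 hlt.ne')).symm
    rw [heq, abs_mul, abs_of_nonneg (by linarith : (0:ℝ) ≤ θ₂ - θ₁)]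
    exact mul_le_mul_of_nonneg_right hFc (by linarith)
  -- combine
  intro y hy z hz
  rcases lt_trichotomy (Real.arccos y) (Real.arccos z) with h | h | h
  · have := main (Real.arccos y) (Real.arccos z) (Real.arccos_nonneg y) (Real.arccos_le_pi z) h
    rw [Real.cos_arccos hy.1 hy.2, Real.cos_arccos hz.1 hz.2] at this
    rw [abs_sub_comm (Real.arccos (V y)), abs_sub_comm (Real.arccos y)]
    rwa [abs_of_nonneg (by linarith : (0:ℝ) ≤ Real.arccos z - Real.arccos y)]
  · have hyz : y = z := by
      have := congrArg Real.cos h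
      rwa [Real.cos_arccos hy.1 hy.2, Real.cos_arccos hz.1 hz.2] at this
    rw [hyz]
    simp only [sub_self, abs_zero]
    positivity
  · have := main (Real.arccos z) (Real.arccos y) (Real.arccos_nonneg z) (Real.arccos_le_pi y) h
    rw [Real.cos_arccos hy.1 hy.2, Real.cos_arccos hz.1 hz.2] at this
    rwa [abs_of_nonneg (by linarith : (0:ℝ) ≤ Real.arccos y - Real.arccos z)]

end



/-- A full-branch Markov map `g` of `[-1,1]` with `C²` inverse branches
`v_ι` (branch domains `O_ι = (a ι, b ι)`), distortion bound `|v_ι''/v_ι'| ≤ C₁`, and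
uniform C-expansion parameter `λ̌ > 1` satisfies
`|(gⁿ)'(x)| ≥ (2/π) e^{-π C₁ λ̌/(λ̌-1)} λ̌ⁿ` whenever the orbit `x, g x, …, g^{n-1} x` stays
in the branch domains; in particular `gⁿ` is uniformly expanding for all large `n`. -/
theorem C_expansion_implies_expansion_of_iterates
    {I : Type} [Countable I]
    (a b : I → ℝ) (hab : ∀ i, a i < b i) (ha : ∀ i, -1 ≤ a i) (hb : ∀ i, b i ≤ 1)
    (hdisj : ∀ i j, i ≠ j → Disjoint (Set.Ioo (a i) (b i)) (Set.Ioo (a j) (b j)))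
    (v : I → ℝ → ℝ)
    (hreg : ∀ i, ContDiffOn ℝ 2 (v i) (Set.Icc (-1) 1))
    (hmono : ∀ i, StrictMonoOn (v i) (Set.Icc (-1) 1) ∨ StrictAntiOn (v i) (Set.Icc (-1) 1))
    (himage : ∀ i, v i '' Set.Icc (-1) 1 = Set.Icc (a i) (b i))
    (C₁ : ℝ)
    (hC : ∀ i, ∀ x ∈ Set.Icc (-1 : ℝ) 1,
      |iteratedDerivWithin 2 (v i) (Set.Icc (-1) 1) x| ≤
        C₁ * |derivWithin (v i) (Set.Icc (-1) 1) x|)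
    (g : ℝ → ℝ)
    (hg : ∀ i, ∀ x ∈ Set.Ioo (a i) (b i), g x ∈ Set.Icc (-1 : ℝ) 1 ∧ v i (g x) = x)
    (lam : ℝ) (hlam : 1 < lam)
    (hCE : ∀ x ∈ ⋃ i, Set.Ioo (a i) (b i),
      lam * Real.sqrt (1 - g x ^ 2) ≤ Real.sqrt (1 - x ^ 2) * |deriv g x|) :
    (∀ n : ℕ, 1 ≤ n → ∀ x : ℝ,
      (∀ m < n, g^[m] x ∈ ⋃ i, Set.Ioo (a i) (b i)) →
      (2 / Real.pi) * Real.exp (-Real.pi * C₁ * lam / (lam - 1)) * lam ^ n ≤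
        |deriv (g^[n]) x|) ∧
    ∃ n₀ : ℕ, ∀ n : ℕ, n₀ ≤ n → ∀ x : ℝ,
      (∀ m < n, g^[m] x ∈ ⋃ i, Set.Ioo (a i) (b i)) →
      1 < |deriv (g^[n]) x| := by
  classical
  have hlam0 : (0:ℝ) < lam := lt_trans one_pos hlam
  have hinv0 : (0:ℝ) ≤ lam⁻¹ := by positivity
  have hinv1 : lam⁻¹ < 1 := inv_lt_one_of_one_lt₀ hlam
  have hCEi : ∀ i, ∀ x ∈ Set.Ioo (a i) (b i),
      lam * Real.sqrt (1 - g x ^ 2) ≤ Real.sqrt (1 - x ^ 2) * |deriv g x| := by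
    intro i x hx; exact hCE x (Set.mem_iUnion.2 ⟨i, hx⟩)
  have hce : ∀ i, ∀ y ∈ Set.Ioo (-1:ℝ) 1,
      lam * (|dW (v i) y| * Real.sqrt (1 - y ^ 2)) ≤ Real.sqrt (1 - v i y ^ 2) :=
    fun i => br_CE hlam (hab i) (hreg i) (hmono i) (himage i) (hC i) (hg i) (hCEi i)
  have hcontr : ∀ i, ∀ y ∈ Set.Icc (-1:ℝ) 1, ∀ z ∈ Set.Icc (-1:ℝ) 1,
      |Real.arccos (v i y) - Real.arccos (v i z)| ≤ lam⁻¹ * |Real.arccos y - Real.arccos z| :=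
    fun i => br_contr hlam (hab i) (ha i) (hb i) (hreg i) (hmono i) (himage i) (hce i)
  have hgron : ∀ i, ∀ p ∈ Set.Icc (-1:ℝ) 1, ∀ q ∈ Set.Icc (-1:ℝ) 1,
      |dW (v i) p| ≤ |dW (v i) q| * Real.exp (C₁ * |p - q|) :=
    fun i => br_gron (hreg i) (hC i)
  have hne : ∀ i, ∀ y ∈ Set.Icc (-1:ℝ) 1, dW (v i) y ≠ 0 :=
    fun i => br_ne (hab i) (hreg i) (himage i) (hC i)
  have hgd : ∀ i, ∀ x ∈ Set.Ioo (a i) (b i), HasDerivAt g ((dW (v i) (g x))⁻¹) x :=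
    fun i => br_g (hab i) (hreg i) (hmono i) (himage i) (hC i) (hg i)
  have hVmapsTo : ∀ i, Set.MapsTo (v i) (Set.Icc (-1:ℝ) 1) (Set.Icc (-1:ℝ) 1) := by
    intro i t ht
    have h : v i t ∈ Set.Icc (a i) (b i) := by rw [← himage i]; exact ⟨t, ht, rfl⟩
    exact ⟨le_trans (ha i) h.1, le_trans h.2 (hb i)⟩
  have hC₁ : ∀ (_ : I), 0 ≤ C₁ := by
    intro i
    by_contra hneg
    push_neg at hneg
    have h0 : (0:ℝ) ∈ Set.Icc (-1:ℝ) 1 := by norm_num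
    have h1 : |iteratedDerivWithin 2 (v i) (Set.Icc (-1) 1) 0| ≤ C₁ * |dW (v i) 0| := hC i 0 h0
    have h2 : 0 < |dW (v i) 0| := abs_pos.2 (hne i 0 h0)
    nlinarith [abs_nonneg (iteratedDerivWithin 2 (v i) (Set.Icc (-1) 1) 0)]
  -- the composed inverse branch
  have key : ∀ n : ℕ, ∀ x : ℝ, x ∈ Set.Icc (-1:ℝ) 1 →
      (∀ m < n, g^[m] x ∈ ⋃ i, Set.Ioo (a i) (b i)) →
      ∃ W D : ℝ → ℝ,
        Set.MapsTo W (Set.Icc (-1:ℝ) 1) (Set.Icc (-1:ℝ) 1) ∧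
        (∀ y ∈ Set.Icc (-1:ℝ) 1, HasDerivWithinAt W (D y) (Set.Icc (-1:ℝ) 1) y) ∧
        (∀ y ∈ Set.Icc (-1:ℝ) 1, ∀ z ∈ Set.Icc (-1:ℝ) 1,
          |Real.arccos (W y) - Real.arccos (W z)| ≤
            lam⁻¹ ^ n * |Real.arccos y - Real.arccos z|) ∧
        (∀ y ∈ Set.Icc (-1:ℝ) 1, ∀ z ∈ Set.Icc (-1:ℝ) 1,
          |D y| ≤ |D z| * Real.exp (C₁ * (Real.pi * ∑ j ∈ Finset.range n, lam⁻¹ ^ j))) ∧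
        g^[n] x ∈ Set.Icc (-1:ℝ) 1 ∧ W (g^[n] x) = x ∧
        HasDerivAt (g^[n]) (D (g^[n] x))⁻¹ x ∧ D (g^[n] x) ≠ 0 := by
    intro n
    induction n with
    | zero =>
      intro x hxI _
      refine ⟨id, fun _ => 1, fun y hy => hy, fun y _ => hasDerivWithinAt_id y _,
        ?_, ?_, ?_, ?_, ?_, ?_⟩
      · intro y _ z _; simp
      · intro y _ z _; simp
      · simpa using hxI
      · simp
      · simpa using hasDerivAt_id x
      · norm_num
    | succ n IH =>
      intro x hxI horb
      have h00 := horb 0 (Nat.succ_pos n)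
      rw [Function.iterate_zero_apply] at h00
      obtain ⟨i₀, hxi⟩ := Set.mem_iUnion.1 h00
      have hgx : g x ∈ Set.Icc (-1:ℝ) 1 := (hg i₀ x hxi).1
      obtain ⟨W, D, hmap, hder, hcon, hdist, hmem, hWx, hDer, hDne⟩ :=
        IH (g x) hgx (fun m hm => by
          rw [← Function.iterate_succ_apply]
          exact horb (m+1) (Nat.succ_lt_succ hm))
      have hit : g^[n+1] x = g^[n] (g x) := Function.iterate_succ_apply g n x
      refine ⟨v i₀ ∘ W, fun y => dW (v i₀) (W y) * D y, (hVmapsTo i₀).comp hmap,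
        ?_, ?_, ?_, ?_, ?_, ?_, ?_⟩
      · intro y hy
        exact HasDerivWithinAt.comp y (br_deriv (hreg i₀) (W y) (hmap hy)) (hder y hy) hmap
      · intro y hy z hz
        calc |Real.arccos ((v i₀ ∘ W) y) - Real.arccos ((v i₀ ∘ W) z)|
            ≤ lam⁻¹ * |Real.arccos (W y) - Real.arccos (W z)| :=
              hcontr i₀ (W y) (hmap hy) (W z) (hmap hz)
          _ ≤ lam⁻¹ * (lam⁻¹ ^ n * |Real.arccos y - Real.arccos z|) :=
              mul_le_mul_of_nonneg_left (hcon y hy z hz) hinv0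
          _ = lam⁻¹ ^ (n+1) * |Real.arccos y - Real.arccos z| := by ring
      · intro y hy z hz
        have hWd : |W y - W z| ≤ Real.pi * lam⁻¹ ^ n := by
          have h1 : |W y - W z| ≤ |Real.arccos (W y) - Real.arccos (W z)| :=
            aux_arccos_exp (hmap hy) (hmap hz)
          have h2 := hcon y hy z hz
          have h3 : |Real.arccos y - Real.arccos z| ≤ Real.pi := by
            rw [abs_le]
            constructor
            · linarith [Real.arccos_nonneg y, Real.arccos_le_pi z]
            · linarith [Real.arccos_nonneg z, Real.arccos_le_pi y]
          calc |W y - W z| ≤ lam⁻¹ ^ n * |Real.arccos y - Real.arccos z| := le_trans h1 h2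
            _ ≤ lam⁻¹ ^ n * Real.pi := mul_le_mul_of_nonneg_left h3 (by positivity)
            _ = Real.pi * lam⁻¹ ^ n := mul_comm _ _
        calc |dW (v i₀) (W y) * D y| = |dW (v i₀) (W y)| * |D y| := abs_mul _ _
          _ ≤ (|dW (v i₀) (W z)| * Real.exp (C₁ * |W y - W z|)) *
              (|D z| * Real.exp (C₁ * (Real.pi * ∑ j ∈ Finset.range n, lam⁻¹ ^ j))) :=
              mul_le_mul (hgron i₀ (W y) (hmap hy) (W z) (hmap hz))
                (hdist y hy z hz) (abs_nonneg _) (by positivity)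
          _ ≤ (|dW (v i₀) (W z)| * Real.exp (C₁ * (Real.pi * lam⁻¹ ^ n))) *
              (|D z| * Real.exp (C₁ * (Real.pi * ∑ j ∈ Finset.range n, lam⁻¹ ^ j))) := by
              apply mul_le_mul_of_nonneg_right _ (by positivity)
              apply mul_le_mul_of_nonneg_left _ (abs_nonneg _)
              exact Real.exp_le_exp.2 (mul_le_mul_of_nonneg_left hWd (hC₁ i₀))
          _ = |dW (v i₀) (W z) * D z| *
              Real.exp (C₁ * (Real.pi * ∑ j ∈ Finset.range (n+1), lam⁻¹ ^ j)) := by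
              rw [abs_mul, Finset.sum_range_succ,
                show C₁ * (Real.pi * (∑ j ∈ Finset.range n, lam⁻¹ ^ j + lam⁻¹ ^ n)) =
                  C₁ * (Real.pi * lam⁻¹ ^ n) + C₁ * (Real.pi * ∑ j ∈ Finset.range n, lam⁻¹ ^ j)
                  from by ring, Real.exp_add]
              ring
      · rw [hit]; exact hmem
      · show v i₀ (W (g^[n+1] x)) = x
        rw [hit, hWx]
        exact (hg i₀ x hxi).2
      · have hcomp : HasDerivAt (g^[n] ∘ g) ((D (g^[n] (g x)))⁻¹ * (dW (v i₀) (g x))⁻¹) x :=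
          HasDerivAt.comp x hDer (hgd i₀ x hxi)
        have hval : (dW (v i₀) (W (g^[n+1] x)) * D (g^[n+1] x))⁻¹ =
            (D (g^[n] (g x)))⁻¹ * (dW (v i₀) (g x))⁻¹ := by
          rw [hit, hWx, mul_inv_rev]
        show HasDerivAt (g^[n+1]) (dW (v i₀) (W (g^[n+1] x)) * D (g^[n+1] x))⁻¹ x
        rw [hval, show g^[n+1] = g^[n] ∘ g from Function.iterate_succ g n]
        exact hcomp
      · show dW (v i₀) (W (g^[n+1] x)) * D (g^[n+1] x) ≠ 0
        rw [hit, hWx]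
        exact mul_ne_zero (hne i₀ (g x) hgx) hDne
  -- geometric sum bound
  have hsum : ∀ n : ℕ, (∑ j ∈ Finset.range n, lam⁻¹ ^ j) ≤ lam / (lam - 1) := by
    intro n
    have h1 : ∑ j ∈ Finset.range n, lam⁻¹ ^ j ≤ ∑' j : ℕ, lam⁻¹ ^ j :=
      Summable.sum_le_tsum (Finset.range n) (fun j _ => by positivity)
        (summable_geometric_of_lt_one hinv0 hinv1)
    rw [tsum_geometric_of_lt_one hinv0 hinv1] at h1
    have h2 : (1 - lam⁻¹)⁻¹ = lam / (lam - 1) := by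
      have h3 : 1 - lam⁻¹ = (lam - 1) / lam := by field_simp
      rw [h3, inv_div]
    rwa [h2] at h1
  -- part 1
  have part1 : ∀ n : ℕ, 1 ≤ n → ∀ x : ℝ,
      (∀ m < n, g^[m] x ∈ ⋃ i, Set.Ioo (a i) (b i)) →
      (2 / Real.pi) * Real.exp (-Real.pi * C₁ * lam / (lam - 1)) * lam ^ n ≤
        |deriv (g^[n]) x| := by
    intro n hn x horb
    have h00 := horb 0 hn
    rw [Function.iterate_zero_apply] at h00
    obtain ⟨i₀, hxi⟩ := Set.mem_iUnion.1 h00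
    have hxI : x ∈ Set.Icc (-1:ℝ) 1 :=
      ⟨le_trans (ha i₀) hxi.1.le, le_trans hxi.2.le (hb i₀)⟩
    obtain ⟨W, D, hmap, hder, hcon, hdist, hmem, hWx, hDer, hDne⟩ := key n x hxI horb
    have hm1 : (-1:ℝ) ∈ Set.Icc (-1:ℝ) 1 := by norm_num
    have h1 : (1:ℝ) ∈ Set.Icc (-1:ℝ) 1 := by norm_num
    have hcontW : ContinuousOn W (Set.Icc (-1:ℝ) 1) :=
      fun t ht => (hder t ht).continuousWithinAt
    obtain ⟨c, hc, hceq⟩ := exists_hasDerivAt_eq_slope W D (by norm_num : (-1:ℝ) < 1) hcontW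
      (fun t ht => (hder t (Set.Ioo_subset_Icc_self ht)).hasDerivAt (Icc_mem_nhds ht.1 ht.2))
    have hcI : c ∈ Set.Icc (-1:ℝ) 1 := Set.Ioo_subset_Icc_self hc
    have hWbd : |W 1 - W (-1)| ≤ Real.pi * lam⁻¹ ^ n := by
      have h1' := aux_arccos_exp (hmap h1) (hmap hm1)
      have h2 := hcon 1 h1 (-1) hm1
      rw [Real.arccos_one, Real.arccos_neg_one] at h2
      calc |W 1 - W (-1)| ≤ lam⁻¹ ^ n * |(0:ℝ) - Real.pi| := le_trans h1' h2
        _ = Real.pi * lam⁻¹ ^ n := by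
            rw [zero_sub, abs_neg, abs_of_nonneg Real.pi_pos.le]; ring
    have hDc : |D c| ≤ Real.pi * lam⁻¹ ^ n / 2 := by
      rw [hceq, show (1:ℝ) - (-1) = 2 by norm_num, abs_div, abs_two]
      gcongr
    have hDz : |D (g^[n] x)| ≤
        (Real.pi * lam⁻¹ ^ n / 2) * Real.exp (C₁ * (Real.pi * (lam / (lam - 1)))) := by
      calc |D (g^[n] x)|
          ≤ |D c| * Real.exp (C₁ * (Real.pi * ∑ j ∈ Finset.range n, lam⁻¹ ^ j)) :=
            hdist _ hmem c hcI
        _ ≤ (Real.pi * lam⁻¹ ^ n / 2) * Real.exp (C₁ * (Real.pi * (lam / (lam - 1)))) := by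
            apply mul_le_mul hDc _ (by positivity) (by positivity)
            exact Real.exp_le_exp.2 (mul_le_mul_of_nonneg_left
              (mul_le_mul_of_nonneg_left (hsum n) Real.pi_pos.le) (hC₁ i₀))
    have hDpos : 0 < |D (g^[n] x)| := abs_pos.2 hDne
    have hderval : |deriv (g^[n]) x| = |D (g^[n] x)|⁻¹ := by rw [hDer.deriv, abs_inv]
    rw [hderval]
    refine le_trans (le_of_eq ?_) (inv_anti₀ hDpos hDz)
    have hexp : Real.exp (-Real.pi * C₁ * lam / (lam - 1)) =
        (Real.exp (C₁ * (Real.pi * (lam / (lam - 1)))))⁻¹ := by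
      rw [← Real.exp_neg]
      congr 1
      field_simp
    rw [hexp, inv_pow, mul_inv]
    have hpi := Real.pi_ne_zero
    have hpow : (lam ^ n) ≠ 0 := by positivity
    have h4 : (Real.pi * (lam ^ n)⁻¹ / 2)⁻¹ = 2 * lam ^ n / Real.pi := by
      field_simp
    rw [h4]
    ring
  refine ⟨part1, ?_⟩
  -- part 2
  set K := (2 / Real.pi) * Real.exp (-Real.pi * C₁ * lam / (lam - 1)) with hK
  have hKpos : 0 < K := by
    rw [hK]
    positivity
  obtain ⟨N, hN⟩ := pow_unbounded_of_one_lt K⁻¹ hlam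
  refine ⟨N + 1, fun n hn x horb => ?_⟩
  have hn1 : 1 ≤ n := le_trans (Nat.le_add_left 1 N) hn
  have h2 : K⁻¹ < lam ^ n :=
    lt_of_lt_of_le hN (pow_le_pow_right₀ hlam.le (le_trans (Nat.le_succ N) hn))
  calc (1:ℝ) = K * K⁻¹ := (mul_inv_cancel₀ hKpos.ne').symm
    _ < K * lam ^ n := by exact mul_lt_mul_of_pos_left h2 hKpos
    _ ≤ |deriv (g^[n]) x| := part1 n hn1 x horb
end
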